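/- arXiv:2012.08944 — 7 statements merged into one kernel-verified Lean document; each statement's English description precedes it below -/
import Mathlib

section
/- For every integer n ≥ 1, every integer p, every real y, and every complex z, the sum over all integers k of J_{kn+p}(z)·e^{ikny} equals (1/n)·Σ_{ℓ=0}^{n-1} e^{iz·sin(y+2πℓ/n)} · e^{-ip(y+2πℓ/n)}, where J_m denotes the Bessel function of the first kind of integer order m. -/
open scoped Real

/-- Bessel function of the first kind of integer order `m`,
defined by `J_m(z) = (1/2π) ∫_0^{2π} e^{i z sin θ - i m θ} dθ`. -/
noncomputable def besselJ (m : ℤ) (z : ℂ) : ℂ :=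
  (1 / (2 * Real.pi)) * ∫ θ in (0:ℝ)..(2 * Real.pi),
    Complex.exp (z * Complex.sin (θ:ℂ) * Complex.I - (m:ℂ) * (θ:ℂ) * Complex.I)

noncomputable section BesselAux

def bgen (z : ℂ) (θ : ℝ) : ℂ := Complex.exp (z * (Real.sin θ : ℂ) * Complex.I)

def bgen1 (z : ℂ) (θ : ℝ) : ℂ := z * (Real.cos θ : ℂ) * Complex.I * bgen z θ

def bgen2 (z : ℂ) (θ : ℝ) : ℂ :=
  z * (-(Real.sin θ : ℂ)) * Complex.I * bgen z θ + z * (Real.cos θ : ℂ) * Complex.I * bgen1 z θ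

lemma bgen_periodic (z : ℂ) : Function.Periodic (bgen z) (2 * π) := fun θ => by
  simp [bgen, Real.sin_add_two_pi]

lemma bgen1_periodic (z : ℂ) : Function.Periodic (bgen1 z) (2 * π) := fun θ => by
  simp [bgen1, Real.cos_add_two_pi, bgen_periodic z θ]

lemma bgen_continuous (z : ℂ) : Continuous (bgen z) := by
  unfold bgen; fun_prop

lemma bgen1_continuous (z : ℂ) : Continuous (bgen1 z) := by
  unfold bgen1; exact (((continuous_const.mul (Complex.continuous_ofReal.comp
    Real.continuous_cos)).mul continuous_const).mul (bgen_continuous z))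

lemma bgen2_continuous (z : ℂ) : Continuous (bgen2 z) := by
  unfold bgen2
  apply Continuous.add
  · exact (((continuous_const.mul ((Complex.continuous_ofReal.comp
      Real.continuous_sin).neg)).mul continuous_const).mul (bgen_continuous z))
  · exact (((continuous_const.mul (Complex.continuous_ofReal.comp
      Real.continuous_cos)).mul continuous_const).mul (bgen1_continuous z))

lemma hasDerivAt_bgen (z : ℂ) (θ : ℝ) :
    HasDerivAt (bgen z) (bgen1 z θ) θ := by
  have h1 : HasDerivAt (fun t : ℝ => ((Real.sin t : ℝ) : ℂ)) ((Real.cos θ : ℝ) : ℂ) θ :=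
    (Real.hasDerivAt_sin θ).ofReal_comp
  have h2 : HasDerivAt (fun t : ℝ => z * ((Real.sin t : ℝ) : ℂ) * Complex.I)
      (z * ((Real.cos θ : ℝ) : ℂ) * Complex.I) θ := (h1.const_mul z).mul_const Complex.I
  have h3 := h2.cexp
  unfold bgen bgen1
  convert h3 using 1
  unfold bgen
  ring

lemma hasDerivAt_bgen1 (z : ℂ) (θ : ℝ) :
    HasDerivAt (bgen1 z) (bgen2 z θ) θ := by
  have h1 : HasDerivAt (fun t : ℝ => ((Real.cos t : ℝ) : ℂ)) (-(Real.sin θ : ℂ)) θ := by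
    simpa using (Real.hasDerivAt_cos θ).ofReal_comp
  have h2 : HasDerivAt (fun t : ℝ => z * ((Real.cos t : ℝ) : ℂ) * Complex.I)
      (z * (-(Real.sin θ : ℂ)) * Complex.I) θ := (h1.const_mul z).mul_const Complex.I
  have h3 := h2.mul (hasDerivAt_bgen z θ)
  unfold bgen1 bgen2
  exact h3

end BesselAux

noncomputable section BesselFourier
open scoped Real
open Complex MeasureTheory

instance fact_two_pi_pos : Fact ((0:ℝ) < 2*π) := ⟨by positivity⟩

def bF (z : ℂ) : C(AddCircle (2*π), ℂ) :=
  ⟨(bgen_periodic z).lift, Continuous.quotient_liftOn' (bgen_continuous z) _⟩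

@[simp] lemma bF_coe (z : ℂ) (θ : ℝ) : bF z (θ : AddCircle (2*π)) = bgen z θ := rfl

lemma besselJ_eq_fourierCoeff (z : ℂ) (m : ℤ) :
    fourierCoeff (⇑(bF z)) m = besselJ m z := by
  rw [fourierCoeff_eq_intervalIntegral _ m 0, besselJ, zero_add]
  rw [real_smul]
  congr 1
  · push_cast; ring
  refine intervalIntegral.integral_congr (fun x _ => ?_)
  rw [bF_coe, fourier_coe_apply, smul_eq_mul, bgen, ← Complex.exp_add]
  congr 1
  rw [Complex.ofReal_sin]
  have h2 : ((2*π : ℝ) : ℂ) ≠ 0 := by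
    simpa using Real.pi_ne_zero
  push_cast at h2 ⊢
  field_simp
  ring

lemma bF_eq_liftIoc (z : ℂ) : ⇑(bF z) = AddCircle.liftIoc (2*π) 0 (bgen z) := by
  funext qx
  set u : Set.Ioc (0:ℝ) (0 + 2*π) := AddCircle.equivIoc (2*π) 0 qx with hu
  have hq : ((u : ℝ) : AddCircle (2*π)) = qx := by
    rw [hu]; exact (AddCircle.equivIoc (2*π) 0).symm_apply_apply qx
  have h1 : AddCircle.liftIoc (2*π) 0 (bgen z) qx = bgen z u := rfl
  rw [h1, ← hq, bF_coe]

lemma h02 : (0:ℝ) < 0 + 2*π := lt_add_of_pos_right 0 fact_two_pi_pos.out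

lemma fourierCoeff_bF_eq (z : ℂ) (m : ℤ) :
    fourierCoeff (⇑(bF z)) m = fourierCoeffOn h02 (bgen z) m := by
  rw [bF_eq_liftIoc]; exact fourierCoeff_liftIoc_eq _ m

lemma coeff_step {f f' : ℝ → ℂ} (hper : Function.Periodic f (2*π))
    (hderiv : ∀ x, HasDerivAt f (f' x) x) (hcont' : Continuous f') {m : ℤ} (hm : m ≠ 0) :
    fourierCoeffOn h02 f m = (1/(Complex.I * m)) * fourierCoeffOn h02 f' m := by
  rw [fourierCoeffOn_of_hasDerivAt h02 hm (fun x _ => hderiv x)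
    (hcont'.intervalIntegrable _ _)]
  have h0 : f (0 + 2*π) - f 0 = 0 := by
    rw [zero_add, sub_eq_zero]; simpa using hper 0
  rw [h0, mul_zero, zero_sub]
  have hπ : ((π:ℝ):ℂ) ≠ 0 := by simpa using Real.pi_ne_zero
  have hmc : (m:ℂ) ≠ 0 := Int.cast_ne_zero.mpr hm
  have hI : Complex.I ≠ 0 := Complex.I_ne_zero
  push_cast
  field_simp
  ring

lemma norm_fourierCoeffOn_le {f : ℝ → ℂ} {M : ℝ}
    (hM : ∀ x, ‖f x‖ ≤ M) (m : ℤ) : ‖fourierCoeffOn h02 f m‖ ≤ M := by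
  rw [fourierCoeffOn_eq_integral]
  have hb : ∀ x ∈ Set.uIoc (0:ℝ) (0 + 2*π),
      ‖fourier (-m) (x : AddCircle (0 + 2*π - 0)) • f x‖ ≤ M := by
    intro x _
    rw [norm_smul]
    have h1 : ‖(fourier (-m) (x : AddCircle (0 + 2*π - 0)) : ℂ)‖ = 1 := by
      rw [fourier_apply]
      exact Circle.norm_coe _
    rw [h1, one_mul]
    exact hM x
  have := intervalIntegral.norm_integral_le_of_norm_le_const hb
  rw [norm_smul]
  have h2 : ‖(1 / (0 + 2*π - 0) : ℝ)‖ = 1/(2*π) := by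
    rw [Real.norm_eq_abs, show (0:ℝ)+2*π-0 = 2*π by ring, abs_of_pos (by positivity)]
  rw [h2]
  calc (1/(2*π)) * ‖∫ x in (0:ℝ)..(0+2*π), fourier (-m) (x : AddCircle (0 + 2*π - 0)) • f x‖
      ≤ (1/(2*π)) * (M * |0 + 2*π - 0|) := by
        apply mul_le_mul_of_nonneg_left this (by positivity)
    _ = M := by
        rw [abs_of_pos (by simpa using fact_two_pi_pos.out)]
        field_simp
        ring

lemma re_bound (z : ℂ) {s : ℝ} (hs : |s| ≤ 1) : (z * (s:ℂ) * Complex.I).re ≤ ‖z‖ := by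
  have h : (z * (s:ℂ) * Complex.I).re = -(z.im * s) := by
    simp [Complex.mul_re, Complex.mul_im]
  rw [h]
  calc -(z.im * s) ≤ |z.im * s| := neg_le_abs _
    _ = |z.im| * |s| := abs_mul _ _
    _ ≤ ‖z‖ * 1 := by
        apply mul_le_mul _ hs (abs_nonneg _) (norm_nonneg z)
        exact Complex.abs_im_le_norm z
    _ = ‖z‖ := mul_one _

lemma norm_bgen_le (z : ℂ) (x : ℝ) : ‖bgen z x‖ ≤ Real.exp ‖z‖ := by
  rw [bgen, Complex.norm_exp, Real.exp_le_exp]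
  exact re_bound z (Real.abs_sin_le_one x)

lemma norm_bgen1_le (z : ℂ) (x : ℝ) : ‖bgen1 z x‖ ≤ ‖z‖ * Real.exp ‖z‖ := by
  rw [bgen1]
  simp only [norm_mul, Complex.norm_I, Complex.norm_real, Real.norm_eq_abs, mul_one]
  calc ‖z‖ * |Real.cos x| * ‖bgen z x‖
      ≤ ‖z‖ * 1 * Real.exp ‖z‖ := by
        gcongr
        · exact Real.abs_cos_le_one x
        · exact norm_bgen_le z x
    _ = ‖z‖ * Real.exp ‖z‖ := by ring

lemma norm_bgen2_le (z : ℂ) (x : ℝ) :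
    ‖bgen2 z x‖ ≤ ‖z‖ * Real.exp ‖z‖ + ‖z‖ * (‖z‖ * Real.exp ‖z‖) := by
  rw [bgen2]
  refine le_trans (norm_add_le _ _) ?_
  gcongr
  · simp only [norm_mul, Complex.norm_I, Complex.norm_real, Real.norm_eq_abs, mul_one, norm_neg, abs_neg]
    calc ‖z‖ * |Real.sin x| * ‖bgen z x‖
        ≤ ‖z‖ * 1 * Real.exp ‖z‖ := by
          gcongr
          · exact Real.abs_sin_le_one x
          · exact norm_bgen_le z x
      _ = ‖z‖ * Real.exp ‖z‖ := by ring
  · simp only [norm_mul, Complex.norm_I, Complex.norm_real, Real.norm_eq_abs, mul_one]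
    calc ‖z‖ * |Real.cos x| * ‖bgen1 z x‖
        ≤ ‖z‖ * 1 * (‖z‖ * Real.exp ‖z‖) := by
          gcongr
          · exact Real.abs_cos_le_one x
          · exact norm_bgen1_le z x
      _ = ‖z‖ * (‖z‖ * Real.exp ‖z‖) := by ring

lemma summable_besselJ_coeff (z : ℂ) : Summable (fourierCoeff (⇑(bF z))) := by
  set M : ℝ := ‖z‖ * Real.exp ‖z‖ + ‖z‖ * (‖z‖ * Real.exp ‖z‖) with hMdef
  have hM : ∀ x : ℝ, ‖bgen2 z x‖ ≤ M := norm_bgen2_le z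
  apply Summable.of_norm_bounded_eventually (g := fun m : ℤ => M * (1/(m:ℝ)^2))
    (Summable.mul_left M (Real.summable_one_div_int_pow.mpr one_lt_two))
  rw [Filter.eventually_cofinite]
  apply Set.Finite.subset (Set.finite_singleton (0:ℤ))
  intro m hm
  simp only [Set.mem_setOf_eq, not_le] at hm
  by_contra hm0
  simp only [Set.mem_singleton_iff] at hm0
  apply absurd hm
  push_neg
  have key : fourierCoeff (⇑(bF z)) m =
      (1/(Complex.I * m)) * ((1/(Complex.I * m)) * fourierCoeffOn h02 (bgen2 z) m) := by
    rw [fourierCoeff_bF_eq,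
      coeff_step (bgen_periodic z) (hasDerivAt_bgen z) (bgen1_continuous z) hm0,
      coeff_step (bgen1_periodic z) (hasDerivAt_bgen1 z) (bgen2_continuous z) hm0]
  rw [key]
  have h1 : ‖(1/(Complex.I * (m:ℂ)))‖ = 1/|(m:ℝ)| := by
    simp [map_div₀]
  rw [norm_mul, norm_mul, h1]
  have h2 := norm_fourierCoeffOn_le hM m
  calc 1/|(m:ℝ)| * (1/|(m:ℝ)| * ‖fourierCoeffOn h02 (bgen2 z) m‖)
      ≤ 1/|(m:ℝ)| * (1/|(m:ℝ)| * M) := by gcongr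
    _ = M * (1/(m:ℝ)^2) := by rw [← _root_.sq_abs]; ring

lemma fourier_eq (m : ℤ) (θ : ℝ) :
    (fourier m (θ : AddCircle (2*π)) : ℂ) = Complex.exp (Complex.I * m * θ) := by
  rw [fourier_coe_apply]
  congr 1
  have hπ : ((π:ℝ):ℂ) ≠ 0 := by simpa using Real.pi_ne_zero
  push_cast at hπ ⊢
  field_simp

lemma hasSum_besselJ (z : ℂ) (θ : ℝ) :
    HasSum (fun m : ℤ => besselJ m z * Complex.exp (Complex.I * m * θ))
      (Complex.exp (Complex.I * z * (Real.sin θ : ℂ))) := by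
  have h := has_pointwise_sum_fourier_series_of_summable (summable_besselJ_coeff z)
    (θ : AddCircle (2*π))
  have h2 : bF z (θ : AddCircle (2*π)) = Complex.exp (Complex.I * z * (Real.sin θ : ℂ)) := by
    rw [bF_coe, bgen]; congr 1; ring
  rw [h2] at h
  have h3 : (fun i : ℤ => fourierCoeff (⇑(bF z)) i • (fourier i (θ : AddCircle (2*π)) : ℂ)) =
      fun m : ℤ => besselJ m z * Complex.exp (Complex.I * m * θ) := by
    funext m; rw [besselJ_eq_fourierCoeff, smul_eq_mul, fourier_eq]
  rwa [h3] at h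

lemma sum_root (n : ℤ) (hn : 1 ≤ n) (m : ℤ) :
    ∑ ℓ ∈ Finset.range n.toNat, Complex.exp (2 * π * Complex.I * m * ℓ / n) =
      if n ∣ m then (n:ℂ) else 0 := by
  have hn0 : (n:ℂ) ≠ 0 := Int.cast_ne_zero.mpr (by omega)
  have hπ : ((π:ℝ):ℂ) ≠ 0 := by simpa using Real.pi_ne_zero
  have hnt : ((n.toNat : ℤ) : ℂ) = (n:ℂ) := by rw [Int.toNat_of_nonneg (by omega)]
  set w : ℂ := 2 * π * Complex.I * m / n with hw
  have hterm : ∀ ℓ : ℕ, Complex.exp (2 * π * Complex.I * m * ℓ / n) = Complex.exp w ^ ℓ := by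
    intro ℓ
    rw [← Complex.exp_nat_mul, hw]
    congr 1
    field_simp
  simp_rw [hterm]
  by_cases hd : n ∣ m
  · have hone : Complex.exp w = 1 := by
      obtain ⟨k, rfl⟩ := hd
      rw [Complex.exp_eq_one_iff]
      refine ⟨k, ?_⟩
      rw [hw]
      push_cast
      field_simp
    simp only [hone, one_pow, Finset.sum_const, Finset.card_range, nsmul_eq_mul, mul_one, hd,
      if_true]
    push_cast at hnt ⊢
    exact hnt
  · have hne : Complex.exp w ≠ 1 := by
      rw [Ne, Complex.exp_eq_one_iff]
      rintro ⟨k, hk⟩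
      apply hd
      refine ⟨k, ?_⟩
      have h2 : (2 * (π:ℂ) * Complex.I) * m = (2 * (π:ℂ) * Complex.I) * (k * n) := by
        rw [hw] at hk
        field_simp at hk
        linear_combination (2 * (π:ℂ) * Complex.I) * hk
      have h3 : (m:ℂ) = (n:ℂ) * k := by
        rw [mul_left_cancel₀ (by simp [hπ, Complex.I_ne_zero] : (2*(π:ℂ)*Complex.I) ≠ 0) h2]
        ring
      exact_mod_cast h3
    rw [geom_sum_eq hne]
    have hpow : Complex.exp w ^ n.toNat = 1 := by
      rw [← Complex.exp_nat_mul, Complex.exp_eq_one_iff]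
      refine ⟨m, ?_⟩
      rw [hw]
      rw [show ((n.toNat : ℕ) : ℂ) = (n : ℂ) by exact_mod_cast hnt]
      field_simp
    rw [hpow, sub_self, zero_div, if_neg hd]

theorem statement0 (n : ℤ) (hn : 1 ≤ n) (p : ℤ) (y : ℝ) (z : ℂ) :
    (∑' k : ℤ, besselJ (k * n + p) z * Complex.exp (Complex.I * (k:ℂ) * (n:ℂ) * (y:ℂ))) =
      (1 / (n:ℂ)) * ∑ ℓ ∈ Finset.range n.toNat,
        Complex.exp (Complex.I * z * (Real.sin (y + 2 * π * ℓ / n) : ℂ)) *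
          Complex.exp (-Complex.I * (p:ℂ) * ((y + 2 * π * ℓ / n : ℝ) : ℂ)) := by
  have hn0 : (n:ℂ) ≠ 0 := Int.cast_ne_zero.mpr (by omega)
  set f : ℤ → ℂ := fun m => besselJ m z *
    (if n ∣ m - p then Complex.exp (Complex.I * ((m:ℂ) - (p:ℂ)) * y) else 0) with hf
  -- RHS = ∑' m, f m
  have hrhs : (1 / (n:ℂ)) * ∑ ℓ ∈ Finset.range n.toNat,
      Complex.exp (Complex.I * z * (Real.sin (y + 2 * π * ℓ / n) : ℂ)) *
        Complex.exp (-Complex.I * (p:ℂ) * ((y + 2 * π * ℓ / n : ℝ) : ℂ)) = ∑' m : ℤ, f m := by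
    have step1 : ∀ ℓ ∈ Finset.range n.toNat,
        Complex.exp (Complex.I * z * (Real.sin (y + 2 * π * ℓ / n) : ℂ)) *
          Complex.exp (-Complex.I * (p:ℂ) * ((y + 2 * π * ℓ / n : ℝ) : ℂ)) =
        ∑' m : ℤ, besselJ m z * Complex.exp (Complex.I * m * ((y + 2 * π * ℓ / n : ℝ) : ℂ)) *
          Complex.exp (-Complex.I * (p:ℂ) * ((y + 2 * π * ℓ / n : ℝ) : ℂ)) := by
      intro ℓ _
      rw [tsum_mul_right, (hasSum_besselJ z (y + 2 * π * ℓ / n)).tsum_eq]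
    rw [Finset.sum_congr rfl step1, ← Summable.tsum_finsetSum (fun (ℓ : ℕ) _ =>
      ((hasSum_besselJ z (y + 2 * π * (ℓ:ℝ) / (n:ℝ))).summable.mul_right
        (Complex.exp (-Complex.I * (p:ℂ) * ((y + 2 * π * (ℓ:ℝ) / (n:ℝ) : ℝ) : ℂ))))),
      ← tsum_mul_left]
    congr 1
    funext m
    have hterm : ∀ ℓ : ℕ, besselJ m z * Complex.exp (Complex.I * m * ((y + 2 * π * ℓ / n : ℝ) : ℂ))
        * Complex.exp (-Complex.I * (p:ℂ) * ((y + 2 * π * ℓ / n : ℝ) : ℂ)) =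
        besselJ m z * Complex.exp (Complex.I * ((m:ℂ) - (p:ℂ)) * y) *
          Complex.exp (2 * π * Complex.I * ((m - p : ℤ) : ℂ) * ℓ / n) := by
      intro ℓ
      have e1 : Complex.exp (Complex.I * m * ((y + 2 * π * ℓ / n : ℝ) : ℂ)) *
          Complex.exp (-Complex.I * (p:ℂ) * ((y + 2 * π * ℓ / n : ℝ) : ℂ)) =
          Complex.exp (Complex.I * ((m:ℂ) - (p:ℂ)) * y) *
            Complex.exp (2 * π * Complex.I * ((m - p : ℤ) : ℂ) * ℓ / n) := by
        rw [← Complex.exp_add, ← Complex.exp_add]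
        congr 1
        push_cast
        field_simp
        ring
      rw [mul_assoc, e1, ← mul_assoc]
    simp_rw [hterm]
    rw [← Finset.mul_sum]
    have : (∑ ℓ ∈ Finset.range n.toNat,
        Complex.exp (2 * π * Complex.I * ((m - p : ℤ) : ℂ) * ℓ / n)) =
        if n ∣ m - p then (n:ℂ) else 0 := by
      have := sum_root n hn (m - p)
      simpa using this
    rw [this, hf]
    by_cases hd : n ∣ m - p
    · simp only [hd, if_true]
      field_simp
    · simp only [hd, if_false]
      ring
  rw [hrhs]
  -- LHS = ∑' m, f m  via the injection k ↦ k*n + p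
  have hinj : Function.Injective (fun k : ℤ => k * n + p) := by
    intro a b hab
    simp only [add_left_inj] at hab
    exact mul_right_cancel₀ (by omega) hab
  have hsupp : Function.support f ⊆ Set.range (fun k : ℤ => k * n + p) := by
    intro m hm
    rw [Function.mem_support, hf] at hm
    by_cases hd : n ∣ m - p
    · obtain ⟨k, hk⟩ := hd
      exact ⟨k, by simp only; rw [mul_comm]; linarith [hk]⟩
    · simp [hd] at hm
  rw [← Function.Injective.tsum_eq hinj hsupp]
  congr 1
  funext k
  rw [hf]
  simp only []
  have hd : n ∣ (k * n + p) - p := ⟨k, by ring⟩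
  rw [if_pos hd]
  congr 2
  push_cast
  ring
end BesselFourier
end

section
/- For every integer n ≥ 1, real α, and complex z: J_0(z) + 2·Σ_{k=1}^∞ e^{ikn·π/2}·J_{kn}(z)·cos(knα) = (1/n)·Σ_{ℓ=0}^{n-1} e^{iz·cos(α+2πℓ/n)}. -/
open scoped Real

namespace BesselAux

open Complex MeasureTheory

noncomputable def a (z : ℂ) (pq : ℕ × ℕ) : ℂ :=
  if pq.2 ≤ pq.1 then
    (Complex.I * z) ^ pq.1 / (Nat.factorial pq.1) * (2 : ℂ)⁻¹ ^ pq.1 * (pq.1.choose pq.2)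
  else 0

def g (pq : ℕ × ℕ) : ℤ := 2 * pq.2 - pq.1

lemma a_eq_zero {z : ℂ} {pq : ℕ × ℕ} (h : ¬ pq.2 ≤ pq.1) : a z pq = 0 := by
  simp [a, h]

lemma norm_a (z : ℂ) (pq : ℕ × ℕ) :
    ‖a z pq‖ = if pq.2 ≤ pq.1 then
      ‖z‖ ^ pq.1 / (Nat.factorial pq.1) * (2:ℝ)⁻¹ ^ pq.1 * (pq.1.choose pq.2) else 0 := by
  unfold a
  split
  · simp [norm_mul, norm_div, norm_pow, norm_inv]
  · simp

lemma norm_a_vanish {z : ℂ} {p q : ℕ} (h : q ∉ Finset.range (p+1)) : ‖a z (p, q)‖ = 0 := by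
  rw [a_eq_zero]; · simp
  simpa [Nat.lt_succ_iff] using h

lemma tsum_norm_a_slice (z : ℂ) (p : ℕ) :
    ∑' q : ℕ, ‖a z (p, q)‖ = ‖z‖ ^ p / (Nat.factorial p) := by
  rw [tsum_eq_sum (s := Finset.range (p+1)) (fun q hq => norm_a_vanish hq)]
  have : ∀ q ∈ Finset.range (p+1), ‖a z (p, q)‖
      = ‖z‖ ^ p / (Nat.factorial p) * (2:ℝ)⁻¹ ^ p * (p.choose q) := by
    intro q hq
    rw [norm_a, if_pos (by simpa [Nat.lt_succ_iff] using hq)]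
  rw [Finset.sum_congr rfl this, ← Finset.mul_sum]
  have hs : ∑ q ∈ Finset.range (p+1), ((p.choose q : ℝ)) = (2:ℝ)^p := by
    rw [← Nat.cast_sum]
    rw [Nat.sum_range_choose]
    push_cast; ring
  rw [hs]
  rw [mul_assoc, inv_pow, inv_mul_cancel₀ (by positivity)]
  ring

lemma summable_norm_a (z : ℂ) : Summable (fun pq => ‖a z pq‖) := by
  rw [summable_prod_of_nonneg (fun pq => norm_nonneg _)]
  refine ⟨fun p => summable_of_ne_finset_zero (s := Finset.range (p+1))
    (fun q hq => norm_a_vanish hq), ?_⟩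
  simp only [tsum_norm_a_slice]
  exact Real.summable_pow_div_factorial ‖z‖

/-! ### The pointwise double-series expansion of `exp (I z cos φ)` -/

lemma sum_row (z : ℂ) (p : ℕ) (φ : ℝ) :
    ∑ q ∈ Finset.range (p+1),
      a z (p, q) * Complex.exp ((g (p, q) : ℂ) * (φ : ℂ) * Complex.I)
    = (Complex.I * z * Complex.cos φ) ^ p / (Nat.factorial p) := by
  have hcos : (Complex.cos φ : ℂ)
      = (Complex.exp ((φ:ℂ) * Complex.I) + Complex.exp (-(φ:ℂ) * Complex.I)) / 2 := by
    rw [Complex.cos]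
  rw [mul_pow, mul_pow, hcos, div_pow, add_pow]
  simp only [div_eq_mul_inv, Finset.sum_mul, Finset.mul_sum]
  refine Finset.sum_congr rfl fun q hq => ?_
  have hqp : q ≤ p := by simpa [Nat.lt_succ_iff] using hq
  have hexp : Complex.exp ((φ:ℂ) * Complex.I) ^ q *
      Complex.exp (-(φ:ℂ) * Complex.I) ^ (p - q)
      = Complex.exp ((g (p, q) : ℂ) * (φ : ℂ) * Complex.I) := by
    rw [← Complex.exp_nat_mul, ← Complex.exp_nat_mul, ← Complex.exp_add]
    congr 1
    have : ((p - q : ℕ) : ℂ) = (p : ℂ) - q := by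
      push_cast [Nat.cast_sub hqp]; ring
    rw [this]
    simp only [g]
    push_cast
    ring
  rw [a, if_pos hqp]
  rw [← hexp]
  simp only [div_eq_mul_inv, inv_pow]
  ring

lemma hasSum_expand (z : ℂ) (φ : ℝ) :
    HasSum (fun pq : ℕ × ℕ => a z pq * Complex.exp ((g pq : ℂ) * (φ : ℂ) * Complex.I))
      (Complex.exp (Complex.I * z * Complex.cos φ)) := by
  have hnorm : ∀ pq : ℕ × ℕ,
      ‖a z pq * Complex.exp ((g pq : ℂ) * (φ : ℂ) * Complex.I)‖ = ‖a z pq‖ := by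
    intro pq
    rw [norm_mul]
    have : (g pq : ℂ) * (φ : ℂ) * Complex.I = ((g pq * φ : ℝ) : ℂ) * Complex.I := by
      push_cast; ring
    rw [this, Complex.norm_exp_ofReal_mul_I, mul_one]
  have hs : Summable (fun pq : ℕ × ℕ =>
      a z pq * Complex.exp ((g pq : ℂ) * (φ : ℂ) * Complex.I)) := by
    apply Summable.of_norm
    simpa only [hnorm] using summable_norm_a z
  convert hs.hasSum
  rw [Summable.tsum_prod hs]
  have hrow : ∀ p : ℕ, ∑' q : ℕ,
      a z (p, q) * Complex.exp ((g (p, q) : ℂ) * (φ : ℂ) * Complex.I)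
      = (Complex.I * z * Complex.cos φ) ^ p / (Nat.factorial p) := by
    intro p
    rw [tsum_eq_sum (s := Finset.range (p+1))
      (fun q hq => by rw [a_eq_zero (by simpa [Nat.lt_succ_iff] using hq), zero_mul])]
    exact sum_row z p φ
  rw [tsum_congr hrow]
  rw [Complex.exp_eq_exp_ℂ, NormedSpace.exp_eq_tsum_div]

/-! ### Fourier coefficients of `exp (I z cos θ)` -/

noncomputable def cInt (z : ℂ) (m : ℤ) : ℂ :=
  (1 / (2 * Real.pi)) * ∫ θ in (0:ℝ)..(2 * Real.pi),
    Complex.exp (Complex.I * z * Complex.cos (θ:ℂ)) *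
      Complex.exp (-((m:ℂ) * (θ:ℂ) * Complex.I))

lemma cInt_eq (z : ℂ) (m : ℤ) :
    cInt z m = ∑' pq : ℕ × ℕ, (if g pq = m then a z pq else 0) := by
  set F : ℕ × ℕ → ℝ → ℂ := fun pq θ =>
    a z pq * Complex.exp (((g pq - m : ℤ) : ℂ) * (θ : ℂ) * Complex.I) with hF
  have hrepr : ∀ θ : ℝ,
      Complex.exp (Complex.I * z * Complex.cos (θ:ℂ)) *
        Complex.exp (-((m:ℂ) * (θ:ℂ) * Complex.I)) = ∑' pq, F pq θ := by
    intro θ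
    have h := (hasSum_expand z θ).mul_right (Complex.exp (-((m:ℂ) * (θ:ℂ) * Complex.I)))
    have heq : (fun pq : ℕ × ℕ =>
        a z pq * Complex.exp ((g pq : ℂ) * (θ : ℂ) * Complex.I) *
          Complex.exp (-((m:ℂ) * (θ:ℂ) * Complex.I))) = fun pq => F pq θ := by
      funext pq
      rw [hF, mul_assoc, ← Complex.exp_add]
      congr 2
      push_cast
      ring
    rw [heq] at h
    exact h.tsum_eq.symm
  have hFnorm : ∀ pq θ, ‖F pq θ‖ = ‖a z pq‖ := by
    intro pq θ
    rw [hF]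
    simp only [norm_mul]
    have : ((g pq - m : ℤ) : ℂ) * (θ : ℂ) * Complex.I
        = (((g pq - m : ℤ) * θ : ℝ) : ℂ) * Complex.I := by push_cast; ring
    rw [this, Complex.norm_exp_ofReal_mul_I, mul_one]
  have hcont : ∀ pq : ℕ × ℕ, Continuous (F pq) := by
    intro pq
    apply continuous_const.mul
    exact Complex.continuous_exp.comp
      ((continuous_const.mul Complex.continuous_ofReal).mul continuous_const)
  have key : (∫ θ in (0:ℝ)..(2 * Real.pi),
      Complex.exp (Complex.I * z * Complex.cos (θ:ℂ)) *
        Complex.exp (-((m:ℂ) * (θ:ℂ) * Complex.I)))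
      = ∑' pq : ℕ × ℕ, ∫ θ in (0:ℝ)..(2 * Real.pi), F pq θ := by
    rw [intervalIntegral.integral_congr (g := fun θ => ∑' pq, F pq θ)
      (fun θ _ => hrepr θ)]
    rw [intervalIntegral.integral_of_le Real.two_pi_pos.le,
      ← MeasureTheory.integral_tsum_of_summable_integral_norm
        (fun pq => (hcont pq).integrableOn_Ioc) ?_]
    · exact tsum_congr fun pq =>
        (intervalIntegral.integral_of_le Real.two_pi_pos.le).symm
    · have : ∀ pq : ℕ × ℕ, (∫ θ in Set.Ioc (0:ℝ) (2 * Real.pi), ‖F pq θ‖)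
          = (2 * Real.pi) * ‖a z pq‖ := by
        intro pq
        simp only [hFnorm]
        rw [MeasureTheory.setIntegral_const]
        simp [Real.volume_Ioc, ENNReal.toReal_ofReal Real.two_pi_pos.le, Real.pi_pos.le]
      simp only [this]
      exact (summable_norm_a z).mul_left _
  have hval : ∀ pq : ℕ × ℕ, (∫ θ in (0:ℝ)..(2 * Real.pi), F pq θ)
      = if g pq = m then (2 * Real.pi : ℂ) * a z pq else 0 := by
    intro pq
    by_cases hgm : g pq = m
    · rw [if_pos hgm]
      simp only [hF, hgm, sub_self, Int.cast_zero, zero_mul, Complex.exp_zero, mul_one]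
      rw [intervalIntegral.integral_const, sub_zero, Complex.real_smul]
      push_cast
      ring
    · rw [if_neg hgm]
      have hd : ((g pq - m : ℤ) : ℂ) ≠ 0 := by
        simpa using sub_ne_zero.2 (by exact_mod_cast hgm)
      have hc : ((g pq - m : ℤ) : ℂ) * Complex.I ≠ 0 :=
        mul_ne_zero hd Complex.I_ne_zero
      have hform : ∀ θ : ℝ, F pq θ
          = a z pq * Complex.exp ((((g pq - m : ℤ) : ℂ) * Complex.I) * (θ:ℂ)) := by
        intro θ; rw [hF]; ring_nf
      rw [intervalIntegral.integral_congr (fun θ _ => hform θ),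
        intervalIntegral.integral_const_mul, integral_exp_mul_complex hc]
      have h1 : ((g pq - m : ℤ) : ℂ) * Complex.I * ((2 * Real.pi : ℝ) : ℂ)
          = ((g pq - m : ℤ) : ℂ) * (2 * (Real.pi : ℂ) * Complex.I) := by
        push_cast; ring
      rw [h1, Complex.exp_int_mul_two_pi_mul_I]
      simp
  rw [cInt, key, tsum_congr hval, ← tsum_mul_left]
  refine tsum_congr fun pq => ?_
  by_cases hgm : g pq = m
  · rw [if_pos hgm, if_pos hgm, ← mul_assoc]
    have : (1 / (2 * (Real.pi : ℂ))) * (2 * Real.pi : ℂ) = 1 := by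
      rw [one_div, inv_mul_cancel₀]
      exact mul_ne_zero two_ne_zero (Complex.ofReal_ne_zero.mpr Real.pi_ne_zero)
    rw [this, one_mul]
  · simp [hgm]

lemma summable_ifa (z : ℂ) (m : ℤ) :
    Summable (fun pq : ℕ × ℕ => if g pq = m then a z pq else 0) := by
  apply Summable.of_norm_bounded (summable_norm_a z)
  intro pq
  split
  · exact le_rfl
  · simp [norm_nonneg]

lemma tsum_fiber_a (z : ℂ) (m : ℤ) :
    (∑' pq : (g ⁻¹' {m} : Set (ℕ × ℕ)), a z pq) = cInt z m := by
  rw [tsum_subtype, cInt_eq]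
  refine tsum_congr fun pq => ?_
  by_cases h : g pq = m <;>
    simp [Set.indicator_apply, Set.mem_preimage, h]

/-! ### besselJ via cInt, and symmetry of cInt -/

lemma exp_mul_besselJ (z : ℂ) (m : ℤ) :
    Complex.exp (Complex.I * (m:ℂ) * ((π / 2 : ℝ) : ℂ)) * besselJ m z = cInt z m := by
  have hper : Function.Periodic (fun θ : ℝ =>
      Complex.exp (Complex.I * z * Complex.cos (θ:ℂ)) *
        Complex.exp (-((m:ℂ) * (θ:ℂ) * Complex.I))) (2 * π) := by
    intro θ
    have h1 : ((θ + 2*π : ℝ) : ℂ) = (θ:ℂ) + 2*(π:ℂ) := by push_cast; ring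
    simp only [h1, Complex.cos_add_two_pi]
    congr 1
    rw [show -((m:ℂ) * ((θ:ℂ) + 2*(π:ℂ)) * Complex.I)
        = -((m:ℂ)*(θ:ℂ)*Complex.I) + ((-m : ℤ):ℂ)*(2*(π:ℂ)*Complex.I) by push_cast; ring,
      Complex.exp_add, Complex.exp_int_mul_two_pi_mul_I, mul_one]
  have hshift : ∀ θ : ℝ,
      Complex.exp (z * Complex.sin (θ:ℂ) * Complex.I - (m:ℂ) * (θ:ℂ) * Complex.I)
        = (Complex.exp (Complex.I * z * Complex.cos (((θ - π/2 : ℝ)):ℂ)) *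
            Complex.exp (-((m:ℂ) * (((θ - π/2 : ℝ)):ℂ) * Complex.I))) *
          Complex.exp (-((m:ℂ) * ((π/2 : ℝ):ℂ) * Complex.I)) := by
    intro θ
    rw [← Complex.exp_add, ← Complex.exp_add]
    have hsin : Complex.sin (θ:ℂ) = Complex.cos (((θ - π/2 : ℝ)):ℂ) := by
      push_cast
      rw [show ((θ:ℂ) - (π:ℂ)/2) = -((π:ℂ)/2 - θ) by ring, Complex.cos_neg,
        Complex.cos_pi_div_two_sub]
    rw [hsin]
    congr 1
    push_cast
    ring
  have hint : (∫ θ in (0:ℝ)..(2 * Real.pi),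
      Complex.exp (z * Complex.sin (θ:ℂ) * Complex.I - (m:ℂ) * (θ:ℂ) * Complex.I))
      = (∫ θ in (0:ℝ)..(2 * Real.pi),
          Complex.exp (Complex.I * z * Complex.cos (θ:ℂ)) *
            Complex.exp (-((m:ℂ) * (θ:ℂ) * Complex.I))) *
          Complex.exp (-((m:ℂ) * ((π/2 : ℝ):ℂ) * Complex.I)) := by
    rw [intervalIntegral.integral_congr (fun θ _ => hshift θ),
      intervalIntegral.integral_mul_const,
      intervalIntegral.integral_comp_sub_right (fun x : ℝ =>
        Complex.exp (Complex.I * z * Complex.cos (x:ℂ)) *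
          Complex.exp (-((m:ℂ) * (x:ℂ) * Complex.I))) (π/2)]
    congr 1
    have h0 : (0 - π/2 : ℝ) + 2*π = 2*π - π/2 := by ring
    have := hper.intervalIntegral_add_eq (0 - π/2) 0
    rw [h0, zero_add] at this
    exact this
  rw [besselJ, cInt, hint]
  generalize (∫ θ in (0:ℝ)..(2 * Real.pi),
      Complex.exp (Complex.I * z * Complex.cos (θ:ℂ)) *
        Complex.exp (-((m:ℂ) * (θ:ℂ) * Complex.I))) = K
  rw [show Complex.exp (Complex.I * (m:ℂ) * ((π / 2 : ℝ) : ℂ)) *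
      (1 / (2 * (π:ℂ)) * (K * Complex.exp (-((m:ℂ) * ((π/2 : ℝ):ℂ) * Complex.I))))
      = (Complex.exp (Complex.I * (m:ℂ) * ((π / 2 : ℝ) : ℂ)) *
          Complex.exp (-((m:ℂ) * ((π/2 : ℝ):ℂ) * Complex.I))) * (1 / (2 * (π:ℂ)) * K)
      by ring, ← Complex.exp_add,
    show Complex.I * (m:ℂ) * ((π / 2 : ℝ) : ℂ) + -((m:ℂ) * ((π/2 : ℝ):ℂ) * Complex.I) = 0
      by ring, Complex.exp_zero, one_mul]

lemma cInt_neg (z : ℂ) (m : ℤ) : cInt z (-m) = cInt z m := by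
  have hrefl : ∀ θ : ℝ,
      Complex.exp (Complex.I * z * Complex.cos (θ:ℂ)) *
        Complex.exp (-(((-m : ℤ):ℂ) * (θ:ℂ) * Complex.I))
      = Complex.exp (Complex.I * z * Complex.cos (((2*π - θ : ℝ)):ℂ)) *
          Complex.exp (-((m:ℂ) * (((2*π - θ : ℝ)):ℂ) * Complex.I)) := by
    intro θ
    have h1 : (((2*π - θ : ℝ)):ℂ) = 2*(π:ℂ) - (θ:ℂ) := by push_cast; ring
    rw [h1, Complex.cos_two_pi_sub]
    congr 1
    rw [show -((m:ℂ) * (2*(π:ℂ) - (θ:ℂ)) * Complex.I)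
        = -(((-m : ℤ):ℂ) * (θ:ℂ) * Complex.I) + ((-m : ℤ):ℂ)*(2*(π:ℂ)*Complex.I)
        by push_cast; ring,
      Complex.exp_add, Complex.exp_int_mul_two_pi_mul_I, mul_one]
  rw [cInt, cInt]
  congr 1
  rw [intervalIntegral.integral_congr (fun θ _ => hrefl θ)]
  rw [intervalIntegral.integral_comp_sub_left (fun x : ℝ =>
    Complex.exp (Complex.I * z * Complex.cos (x:ℂ)) *
      Complex.exp (-((m:ℂ) * (x:ℂ) * Complex.I))) (2*π)]
  norm_num

/-! ### The multisection -/

lemma geom (n : ℕ) (hn : 1 ≤ n) (d : ℤ) :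
    ∑ ℓ ∈ Finset.range n, Complex.exp ((d:ℂ) * ((2*π*ℓ/n : ℝ):ℂ) * Complex.I)
      = if (n:ℤ) ∣ d then (n:ℂ) else 0 := by
  have hn0 : (n:ℂ) ≠ 0 := Nat.cast_ne_zero.mpr (by omega)
  have hterm : ∀ ℓ : ℕ, Complex.exp ((d:ℂ) * ((2*π*ℓ/n : ℝ):ℂ) * Complex.I)
      = (Complex.exp ((d:ℂ) * (2*(π:ℂ)/n) * Complex.I)) ^ ℓ := by
    intro ℓ
    rw [← Complex.exp_nat_mul]
    congr 1
    push_cast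
    ring
  simp only [hterm]
  by_cases hd : (n:ℤ) ∣ d
  · obtain ⟨j, hj⟩ := hd
    have hw : Complex.exp ((d:ℂ) * (2*(π:ℂ)/n) * Complex.I) = 1 := by
      rw [show (d:ℂ) * (2*(π:ℂ)/n) * Complex.I = (j:ℂ) * (2*(π:ℂ)*Complex.I) by
        rw [hj]; push_cast; field_simp]
      exact Complex.exp_int_mul_two_pi_mul_I j
    rw [hw, if_pos ⟨j, hj⟩]
    simp
  · have h2πI : (2*(π:ℂ)*Complex.I) ≠ 0 := by
      simp [Real.pi_ne_zero, Complex.I_ne_zero]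
    have hw1 : Complex.exp ((d:ℂ) * (2*(π:ℂ)/n) * Complex.I) ≠ 1 := by
      intro h
      rw [Complex.exp_eq_one_iff] at h
      obtain ⟨j, hj⟩ := h
      apply hd
      have hj2 : (d:ℂ) * (2*(π:ℂ)/n) * Complex.I * n = (j:ℂ) * (2*(π:ℂ)*Complex.I) * n := by
        rw [hj]
      have hl : (d:ℂ) * (2*(π:ℂ)/n) * Complex.I * n = (d:ℂ) * (2*(π:ℂ)*Complex.I) := by
        field_simp
      rw [hl, show (j:ℂ) * (2*(π:ℂ)*Complex.I) * n = ((j:ℂ)*n) * (2*(π:ℂ)*Complex.I) by ring]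
        at hj2
      have : (d:ℂ) = (j:ℂ) * n := mul_right_cancel₀ h2πI hj2
      have : d = j * n := by exact_mod_cast this
      exact ⟨j, by rw [this]; ring⟩
    rw [geom_sum_eq hw1, if_neg hd]
    have hwn : (Complex.exp ((d:ℂ) * (2*(π:ℂ)/n) * Complex.I)) ^ n = 1 := by
      rw [← Complex.exp_nat_mul,
        show (n:ℂ) * ((d:ℂ) * (2*(π:ℂ)/n) * Complex.I) = (d:ℂ) * (2*(π:ℂ)*Complex.I) by
          field_simp]
      exact Complex.exp_int_mul_two_pi_mul_I d
    rw [hwn]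
    simp

lemma avg (z : ℂ) (n : ℕ) (hn : 1 ≤ n) (α : ℝ) :
    (1/(n:ℂ)) * ∑ ℓ ∈ Finset.range n,
        Complex.exp (Complex.I * z * Complex.cos (((α + 2*π*ℓ/n : ℝ)):ℂ))
      = ∑' pq : ℕ × ℕ, (if (n:ℤ) ∣ g pq
          then a z pq * Complex.exp ((g pq : ℂ) * (α:ℂ) * Complex.I) else 0) := by
  have hn0 : (n:ℂ) ≠ 0 := Nat.cast_ne_zero.mpr (by omega)
  have hsum : HasSum (fun pq : ℕ × ℕ => ∑ ℓ ∈ Finset.range n,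
      a z pq * Complex.exp ((g pq : ℂ) * ((α + 2*π*ℓ/n : ℝ):ℂ) * Complex.I))
      (∑ ℓ ∈ Finset.range n,
        Complex.exp (Complex.I * z * Complex.cos (((α + 2*π*ℓ/n : ℝ)):ℂ))) :=
    hasSum_sum fun ℓ _ => hasSum_expand z (α + 2*π*ℓ/n)
  have hterm : ∀ pq : ℕ × ℕ, (∑ ℓ ∈ Finset.range n,
      a z pq * Complex.exp ((g pq : ℂ) * ((α + 2*π*ℓ/n : ℝ):ℂ) * Complex.I))
      = (n:ℂ) * (if (n:ℤ) ∣ g pq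
          then a z pq * Complex.exp ((g pq : ℂ) * (α:ℂ) * Complex.I) else 0) := by
    intro pq
    have hsplit : ∀ ℓ : ℕ, a z pq * Complex.exp ((g pq : ℂ) * ((α + 2*π*ℓ/n : ℝ):ℂ) * Complex.I)
        = (a z pq * Complex.exp ((g pq : ℂ) * (α:ℂ) * Complex.I)) *
            Complex.exp ((g pq :ℂ) * ((2*π*ℓ/n : ℝ):ℂ) * Complex.I) := by
      intro ℓ
      have hE : Complex.exp ((g pq : ℂ) * ((α + 2*π*ℓ/n : ℝ):ℂ) * Complex.I)
          = Complex.exp ((g pq : ℂ) * (α:ℂ) * Complex.I) *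
              Complex.exp ((g pq :ℂ) * ((2*π*ℓ/n : ℝ):ℂ) * Complex.I) := by
        rw [← Complex.exp_add]
        congr 1
        push_cast
        ring
      rw [hE]
      ring
    rw [Finset.sum_congr rfl (fun ℓ _ => hsplit ℓ), ← Finset.mul_sum, geom n hn]
    by_cases hd : (n:ℤ) ∣ g pq
    · rw [if_pos hd, if_pos hd]; ring
    · rw [if_neg hd, if_neg hd]; ring
  rw [funext hterm] at hsum
  have := hsum.mul_left (1/(n:ℂ))
  simp only [← mul_assoc, one_div, inv_mul_cancel₀ hn0, one_mul] at this
  rw [one_div]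
  exact this.tsum_eq.symm

end BesselAux

open BesselAux in
theorem statement1 (n : ℕ) (hn : 1 ≤ n) (α : ℝ) (z : ℂ) :
    besselJ 0 z + 2 * ∑' k : ℕ,
        Complex.exp (Complex.I * ((k:ℂ) + 1) * (n:ℂ) * ((π / 2 : ℝ) : ℂ)) *
          besselJ ((k + 1) * n) z * (Real.cos ((k + 1) * n * α) : ℂ) =
      (1 / (n:ℂ)) * ∑ ℓ ∈ Finset.range n,
        Complex.exp (Complex.I * z * (Real.cos (α + 2 * π * ℓ / n) : ℂ)) := by
  classical
  have hnz : (n:ℤ) ≠ 0 := by exact_mod_cast (by omega : n ≠ 0)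
  set hfun : ℕ × ℕ → ℂ := fun pq => if (n:ℤ) ∣ g pq
      then a z pq * Complex.exp ((g pq : ℂ) * (α:ℂ) * Complex.I) else 0 with hfdef
  -- the right-hand side equals ∑' hfun
  have hRHS : (1 / (n:ℂ)) * ∑ ℓ ∈ Finset.range n,
      Complex.exp (Complex.I * z * (Real.cos (α + 2 * π * ℓ / n) : ℂ))
      = ∑' pq, hfun pq := by
    simp only [Complex.ofReal_cos]
    exact avg z n hn α
  -- summability
  have hSummable : Summable hfun := by
    apply Summable.of_norm_bounded (summable_norm_a z)
    intro pq
    rw [hfdef]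
    simp only
    split
    · rw [norm_mul,
        show (g pq : ℂ) * (α:ℂ) * Complex.I = ((g pq * α : ℝ):ℂ) * Complex.I by
          push_cast; ring,
        Complex.norm_exp_ofReal_mul_I, mul_one]
    · simp
  have hH : HasSum hfun (∑' pq, hfun pq) := hSummable.hasSum
  have hfib := hH.tsum_fiberwise g
  set c' : ℤ → ℂ := fun m => if (n:ℤ) ∣ m
      then cInt z m * Complex.exp ((m:ℂ) * (α:ℂ) * Complex.I) else 0 with hcdef
  have hfibval : ∀ m : ℤ, (∑' pq : (g ⁻¹' {m} : Set (ℕ × ℕ)), hfun pq) = c' m := by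
    intro m
    have h1 : ∀ pq : (g ⁻¹' {m} : Set (ℕ × ℕ)), hfun ↑pq
        = (if (n:ℤ) ∣ m then Complex.exp ((m:ℂ) * (α:ℂ) * Complex.I) else 0) * a z ↑pq := by
      rintro ⟨pq, hpq⟩
      have hg : g pq = m := hpq
      rw [hfdef]
      simp only [hg]
      split
      · ring
      · simp
    rw [tsum_congr h1, tsum_mul_left, tsum_fiber_a z m, hcdef]
    beta_reduce
    by_cases hd : (n:ℤ) ∣ m
    · rw [if_pos hd, if_pos hd]; ring
    · rw [if_neg hd, if_neg hd]; ring
  have hc' : HasSum c' (∑' pq, hfun pq) := by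
    simpa only [hfibval] using hfib
  set u : ℤ → ℂ := fun j =>
    cInt z (j * n) * Complex.exp (((j * (n:ℤ) : ℤ):ℂ) * (α:ℂ) * Complex.I) with hudef
  have huc : ∀ j : ℤ, c' (j * n) = u j := by
    intro j
    rw [hcdef, hudef]
    simp only
    exact if_pos (dvd_mul_left _ _)
  have hinj : Function.Injective (fun j : ℤ => j * (n:ℤ)) := fun a b hab => by
    exact mul_right_cancel₀ hnz hab
  have hsupp : Function.support c' ⊆ Set.range (fun j : ℤ => j * (n:ℤ)) := by
    intro m hm
    rw [Function.mem_support] at hm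
    by_cases hd : (n:ℤ) ∣ m
    · obtain ⟨j, hj⟩ := hd
      exact ⟨j, by rw [hj]; ring⟩
    · exfalso
      apply hm
      rw [hcdef]
      simp [hd]
  have hZ : ∑' j : ℤ, u j = ∑' m : ℤ, c' m := by
    rw [← hinj.tsum_eq hsupp]
    exact (tsum_congr huc).symm
  have hu_summable : Summable u :=
    (hc'.summable.comp_injective hinj).congr huc
  have hNat : Summable (fun k : ℕ => u k) :=
    hu_summable.comp_injective Nat.cast_injective
  have hNat1 : Summable (fun k : ℕ => u ((k:ℤ) + 1)) :=
    hu_summable.comp_injective (fun a b h => by omega)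
  have hNatneg : Summable (fun k : ℕ => u (-((k:ℤ) + 1))) :=
    hu_summable.comp_injective (fun a b h => by omega)
  have hsplitZ : ∑' j : ℤ, u j = (∑' k : ℕ, u k) + ∑' k : ℕ, u (-((k:ℤ) + 1)) :=
    tsum_of_nat_of_neg_add_one hNat hNatneg
  have hpeel : ∑' k : ℕ, u k = u 0 + ∑' k : ℕ, u ((k:ℤ) + 1) := by
    rw [Summable.tsum_eq_zero_add hNat]
    simp only [Nat.cast_zero, Nat.cast_add, Nat.cast_one]
  have hu0 : u 0 = cInt z 0 := by
    rw [hudef]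
    simp
  have hpair : ∀ k : ℕ, u ((k:ℤ) + 1) + u (-((k:ℤ) + 1))
      = 2 * (cInt z (((k:ℤ) + 1) * n) *
          Complex.cos ((((k:ℝ) + 1) * (n:ℝ) * α : ℝ) : ℂ)) := by
    intro k
    rw [hudef]
    simp only
    rw [show (-((k:ℤ) + 1)) * (n:ℤ) = -(((k:ℤ) + 1) * n) by ring, cInt_neg]
    have e1 : Complex.exp (((((k:ℤ) + 1) * (n:ℤ) : ℤ):ℂ) * (α:ℂ) * Complex.I)
        = Complex.exp (((((k:ℝ) + 1) * (n:ℝ) * α : ℝ) : ℂ) * Complex.I) := by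
      congr 1; push_cast; ring
    have e2 : Complex.exp (((-(((k:ℤ) + 1) * (n:ℤ)) : ℤ):ℂ) * (α:ℂ) * Complex.I)
        = Complex.exp (-((((k:ℝ) + 1) * (n:ℝ) * α : ℝ) : ℂ) * Complex.I) := by
      congr 1; push_cast; ring
    rw [e1, e2, Complex.cos]
    ring
  have hterm : ∀ k : ℕ,
      Complex.exp (Complex.I * ((k:ℂ) + 1) * (n:ℂ) * ((π / 2 : ℝ) : ℂ)) *
          besselJ ((k + 1) * n) z * (Real.cos ((k + 1) * n * α) : ℂ)
      = cInt z (((k:ℤ) + 1) * n) *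
          Complex.cos ((((k:ℝ) + 1) * (n:ℝ) * α : ℝ) : ℂ) := by
    intro k
    have h1 := exp_mul_besselJ z (((k:ℤ) + 1) * (n:ℤ))
    rw [show (Complex.I * (((((k:ℤ) + 1) * (n:ℤ)) : ℤ):ℂ) * ((π / 2 : ℝ) : ℂ))
        = Complex.I * ((k:ℂ) + 1) * (n:ℂ) * ((π / 2 : ℝ) : ℂ) by push_cast; ring] at h1
    rw [Complex.ofReal_cos, ← h1]
  calc besselJ 0 z + 2 * ∑' k : ℕ,
        Complex.exp (Complex.I * ((k:ℂ) + 1) * (n:ℂ) * ((π / 2 : ℝ) : ℂ)) *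
          besselJ ((k + 1) * n) z * (Real.cos ((k + 1) * n * α) : ℂ)
      = cInt z 0 + 2 * ∑' k : ℕ, cInt z (((k:ℤ) + 1) * n) *
          Complex.cos ((((k:ℝ) + 1) * (n:ℝ) * α : ℝ) : ℂ) := by
        rw [tsum_congr hterm]
        congr 1
        have h0 := exp_mul_besselJ z 0
        simpa using h0
    _ = u 0 + ∑' k : ℕ, (u ((k:ℤ) + 1) + u (-((k:ℤ) + 1))) := by
        rw [hu0, ← tsum_mul_left]
        congr 1
        exact tsum_congr fun k => (hpair k).symm
    _ = u 0 + ((∑' k : ℕ, u ((k:ℤ) + 1)) + ∑' k : ℕ, u (-((k:ℤ) + 1))) := by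
        rw [Summable.tsum_add hNat1 hNatneg]
    _ = ∑' j : ℤ, u j := by
        rw [hsplitZ, hpeel]
        ring
    _ = ∑' m : ℤ, c' m := hZ
    _ = ∑' pq, hfun pq := hc'.tsum_eq
    _ = (1 / (n:ℂ)) * ∑ ℓ ∈ Finset.range n,
        Complex.exp (Complex.I * z * (Real.cos (α + 2 * π * ℓ / n) : ℂ)) := hRHS.symm
end

section
/- For all real z and α: J_0(z) + 2·Σ_{k=1}^∞ J_{4k}(z)·cos(4kα) = (1/2)[cos(z·sin α) + cos(z·cos α)]. -/
open scoped Real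

namespace S6
open Complex MeasureTheory intervalIntegral

instance : Fact (0 < 2 * Real.pi) := ⟨by positivity⟩

lemma tpp : (0:ℝ) < 2 * π := by positivity

noncomputable def g (z : ℝ) (θ : ℝ) : ℂ := Complex.exp ((z * Real.sin θ : ℝ) * Complex.I)
noncomputable def g1 (z : ℝ) (θ : ℝ) : ℂ := ((z * Real.cos θ : ℝ) * Complex.I) * g z θ
noncomputable def g2 (z : ℝ) (θ : ℝ) : ℂ :=
  ((-(z * Real.sin θ) : ℝ) * Complex.I) * g z θ + ((z * Real.cos θ : ℝ) * Complex.I) * g1 z θ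

lemma g_per (z : ℝ) : Function.Periodic (g z) (2 * π) := by
  intro θ; simp [g, Real.sin_add_two_pi]

lemma g1_per (z : ℝ) : Function.Periodic (g1 z) (2 * π) := by
  intro θ; simp only [g1, Real.cos_add_two_pi, g_per z θ]

lemma g_cont (z : ℝ) : Continuous (g z) := by unfold g; fun_prop
lemma g1_cont (z : ℝ) : Continuous (g1 z) := by unfold g1 g; fun_prop
lemma g2_cont (z : ℝ) : Continuous (g2 z) := by unfold g2 g1 g; fun_prop

lemma norm_g (z θ : ℝ) : ‖g z θ‖ = 1 := by
  rw [g]; exact Complex.norm_exp_ofReal_mul_I _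

lemma norm_g1 (z θ : ℝ) : ‖g1 z θ‖ ≤ |z| := by
  rw [g1, norm_mul, norm_g, mul_one, norm_mul, Complex.norm_I, mul_one, Complex.norm_real,
    Real.norm_eq_abs, abs_mul]
  calc |z| * |Real.cos θ| ≤ |z| * 1 := by
        gcongr; exact Real.abs_cos_le_one θ
    _ = |z| := mul_one _

lemma norm_g2 (z θ : ℝ) : ‖g2 z θ‖ ≤ |z| + |z| * |z| := by
  refine (norm_add_le _ _).trans ?_
  gcongr
  · rw [norm_mul, norm_g, mul_one, norm_mul, Complex.norm_I, mul_one, Complex.norm_real,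
      Real.norm_eq_abs, abs_neg, abs_mul]
    calc |z| * |Real.sin θ| ≤ |z| * 1 := by gcongr; exact Real.abs_sin_le_one θ
      _ = |z| := mul_one _
  · rw [norm_mul, norm_mul, Complex.norm_I, mul_one, Complex.norm_real, Real.norm_eq_abs,
      abs_mul]
    have hc := Real.abs_cos_le_one θ
    have hg := norm_g1 z θ
    have h0 : (0:ℝ) ≤ ‖g1 z θ‖ := norm_nonneg _
    have h2 : |z| * |Real.cos θ| ≤ |z| := by nlinarith [abs_nonneg z]
    nlinarith [mul_le_mul_of_nonneg_right h2 h0, mul_le_mul_of_nonneg_left hg (abs_nonneg z)]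

lemma hasDerivAt_g (z θ : ℝ) : HasDerivAt (g z) (g1 z θ) θ := by
  have h1 : HasDerivAt (fun θ : ℝ => z * Real.sin θ) (z * Real.cos θ) θ :=
    (Real.hasDerivAt_sin θ).const_mul z
  have h2 : HasDerivAt (fun θ : ℝ => ((z * Real.sin θ : ℝ) : ℂ)) ((z * Real.cos θ : ℝ) : ℂ) θ :=
    h1.ofReal_comp
  have h3 := (h2.mul_const Complex.I).cexp
  rw [g1, g, mul_comm]
  exact h3

lemma hasDerivAt_g1 (z θ : ℝ) : HasDerivAt (g1 z) (g2 z θ) θ := by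
  have h1 : HasDerivAt (fun θ : ℝ => ((z * Real.cos θ : ℝ) : ℂ) * Complex.I)
      (((-(z * Real.sin θ) : ℝ) : ℂ) * Complex.I) θ := by
    have : HasDerivAt (fun θ : ℝ => z * Real.cos θ) (-(z * Real.sin θ)) θ := by
      simpa [mul_comm, mul_left_comm] using (Real.hasDerivAt_cos θ).const_mul z
    exact this.ofReal_comp.mul_const Complex.I
  exact h1.mul (hasDerivAt_g z θ)

noncomputable def F (z : ℝ) : C(AddCircle (2 * π), ℂ) :=
  ⟨(g_per z).lift, continuous_coinduced_dom.mpr (g_cont z)⟩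

lemma F_coe (z θ : ℝ) : F z θ = g z θ := (g_per z).lift_coe θ

noncomputable def c (z : ℝ) : ℤ → ℂ := fourierCoeff (F z : AddCircle (2 * π) → ℂ)

lemma two_pi_ne : ((2 * π : ℝ) : ℂ) ≠ 0 := by
  push_cast; norm_num [Real.pi_ne_zero]

lemma besselJ_eq (z : ℝ) (m : ℤ) : besselJ m z = c z m := by
  rw [c, fourierCoeff_eq_intervalIntegral _ m 0, zero_add, besselJ, Complex.real_smul]
  congr 1
  · push_cast; ring
  · apply intervalIntegral.integral_congr; intro x hx
    simp only [smul_eq_mul, F_coe, g, fourier_coe_apply, ← Complex.exp_add]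
    congr 1
    have h := two_pi_ne
    push_cast at h ⊢
    field_simp
    ring

lemma link (z : ℝ) (n : ℤ) : c z n = fourierCoeffOn tpp (g z) n := by
  rw [c, fourierCoeff_eq_intervalIntegral _ n 0, fourierCoeffOn_eq_integral, zero_add]
  congr 1
  · norm_num
  · apply intervalIntegral.integral_congr; intro x hx
    simp only [smul_eq_mul, F_coe, fourier_coe_apply]
    norm_num

lemma coeffOn_step {f f' : ℝ → ℂ} (hf : ∀ x, HasDerivAt f (f' x) x) (hc : Continuous f')
    (hper : f (2*π) = f 0) {n : ℤ} (hn : n ≠ 0) :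
    fourierCoeffOn tpp f n = (1/(Complex.I * n)) * fourierCoeffOn tpp f' n := by
  rw [fourierCoeffOn_of_hasDerivAt tpp hn (fun x _ => hf x) (hc.intervalIntegrable _ _), hper,
    sub_self, mul_zero, zero_sub]
  have hn' : (n:ℂ) ≠ 0 := Int.cast_ne_zero.mpr hn
  have hπ : (π:ℂ) ≠ 0 := by exact_mod_cast Real.pi_ne_zero
  push_cast
  field_simp
  ring

lemma coeffOn_bound {f : ℝ → ℂ} {M : ℝ} (hM : ∀ x, ‖f x‖ ≤ M) (n : ℤ) :
    ‖fourierCoeffOn tpp f n‖ ≤ M := by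
  have hM0 : (0:ℝ) ≤ M := le_trans (norm_nonneg _) (hM 0)
  rw [fourierCoeffOn_eq_integral, norm_smul]
  have h1 : ‖∫ x in (0:ℝ)..2*π, fourier (-n) (x : AddCircle (2*π-0)) • f x‖
      ≤ M * |2*π - 0| := by
    apply intervalIntegral.norm_integral_le_of_norm_le_const
    intro x hx
    rw [norm_smul, show ‖(fourier (-n) (x : AddCircle (2*π-0)) : ℂ)‖ = 1 from Circle.norm_coe _,
      one_mul]
    exact hM x
  have h2 : ‖(1/(2*π-0) : ℝ)‖ = 1/(2*π) := by
    rw [Real.norm_eq_abs, sub_zero, abs_of_pos (by positivity)]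
  rw [h2]
  have h3 : (1/(2*π)) * (M * |2*π-0|) = M := by
    rw [sub_zero, abs_of_pos tpp]; field_simp
  calc (1/(2*π)) * ‖∫ x in (0:ℝ)..2*π, fourier (-n) (x : AddCircle (2*π-0)) • f x‖
      ≤ (1/(2*π)) * (M * |2*π-0|) := by
        apply mul_le_mul_of_nonneg_left h1; positivity
    _ = M := h3

lemma c_eq_second (z : ℝ) {n : ℤ} (hn : n ≠ 0) :
    c z n = (1/(Complex.I*n)) * ((1/(Complex.I*n)) * fourierCoeffOn tpp (g2 z) n) := by
  rw [link, coeffOn_step (hasDerivAt_g z) (g1_cont z) (by have := g_per z 0; simpa using this) hn,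
    coeffOn_step (hasDerivAt_g1 z) (g2_cont z) (by have := g1_per z 0; simpa using this) hn]

lemma norm_c_le (z : ℝ) {n : ℤ} (hn : n ≠ 0) :
    ‖c z n‖ ≤ (|z| + |z| * |z|) * (1/(n:ℝ)^2) := by
  rw [c_eq_second z hn, norm_mul, norm_mul]
  have h1 : ‖(1/(Complex.I * (n:ℂ)) : ℂ)‖ = 1/|(n:ℝ)| := by
    rw [norm_div, norm_one, norm_mul, Complex.norm_I, one_mul,
      show ((n:ℂ)) = ((n:ℝ):ℂ) by push_cast; rfl, Complex.norm_real, Real.norm_eq_abs]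
  rw [h1]
  have h2 : ‖fourierCoeffOn tpp (g2 z) n‖ ≤ |z| + |z| * |z| := coeffOn_bound (norm_g2 z) n
  have hn0 : (0:ℝ) < |(n:ℝ)| := by
    rw [abs_pos]; exact_mod_cast hn
  have key : 1/|(n:ℝ)| * (1/|(n:ℝ)| * ‖fourierCoeffOn tpp (g2 z) n‖)
      = (1/(n:ℝ)^2) * ‖fourierCoeffOn tpp (g2 z) n‖ := by
    rw [← _root_.sq_abs]; ring
  rw [key, mul_comm ((1:ℝ)/(n:ℝ)^2)]
  apply mul_le_mul_of_nonneg_right h2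
  positivity

lemma summable_c (z : ℝ) : Summable (c z) := by
  apply Summable.of_norm_bounded_eventually (g := fun n : ℤ => (|z|+|z| * |z|) * (1/(n:ℝ)^2))
  · exact (Real.summable_one_div_int_pow.mpr one_lt_two).mul_left _
  · filter_upwards [Filter.eventually_cofinite_ne 0] with n hn
    exact norm_c_le z hn

noncomputable def E (n : ℤ) (x : ℝ) : ℂ := Complex.exp (n * x * Complex.I)

lemma hasSum_E (z x : ℝ) : HasSum (fun n : ℤ => c z n * E n x) (g z x) := by
  have h := has_pointwise_sum_fourier_series_of_summable (f := F z) (summable_c z)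
    (x : AddCircle (2*π))
  rw [F_coe] at h
  have heq : (fun i : ℤ => fourierCoeff (⇑(F z)) i • fourier i (x : AddCircle (2*π)))
      = fun i => c z i * E i x := by
    funext i
    rw [smul_eq_mul, fourier_coe_apply]
    show c z i * _ = _
    congr 1
    rw [E]
    congr 1
    have h2 := two_pi_ne
    push_cast at h2 ⊢
    field_simp
  rwa [heq] at h

lemma E_add (n : ℤ) (y w : ℝ) : E n (y + w) = E n y * E n w := by
  rw [E, E, E, ← Complex.exp_add]
  congr 1
  push_cast
  ring

lemma E_quarter (n : ℤ) (x : ℝ) :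
    E n x + E n (x + π/2) + (E n (x + π) + E n (x + 3*(π/2))) =
      (if (4:ℤ) ∣ n then (4:ℂ) else 0) * E n x := by
  obtain ⟨q, r, hq, hr0, hr4⟩ : ∃ q r : ℤ, n = 4*q + r ∧ 0 ≤ r ∧ r < 4 :=
    ⟨n / 4, n % 4, (Int.mul_ediv_add_emod n 4).symm, Int.emod_nonneg n (by norm_num),
      Int.emod_lt_of_pos n (by norm_num)⟩
  have hu : E n (π/2) = Complex.exp ((r:ℂ) * ((π:ℝ) / 2) * Complex.I) := by
    rw [E, show ((n:ℂ)) * ((π/2 : ℝ):ℂ) * Complex.I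
        = (q:ℂ) * (2*(π:ℝ)*Complex.I) + (r:ℂ) * ((π:ℝ)/2) * Complex.I by
      rw [show ((n:ℂ)) = ((4*q+r : ℤ):ℂ) by rw [hq]]
      push_cast; ring]
    rw [Complex.exp_add, show ((q:ℂ) * (2*(π:ℝ)*Complex.I)) = (q:ℂ) * (2*(π:ℂ)*Complex.I) by
      push_cast; ring, Complex.exp_int_mul_two_pi_mul_I, one_mul]
  have h1 : E n (x + π/2) = E n x * E n (π/2) := E_add n x (π/2)
  have h2 : E n (x + π) = E n x * (E n (π/2))^2 := by
    rw [show x + π = x + π/2 + π/2 by ring, E_add, E_add]; ring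
  have h3 : E n (x + 3*(π/2)) = E n x * (E n (π/2))^3 := by
    rw [show x + 3*(π/2) = x + π/2 + π/2 + π/2 by ring, E_add, E_add, E_add]; ring
  rw [h1, h2, h3]
  interval_cases r
  · have hu1 : E n (π/2) = 1 := by rw [hu]; norm_num [Complex.exp_zero]
    rw [if_pos (by omega), hu1]; ring
  · have hu1 : E n (π/2) = Complex.I := by
      rw [hu, show ((1:ℤ):ℂ) * ((π:ℝ)/2) * Complex.I = ((π/2 : ℝ):ℂ) * Complex.I by
        push_cast; ring, Complex.exp_mul_I, ← Complex.ofReal_cos, ← Complex.ofReal_sin,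
        Real.cos_pi_div_two, Real.sin_pi_div_two]
      norm_num
    rw [if_neg (by omega), hu1]
    have : (1:ℂ) + Complex.I + (Complex.I^2 + Complex.I^3) = 0 := by
      rw [Complex.I_sq, pow_succ, Complex.I_sq]; ring
    linear_combination E n x * this
  · have hu1 : E n (π/2) = -1 := by
      rw [hu, show ((2:ℤ):ℂ) * ((π:ℝ)/2) * Complex.I = ((π:ℝ):ℂ) * Complex.I by
        push_cast; ring]
      exact_mod_cast Complex.exp_pi_mul_I
    rw [if_neg (by omega), hu1]; ring
  · have hu1 : E n (π/2) = -Complex.I := by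
      rw [hu, show ((3:ℤ):ℂ) * ((π:ℝ)/2) * Complex.I = (3:ℕ) * (((π/2 : ℝ):ℂ) * Complex.I) by
        push_cast; ring, Complex.exp_nat_mul, Complex.exp_mul_I, ← Complex.ofReal_cos,
        ← Complex.ofReal_sin, Real.cos_pi_div_two, Real.sin_pi_div_two]
      norm_num
    rw [if_neg (by omega), hu1]
    have : (1:ℂ) + (-Complex.I) + ((-Complex.I)^2 + (-Complex.I)^3) = 0 := by
      have hI3 : Complex.I^3 = -Complex.I := by rw [pow_succ, Complex.I_sq]; ring
      ring_nf
      rw [hI3, Complex.I_sq]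
      ring
    linear_combination E n x * this

lemma besselJ_neg (z : ℝ) (m : ℤ) (hm : Even m) : besselJ (-m) (z:ℂ) = besselJ m z := by
  obtain ⟨k, hk⟩ := hm
  have key : ∀ x : ℝ,
      Complex.exp ((z:ℂ) * Complex.sin (((π - x : ℝ)):ℂ) * Complex.I
          - (m:ℂ) * ((π - x : ℝ):ℂ) * Complex.I)
        = Complex.exp ((z:ℂ) * Complex.sin ((x:ℝ):ℂ) * Complex.I
          - ((-m:ℤ):ℂ) * ((x:ℝ):ℂ) * Complex.I) := by
    intro x
    have hsin : Complex.sin (((π - x : ℝ)):ℂ) = Complex.sin ((x:ℝ):ℂ) := by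
      push_cast; exact Complex.sin_pi_sub _
    rw [hsin, show (z:ℂ) * Complex.sin ((x:ℝ):ℂ) * Complex.I - (m:ℂ) * ((π - x : ℝ):ℂ) * Complex.I
        = ((z:ℂ) * Complex.sin ((x:ℝ):ℂ) * Complex.I - ((-m:ℤ):ℂ) * ((x:ℝ):ℂ) * Complex.I)
          + ((-k : ℤ):ℂ) * (2*((π:ℝ):ℂ)*Complex.I) by push_cast [hk]; ring,
      Complex.exp_add, Complex.exp_int_mul_two_pi_mul_I, mul_one]
  have hper : Function.Periodic (fun x : ℝ => Complex.exp ((z:ℂ) * Complex.sin ((x:ℝ):ℂ)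
      * Complex.I - ((-m:ℤ):ℂ) * ((x:ℝ):ℂ) * Complex.I)) (2*π) := by
    intro x
    simp only
    have hsin : Complex.sin (((x + 2*π : ℝ)):ℂ) = Complex.sin ((x:ℝ):ℂ) := by
      push_cast; exact Complex.sin_add_two_pi _
    rw [hsin, show (z:ℂ) * Complex.sin ((x:ℝ):ℂ) * Complex.I
        - ((-m:ℤ):ℂ) * ((x + 2*π : ℝ):ℂ) * Complex.I
        = ((z:ℂ) * Complex.sin ((x:ℝ):ℂ) * Complex.I - ((-m:ℤ):ℂ) * ((x:ℝ):ℂ) * Complex.I)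
          + ((m : ℤ):ℂ) * (2*((π:ℝ):ℂ)*Complex.I) by push_cast; ring,
      Complex.exp_add, Complex.exp_int_mul_two_pi_mul_I, mul_one]
  unfold besselJ
  congr 1
  calc ∫ θ in (0:ℝ)..2*π, Complex.exp ((z:ℂ) * Complex.sin ((θ:ℝ):ℂ) * Complex.I
          - ((-m:ℤ):ℂ) * ((θ:ℝ):ℂ) * Complex.I)
      = ∫ θ in (-π)..π, Complex.exp ((z:ℂ) * Complex.sin ((θ:ℝ):ℂ) * Complex.I
          - ((-m:ℤ):ℂ) * ((θ:ℝ):ℂ) * Complex.I) := by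
        have h := hper.intervalIntegral_add_eq (-π) 0
        rw [zero_add, show -π + 2*π = π by ring] at h
        exact h.symm
    _ = ∫ θ in (-π)..π, Complex.exp ((z:ℂ) * Complex.sin (((π - θ : ℝ)):ℂ) * Complex.I
          - (m:ℂ) * ((π - θ : ℝ):ℂ) * Complex.I) := by
        apply intervalIntegral.integral_congr
        intro x _
        exact (key x).symm
    _ = ∫ θ in (0:ℝ)..2*π, Complex.exp ((z:ℂ) * Complex.sin ((θ:ℝ):ℂ) * Complex.I
          - (m:ℂ) * ((θ:ℝ):ℂ) * Complex.I) := by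
        rw [intervalIntegral.integral_comp_sub_left (fun θ : ℝ =>
          Complex.exp ((z:ℂ) * Complex.sin ((θ:ℝ):ℂ) * Complex.I
            - (m:ℂ) * ((θ:ℝ):ℂ) * Complex.I)) π]
        congr 1 <;> ring

noncomputable def t (z α : ℝ) (i : ℤ) : ℂ := if (4:ℤ) ∣ i then c z i * E i α else 0

noncomputable def Sv (z α : ℝ) : ℂ :=
  (g z α + g z (α+π/2) + (g z (α+π) + g z (α+3*(π/2))))/4

lemma hasSum_t (z α : ℝ) : HasSum (t z α) (Sv z α) := by
  have h := (((hasSum_E z α).add (hasSum_E z (α+π/2))).add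
    ((hasSum_E z (α+π)).add (hasSum_E z (α+3*(π/2))))).div_const 4
  have hfun : ∀ i : ℤ, (c z i * E i α + c z i * E i (α+π/2)
      + (c z i * E i (α+π) + c z i * E i (α+3*(π/2))))/4 = t z α i := by
    intro i
    have hq := E_quarter i α
    rw [t]
    by_cases h4 : (4:ℤ) ∣ i
    · rw [if_pos h4] at hq ⊢
      linear_combination (c z i / 4) * hq
    · rw [if_neg h4] at hq ⊢
      linear_combination (c z i / 4) * hq
  rw [Sv, show t z α = fun i => (c z i * E i α + c z i * E i (α+π/2)
      + (c z i * E i (α+π) + c z i * E i (α+3*(π/2))))/4 from funext fun i => (hfun i).symm]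
  exact h

lemma t_zero (z α : ℝ) : t z α 0 = c z 0 := by
  rw [t, if_pos (dvd_zero _), E]
  norm_num

lemma t_neg_eq (z α : ℝ) (k : ℕ) :
    t z α (4*(k+1) : ℤ) + t z α (-(4*(k+1) : ℤ))
      = 2 * (besselJ (4*((k:ℤ)+1)) (z:ℂ) * (Real.cos (4*((k:ℝ)+1)*α) : ℂ)) := by
  have hd : (4:ℤ) ∣ (4*((k:ℤ)+1)) := ⟨(k:ℤ)+1, rfl⟩
  rw [t, t, if_pos hd, if_pos ((dvd_neg).2 hd)]
  have hc : c z (-(4*((k:ℤ)+1))) = c z (4*((k:ℤ)+1)) := by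
    rw [← besselJ_eq, ← besselJ_eq, besselJ_neg z _ ⟨2*((k:ℤ)+1), by ring⟩]
  rw [hc, ← besselJ_eq]
  have hE : E (4*((k:ℤ)+1)) α + E (-(4*((k:ℤ)+1))) α
      = 2 * ((Real.cos (4*((k:ℝ)+1)*α) : ℝ) : ℂ) := by
    rw [E, E, Complex.ofReal_cos,
      show (((4*((k:ℝ)+1)*α : ℝ)):ℂ) = ((4*((k:ℤ)+1) : ℤ):ℂ) * ((α:ℝ):ℂ) by push_cast; ring,
      Complex.two_cos]
    congr 2
    push_cast
    ring
  linear_combination besselJ (4*((k:ℤ)+1)) (z:ℂ) * hE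

lemma Sv_eq (z α : ℝ) :
    Sv z α = (1 / 2 : ℂ) * ((Real.cos (z * Real.sin α) : ℂ) + (Real.cos (z * Real.cos α) : ℂ)) := by
  have s1 : Real.sin (α+π/2) = Real.cos α := Real.sin_add_pi_div_two α
  have s2 : Real.sin (α+π) = -Real.sin α := Real.sin_add_pi α
  have s3 : Real.sin (α+3*(π/2)) = -Real.cos α := by
    rw [show α+3*(π/2) = (α+π/2)+π by ring, Real.sin_add_pi, s1]
  rw [Sv]
  simp only [g, s1, s2, s3]
  have e1 : Complex.exp ((((z*Real.sin α : ℝ)):ℂ) * Complex.I)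
      + Complex.exp ((((z*(-Real.sin α) : ℝ)):ℂ) * Complex.I)
      = 2 * ((Real.cos (z*Real.sin α) : ℝ):ℂ) := by
    rw [show ((z*(-Real.sin α) : ℝ) : ℂ) = -(((z*Real.sin α : ℝ)):ℂ) by push_cast; ring,
      Complex.ofReal_cos, Complex.two_cos]
  have e2 : Complex.exp ((((z*Real.cos α : ℝ)):ℂ) * Complex.I)
      + Complex.exp ((((z*(-Real.cos α) : ℝ)):ℂ) * Complex.I)
      = 2 * ((Real.cos (z*Real.cos α) : ℝ):ℂ) := by
    rw [show ((z*(-Real.cos α) : ℝ) : ℂ) = -(((z*Real.cos α : ℝ)):ℂ) by push_cast; ring,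
      Complex.ofReal_cos, Complex.two_cos]
  linear_combination (e1 + e2)/4

end S6

theorem statement6 (z α : ℝ) :
    besselJ 0 z + 2 * ∑' k : ℕ, besselJ (4 * (k + 1)) z * (Real.cos (4 * (k + 1) * α) : ℂ) =
      (1 / 2 : ℂ) * ((Real.cos (z * Real.sin α) : ℂ) + (Real.cos (z * Real.cos α) : ℂ)) := by
  classical
  have hT := S6.hasSum_t z α
  have h2 : HasSum (fun n : ℕ => S6.t z α n + S6.t z α (-(n:ℤ))) (S6.Sv z α + S6.c z 0) := by
    have h := hT.nat_add_neg
    rwa [S6.t_zero] at h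
  have h3 : HasSum (fun n : ℕ => S6.t z α ((n+1 : ℕ)) + S6.t z α (-((n+1 : ℕ):ℤ)))
      (S6.Sv z α - S6.c z 0) := by
    refine (hasSum_nat_add_iff (f := fun n : ℕ => S6.t z α n + S6.t z α (-(n:ℤ))) 1).2 ?_
    have e1 : S6.Sv z α + S6.c z 0 = (S6.Sv z α - S6.c z 0)
        + ∑ i ∈ Finset.range 1, (S6.t z α i + S6.t z α (-(i:ℤ))) := by
      rw [Finset.sum_range_one]
      simp only [Nat.cast_zero, neg_zero, S6.t_zero]
      ring
    exact e1 ▸ h2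
  have hinj : Function.Injective (fun k : ℕ => 4*k+3) := by
    intro a b h
    simp only at h
    omega
  have hsupp : ∀ n : ℕ, n ∉ Set.range (fun k : ℕ => 4*k+3) →
      (fun n : ℕ => S6.t z α ((n+1 : ℕ)) + S6.t z α (-((n+1 : ℕ):ℤ))) n = 0 := by
    intro n hn
    simp only
    have h4 : ¬ (4:ℤ) ∣ (((n+1 : ℕ)):ℤ) := by
      intro hd
      rcases hd with ⟨m, hm⟩
      push_cast at hm
      exact hn ⟨m.toNat - 1, by simp only; omega⟩
    rw [S6.t, S6.t, if_neg, if_neg, add_zero]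
    · rw [Int.dvd_neg]; exact h4
    · exact h4
  have h5 := (Function.Injective.hasSum_iff hinj hsupp).2 h3
  have hterm : ∀ k : ℕ, ((fun n : ℕ => S6.t z α ((n+1 : ℕ)) + S6.t z α (-((n+1 : ℕ):ℤ)))
      ∘ (fun k : ℕ => 4*k+3)) k
      = 2 * (besselJ (4 * (k + 1)) z * (Real.cos (4 * (k + 1) * α) : ℂ)) := by
    intro k
    have h := S6.t_neg_eq z α k
    simp only [Function.comp]
    rw [show (((4*k+3+1 : ℕ)):ℤ) = (4*((k:ℤ)+1) : ℤ) by push_cast; ring]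
    rw [h]
  rw [show ((fun n : ℕ => S6.t z α ((n+1 : ℕ)) + S6.t z α (-((n+1 : ℕ):ℤ)))
      ∘ (fun k : ℕ => 4*k+3))
      = fun k : ℕ => 2 * (besselJ (4 * (k + 1)) z * (Real.cos (4 * (k + 1) * α) : ℂ))
    from funext hterm] at h5
  have h6 := h5.tsum_eq
  rw [tsum_mul_left] at h6
  rw [S6.besselJ_eq z 0, h6, S6.Sv_eq]
  ring
end

section
/- For all real z and α: Σ_{k=1}^∞ k·J_{4k}(z)·sin(4kα) = (z/16)[sin(z·sin α)·cos α − sin(z·cos α)·sin α]. -/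
open scoped Real
open Complex intervalIntegral

noncomputable def h0 (z θ : ℝ) : ℂ := z * Complex.cos θ * Complex.exp (z * Complex.sin θ * Complex.I)
noncomputable def h1 (z θ : ℝ) : ℂ :=
  (-z * Complex.sin θ + Complex.I * z ^ 2 * Complex.cos θ ^ 2) * Complex.exp (z * Complex.sin θ * Complex.I)
noncomputable def h2 (z θ : ℝ) : ℂ :=
  (-z * Complex.cos θ - 3 * Complex.I * z ^ 2 * Complex.sin θ * Complex.cos θ - z ^ 3 * Complex.cos θ ^ 3) *
    Complex.exp (z * Complex.sin θ * Complex.I)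

lemma hsinR (θ : ℝ) : HasDerivAt (fun t : ℝ => Complex.sin t) (Complex.cos θ) θ :=
  (Complex.hasDerivAt_sin θ).comp_ofReal

lemma hcosR (θ : ℝ) : HasDerivAt (fun t : ℝ => Complex.cos t) (-Complex.sin θ) θ :=
  (Complex.hasDerivAt_cos θ).comp_ofReal

lemma hexpR (z : ℝ) (θ : ℝ) :
    HasDerivAt (fun t : ℝ => Complex.exp (z * Complex.sin t * Complex.I))
      ((z * Complex.cos θ * Complex.I) * Complex.exp (z * Complex.sin θ * Complex.I)) θ := by
  have h := (((hsinR θ).const_mul (z : ℂ)).mul_const Complex.I).cexp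
  convert h using 1
  ring

lemma h0_deriv (z : ℝ) (θ : ℝ) : HasDerivAt (h0 z) (h1 z θ) θ := by
  have h := (((hcosR θ).const_mul (z : ℂ))).mul (hexpR z θ)
  refine h.congr_deriv ?_
  unfold h1; ring

lemma h1_deriv (z : ℝ) (θ : ℝ) : HasDerivAt (h1 z) (h2 z θ) θ := by
  have hA : HasDerivAt (fun t : ℝ => -(z:ℂ) * Complex.sin t + Complex.I * (z:ℂ) ^ 2 * (Complex.cos t * Complex.cos t))
      (-(z:ℂ) * Complex.cos θ + Complex.I * (z:ℂ) ^ 2 * (-Complex.sin θ * Complex.cos θ + Complex.cos θ * -Complex.sin θ)) θ :=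
    ((hsinR θ).const_mul (-(z:ℂ))).add (((hcosR θ).mul (hcosR θ)).const_mul (Complex.I * (z:ℂ) ^ 2))
  have h := hA.mul (hexpR z θ)
  have e : h1 z = fun t : ℝ => (-(z:ℂ) * Complex.sin t + Complex.I * (z:ℂ) ^ 2 * (Complex.cos t * Complex.cos t)) * Complex.exp (z * Complex.sin t * Complex.I) := by
    funext t; unfold h1; ring
  rw [e]
  refine h.congr_deriv ?_
  unfold h2
  ring_nf
  simp only [Complex.I_sq]
  ring

lemma h0_cont (z : ℝ) : Continuous (h0 z) := by unfold h0; fun_prop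
lemma h1_cont (z : ℝ) : Continuous (h1 z) := by unfold h1; fun_prop
lemma h2_cont (z : ℝ) : Continuous (h2 z) := by unfold h2; fun_prop

lemma h0_per (z : ℝ) : Function.Periodic (h0 z) (2 * π) := by
  intro θ; unfold h0; push_cast
  simp [Complex.cos_add, Complex.sin_add, Complex.cos_two_pi, Complex.sin_two_pi]

lemma h1_per (z : ℝ) : Function.Periodic (h1 z) (2 * π) := by
  intro θ; unfold h1; push_cast
  simp [Complex.cos_add, Complex.sin_add, Complex.cos_two_pi, Complex.sin_two_pi]


lemma exponent_deriv (z : ℝ) (n : ℤ) (θ : ℝ) :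
    HasDerivAt (fun t : ℝ => Complex.exp ((z:ℂ) * Complex.sin t * Complex.I - (n:ℂ) * t * Complex.I))
      ((((z:ℂ) * Complex.cos θ - n) * Complex.I) *
        Complex.exp ((z:ℂ) * Complex.sin θ * Complex.I - (n:ℂ) * θ * Complex.I)) θ := by
  have hid : HasDerivAt (fun t : ℝ => ((t : ℝ) : ℂ)) 1 θ := Complex.ofRealCLM.hasDerivAt
  have hinner := (((hsinR θ).const_mul (z:ℂ)).mul_const Complex.I).sub
    ((hid.const_mul (n:ℂ)).mul_const Complex.I)
  have h := hinner.cexp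
  refine h.congr_deriv ?_
  simp only [Pi.sub_apply]; ring

lemma integral_key (z : ℝ) (n : ℤ) :
    (∫ θ in (0:ℝ)..(2*π), Complex.exp (-((n:ℂ)*θ)*Complex.I) * h0 z θ)
      = (n:ℂ) * ∫ θ in (0:ℝ)..(2*π),
          Complex.exp ((z:ℂ) * Complex.sin θ * Complex.I - (n:ℂ) * θ * Complex.I) := by
  set G : ℝ → ℂ := fun t => Complex.exp ((z:ℂ) * Complex.sin t * Complex.I - (n:ℂ) * t * Complex.I) with hG
  have hcontG : Continuous G := by unfold G; fun_prop
  have hcont : Continuous (fun θ : ℝ => (((z:ℂ) * Complex.cos θ - n) * Complex.I) * G θ) := by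
    unfold G; fun_prop
  have hFTC := intervalIntegral.integral_eq_sub_of_hasDerivAt
    (f := G) (a := (0:ℝ)) (b := 2*π)
    (fun θ _ => exponent_deriv z n θ) (hcont.intervalIntegrable _ _)
  have hend : G (2*π) = 1 := by
    unfold G
    beta_reduce
    rw [show (1:ℂ) = Complex.exp 0 by simp, Complex.exp_eq_exp_iff_exists_int]
    exact ⟨-n, by push_cast; rw [Complex.sin_two_pi]; ring⟩
  have hstart : G 0 = 1 := by unfold G; simp
  rw [hend, hstart, sub_self] at hFTC
  have hsplit : (fun θ : ℝ => (((z:ℂ) * Complex.cos θ - n) * Complex.I) * G θ)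
      = fun θ : ℝ => Complex.I * ((z:ℂ) * Complex.cos θ * G θ) - Complex.I * ((n:ℂ) * G θ) := by
    funext θ; ring
  rw [hsplit, intervalIntegral.integral_sub
      (by unfold G; exact (by fun_prop : Continuous fun θ:ℝ => Complex.I * ((z:ℂ) * Complex.cos θ * G θ)).intervalIntegrable _ _)
      (by unfold G; exact (by fun_prop : Continuous fun θ:ℝ => Complex.I * ((n:ℂ) * G θ)).intervalIntegrable _ _),
    intervalIntegral.integral_const_mul, intervalIntegral.integral_const_mul] at hFTC
  have hAB : (∫ θ in (0:ℝ)..(2*π), (z:ℂ) * Complex.cos θ * G θ)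
      = ∫ θ in (0:ℝ)..(2*π), (n:ℂ) * G θ := by
    have := sub_eq_zero.mp hFTC
    exact mul_left_cancel₀ Complex.I_ne_zero this
  have hinteg : (fun θ : ℝ => Complex.exp (-((n:ℂ)*θ)*Complex.I) * h0 z θ)
      = fun θ : ℝ => (z:ℂ) * Complex.cos θ * G θ := by
    funext θ
    unfold G; unfold h0
    beta_reduce
    rw [show (z:ℂ) * Complex.sin θ * Complex.I - (n:ℂ) * θ * Complex.I
        = (-((n:ℂ)*θ)*Complex.I) + (z:ℂ) * Complex.sin θ * Complex.I by ring, Complex.exp_add]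
    ring
  rw [hinteg, hAB, intervalIntegral.integral_const_mul]

lemma besselJ_neg_even (m : ℤ) (z : ℝ) (hm : Even m) : besselJ (-m) z = besselJ m z := by
  unfold besselJ
  congr 1
  set g : ℝ → ℂ := fun t => Complex.exp ((z:ℂ) * Complex.sin t * Complex.I - (m:ℂ) * t * Complex.I) with hg
  have hper : Function.Periodic g (2*π) := by
    intro t; unfold g
    beta_reduce
    rw [Complex.exp_eq_exp_iff_exists_int]
    exact ⟨-m, by push_cast; rw [Complex.sin_add, Complex.cos_two_pi, Complex.sin_two_pi]; ring⟩
  have key : ∀ θ : ℝ, Complex.exp ((z:ℂ) * Complex.sin θ * Complex.I - ((-m : ℤ):ℂ) * θ * Complex.I)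
      = g (π - θ) := by
    intro θ
    unfold g
    beta_reduce
    obtain ⟨t, rfl⟩ := hm
    rw [Complex.exp_eq_exp_iff_exists_int]
    refine ⟨t, ?_⟩
    push_cast
    rw [Complex.sin_pi_sub]
    ring
  calc (∫ θ in (0:ℝ)..(2*π), Complex.exp ((z:ℂ) * Complex.sin θ * Complex.I - ((-m : ℤ):ℂ) * θ * Complex.I))
      = ∫ θ in (0:ℝ)..(2*π), g (π - θ) := by
        exact intervalIntegral.integral_congr (fun θ _ => key θ)
    _ = ∫ x in (π - 2*π)..(π - 0), g x := intervalIntegral.integral_comp_sub_left g π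
    _ = ∫ x in (-π)..(-π + 2*π), g x := by norm_num; ring_nf
    _ = ∫ x in (0:ℝ)..(0 + 2*π), g x := hper.intervalIntegral_add_eq (-π) 0
    _ = ∫ x in (0:ℝ)..(2*π), g x := by norm_num


lemma two_pi_pos' : (0:ℝ) < 2*π := by positivity

lemma lift_cont (z : ℝ) : Continuous ((h0_per z).lift) := by
  exact continuous_coinduced_dom.mpr (h0_cont z)

noncomputable def normCoeff (n : ℤ) (g : ℝ → ℂ) : ℂ :=
  ((1/(2*π) : ℝ) : ℂ) * ∫ θ in (0:ℝ)..(2*π), Complex.exp (-((n:ℂ)*θ)*Complex.I) * g θ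

lemma fourierCoeff_lift (z : ℝ) (n : ℤ) :
    haveI : Fact (0 < 2*π) := ⟨two_pi_pos'⟩
    fourierCoeff ((h0_per z).lift) n = normCoeff n (h0 z) := by
  haveI : Fact (0 < 2*π) := ⟨two_pi_pos'⟩
  rw [fourierCoeff_eq_intervalIntegral _ n 0, zero_add, real_smul]
  unfold normCoeff
  congr 1
  refine intervalIntegral.integral_congr (fun x _ => ?_)
  rw [Function.Periodic.lift_coe, fourier_coe_apply, smul_eq_mul]
  congr 2
  push_cast
  field_simp [Complex.ofReal_ne_zero.mpr Real.pi_ne_zero]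

lemma fourierCoeffOn_eq_normCoeff (g : ℝ → ℂ) (n : ℤ) :
    fourierCoeffOn two_pi_pos' g n = normCoeff n g := by
  rw [fourierCoeffOn_eq_integral, real_smul]
  unfold normCoeff
  congr 1
  · norm_num
  refine intervalIntegral.integral_congr (fun x _ => ?_)
  rw [fourier_coe_apply, smul_eq_mul]
  congr 2
  push_cast
  field_simp [Complex.ofReal_ne_zero.mpr Real.pi_ne_zero]
  ring


lemma parts (f f' : ℝ → ℂ) (hd : ∀ x, HasDerivAt f (f' x) x) (hc' : Continuous f')
    (hp : f (2*π) = f 0) (n : ℤ) (hn : n ≠ 0) :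
    fourierCoeffOn two_pi_pos' f n = (1/((n:ℂ)*Complex.I)) * fourierCoeffOn two_pi_pos' f' n := by
  have hn' : (n:ℂ) ≠ 0 := Int.cast_ne_zero.mpr hn
  rw [fourierCoeffOn_of_hasDerivAt two_pi_pos' hn (fun x _ => hd x) (hc'.intervalIntegrable _ _),
    hp, sub_self, mul_zero, zero_sub]
  have hπ : (π:ℂ) ≠ 0 := Complex.ofReal_ne_zero.mpr Real.pi_ne_zero
  push_cast
  field_simp
  ring

lemma h2_bound (z x : ℝ) : ‖h2 z x‖ ≤ |z| + 3*z^2 + |z|^3 := by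
  unfold h2
  rw [norm_mul]
  have he : ‖Complex.exp (↑z * Complex.sin ↑x * Complex.I)‖ = 1 := by
    rw [← Complex.ofReal_sin, Complex.norm_exp]
    have : ((z:ℂ) * ↑(Real.sin x) * Complex.I).re = 0 := by simp
    rw [this, Real.exp_zero]
  rw [he, mul_one]
  have hE : (-(z:ℂ) * Complex.cos ↑x - 3 * Complex.I * (z:ℂ) ^ 2 * Complex.sin ↑x * Complex.cos ↑x - (z:ℂ) ^ 3 * Complex.cos ↑x ^ 3)
      = ((-z*Real.cos x - z^3*Real.cos x^3 : ℝ) : ℂ) + ((-3*z^2*Real.sin x*Real.cos x : ℝ) : ℂ) * Complex.I := by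
    simp only [← Complex.ofReal_cos, ← Complex.ofReal_sin]
    push_cast
    ring
  rw [hE]
  have hc1 : |Real.cos x| ≤ 1 := Real.abs_cos_le_one x
  have hs1 : |Real.sin x| ≤ 1 := Real.abs_sin_le_one x
  have key : ‖((-z*Real.cos x - z^3*Real.cos x^3 : ℝ) : ℂ) + ((-3*z^2*Real.sin x*Real.cos x : ℝ) : ℂ) * Complex.I‖
      ≤ |(-z*Real.cos x - z^3*Real.cos x^3 : ℝ)| + |(-3*z^2*Real.sin x*Real.cos x : ℝ)| := by
    set r := (-z*Real.cos x - z^3*Real.cos x^3 : ℝ) with hr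
    set s := (-3*z^2*Real.sin x*Real.cos x : ℝ) with hs
    rw [Complex.norm_add_mul_I]
    calc Real.sqrt (r^2 + s^2) ≤ Real.sqrt ((|r| + |s|)^2) := by
          apply Real.sqrt_le_sqrt
          nlinarith [_root_.sq_abs r, _root_.sq_abs s, mul_nonneg (abs_nonneg r) (abs_nonneg s)]
      _ = |r| + |s| := Real.sqrt_sq (by positivity)
  have t1 : |(-z*Real.cos x - z^3*Real.cos x^3 : ℝ)| ≤ |z| + |z|^3 := by
    calc |(-z*Real.cos x - z^3*Real.cos x^3 : ℝ)|
        = |z*Real.cos x + z^3*Real.cos x^3| := by rw [show (-z*Real.cos x - z^3*Real.cos x^3 : ℝ) = -(z*Real.cos x + z^3*Real.cos x^3) by ring, abs_neg]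
      _ ≤ |z*Real.cos x| + |z^3*Real.cos x^3| := abs_add_le _ _
      _ = |z| * |Real.cos x| + |z|^3 * |Real.cos x|^3 := by rw [abs_mul, abs_mul, _root_.abs_pow, _root_.abs_pow]
      _ ≤ |z| * 1 + |z|^3 * 1 := add_le_add (mul_le_mul_of_nonneg_left hc1 (abs_nonneg z))
          (mul_le_mul_of_nonneg_left (pow_le_one₀ (abs_nonneg _) hc1) (pow_nonneg (abs_nonneg z) 3))
      _ = |z| + |z|^3 := by ring
  have t2 : |(-3*z^2*Real.sin x*Real.cos x : ℝ)| ≤ 3*z^2 := by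
    rw [show (-3*z^2*Real.sin x*Real.cos x : ℝ) = -(3*z^2*Real.sin x*Real.cos x) by ring, abs_neg,
      abs_mul, abs_mul, _root_.abs_of_nonneg (show (0:ℝ) ≤ 3*z^2 by positivity)]
    have hm : |Real.sin x| * |Real.cos x| ≤ 1 := mul_le_one₀ hs1 (abs_nonneg _) hc1
    nlinarith [mul_le_mul_of_nonneg_left hm (show (0:ℝ) ≤ 3*z^2 by positivity)]
  linarith [key, t1, t2]


lemma exp_step (n : ℤ) (x : ℝ) :
    Complex.exp ((n:ℂ)*(↑(x + π/2))*Complex.I) = Complex.exp ((n:ℂ)*(↑x)*Complex.I) * Complex.I ^ n := by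
  push_cast
  rw [show (n:ℂ)*((x:ℂ) + ↑π/2)*Complex.I = (n:ℂ)*(x:ℂ)*Complex.I + (n:ℂ)*(((π:ℂ)/2)*Complex.I) by ring,
    Complex.exp_add, Complex.exp_int_mul]
  congr 2
  rw [show ((π:ℂ)/2)*Complex.I = ((π/2 : ℝ):ℂ)*Complex.I by push_cast; ring, Complex.exp_mul_I]
  rw [← Complex.ofReal_cos, ← Complex.ofReal_sin, Real.cos_pi_div_two, Real.sin_pi_div_two]
  simp

lemma I_zpow_four : Complex.I ^ (4:ℤ) = 1 := by
  rw [show (4:ℤ) = ((4:ℕ):ℤ) from rfl, zpow_natCast, Complex.I_pow_four]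

lemma Ipow_dvd (n : ℤ) (h : (4:ℤ) ∣ n) : Complex.I ^ n = 1 := by
  obtain ⟨m, rfl⟩ := h
  rw [zpow_mul, I_zpow_four, one_zpow]

lemma Ipow_not_dvd (n : ℤ) (h : ¬ (4:ℤ) ∣ n) :
    (1:ℂ) + Complex.I^n + (Complex.I^n)^2 + (Complex.I^n)^3 = 0 := by
  set w := Complex.I ^ n with hw
  have hw4 : w^4 = 1 := by
    rw [hw, ← zpow_natCast (Complex.I ^ n) 4, ← zpow_mul, mul_comm, zpow_mul]
    push_cast
    rw [I_zpow_four, one_zpow]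
  have hrep : w = Complex.I ^ (n % 4) := by
    rw [hw]
    conv_lhs => rw [show n = 4*(n/4) + n % 4 from (Int.mul_ediv_add_emod n 4).symm]
    rw [zpow_add₀ Complex.I_ne_zero, zpow_mul, I_zpow_four, one_zpow, one_mul]
  have e1 : Complex.I ^ ((1:ℤ)) = Complex.I := zpow_one _
  have e2 : Complex.I ^ ((2:ℤ)) = -1 := by
    rw [show (2:ℤ) = ((2:ℕ):ℤ) from rfl, zpow_natCast, Complex.I_sq]
  have e3 : Complex.I ^ ((3:ℤ)) = -Complex.I := by
    rw [show (3:ℤ) = ((3:ℕ):ℤ) from rfl, zpow_natCast, pow_succ, Complex.I_sq]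
    ring
  have hw1 : w ≠ 1 := by
    have hr : n % 4 = 1 ∨ n % 4 = 2 ∨ n % 4 = 3 := by omega
    rcases hr with hr | hr | hr <;> rw [hrep, hr]
    · rw [e1]; simp [Complex.ext_iff]
    · rw [e2]; norm_num
    · rw [e3]; simp [Complex.ext_iff]
  have hzero : (w - 1) * (1 + w + w^2 + w^3) = 0 := by
    rw [show (w-1)*(1+w+w^2+w^3) = w^4 - 1 by ring, hw4, sub_self]
  rcases mul_eq_zero.mp hzero with hc | hc
  · exact absurd (sub_eq_zero.mp hc) hw1
  · exact hc


lemma normCoeff_h2_bound (z : ℝ) (n : ℤ) : ‖normCoeff n (h2 z)‖ ≤ |z| + 3*z^2 + |z|^3 := by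
  unfold normCoeff
  rw [norm_mul]
  have h1 : ‖((1/(2*π) : ℝ) : ℂ)‖ = 1/(2*π) := by
    rw [Complex.norm_real, Real.norm_eq_abs, _root_.abs_of_pos (by positivity)]
  rw [h1]
  have h2' : ‖∫ θ in (0:ℝ)..(2*π), Complex.exp (-((n:ℂ)*θ)*Complex.I) * h2 z θ‖
      ≤ (|z| + 3*z^2 + |z|^3) * |2*π - 0| := by
    apply intervalIntegral.norm_integral_le_of_norm_le_const
    intro x _
    rw [norm_mul]
    have he : ‖Complex.exp (-((n:ℂ)*x)*Complex.I)‖ = 1 := by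
      rw [Complex.norm_exp]
      have : ((-((n:ℂ)*x))*Complex.I).re = 0 := by simp
      rw [this, Real.exp_zero]
    rw [he, one_mul]
    exact h2_bound z x
  calc 1/(2*π) * ‖∫ θ in (0:ℝ)..(2*π), Complex.exp (-((n:ℂ)*θ)*Complex.I) * h2 z θ‖
      ≤ 1/(2*π) * ((|z| + 3*z^2 + |z|^3) * |2*π - 0|) := by
        apply mul_le_mul_of_nonneg_left h2' (by positivity)
    _ = |z| + 3*z^2 + |z|^3 := by
        rw [sub_zero, _root_.abs_of_pos two_pi_pos']
        field_simp

lemma coeff_decay (z : ℝ) (n : ℤ) (hn : n ≠ 0) :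
    haveI : Fact (0 < 2*π) := ⟨two_pi_pos'⟩
    ‖fourierCoeff ((h0_per z).lift) n‖ ≤ (|z| + 3*z^2 + |z|^3) * (1/(n:ℝ)^2) := by
  haveI : Fact (0 < 2*π) := ⟨two_pi_pos'⟩
  rw [fourierCoeff_lift, ← fourierCoeffOn_eq_normCoeff,
    parts (h0 z) (h1 z) (h0_deriv z) (h1_cont z) (h0_per z 0 ▸ by rw [zero_add] : h0 z (2*π) = h0 z 0) n hn,
    parts (h1 z) (h2 z) (h1_deriv z) (h2_cont z) (h1_per z 0 ▸ by rw [zero_add] : h1 z (2*π) = h1 z 0) n hn,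
    fourierCoeffOn_eq_normCoeff]
  rw [norm_mul, norm_mul]
  have hni : ‖(1/((n:ℂ)*Complex.I))‖ = 1/|(n:ℝ)| := by
    rw [norm_div, norm_one, norm_mul, Complex.norm_I, mul_one]
    norm_num [Complex.norm_intCast]
  rw [hni]
  calc 1/|(n:ℝ)| * (1/|(n:ℝ)| * ‖normCoeff n (h2 z)‖)
      ≤ 1/|(n:ℝ)| * (1/|(n:ℝ)| * (|z| + 3*z^2 + |z|^3)) := by
        have h := normCoeff_h2_bound z n
        gcongr
    _ = (|z| + 3*z^2 + |z|^3) * (1/(n:ℝ)^2) := by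
        rw [show (n:ℝ)^2 = |(n:ℝ)|^2 from (_root_.sq_abs _).symm]
        ring

lemma coeff_summable (z : ℝ) :
    haveI : Fact (0 < 2*π) := ⟨two_pi_pos'⟩
    Summable (fun n : ℤ => fourierCoeff ((h0_per z).lift) n) := by
  haveI : Fact (0 < 2*π) := ⟨two_pi_pos'⟩
  apply Summable.of_norm_bounded_eventually (g := fun n : ℤ => (|z| + 3*z^2 + |z|^3) * (1/(n:ℝ)^2))
  · exact (Real.summable_one_div_int_pow.mpr one_lt_two).mul_left _
  · refine ((Set.finite_singleton (0:ℤ)).eventually_cofinite_notMem).mono (fun n hn => ?_)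
    exact coeff_decay z n (by simpa using hn)

lemma pointwise_sum (z : ℝ) (θ : ℝ) :
    haveI : Fact (0 < 2*π) := ⟨two_pi_pos'⟩
    HasSum (fun n : ℤ => fourierCoeff ((h0_per z).lift) n * Complex.exp ((n:ℂ)*θ*Complex.I))
      (h0 z θ) := by
  haveI : Fact (0 < 2*π) := ⟨two_pi_pos'⟩
  set F : C(AddCircle (2*π), ℂ) := ⟨(h0_per z).lift, lift_cont z⟩ with hF
  have hsum : Summable (fourierCoeff (⇑F)) := coeff_summable z
  have h := has_pointwise_sum_fourier_series_of_summable hsum ((θ : ℝ) : AddCircle (2*π))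
  have he : (fun n : ℤ => fourierCoeff (⇑F) n • fourier n ((θ:ℝ) : AddCircle (2*π)))
      = fun n : ℤ => fourierCoeff ((h0_per z).lift) n * Complex.exp ((n:ℂ)*θ*Complex.I) := by
    funext n
    rw [smul_eq_mul, fourier_coe_apply]
    congr 2
    push_cast
    field_simp [Complex.ofReal_ne_zero.mpr Real.pi_ne_zero]
  rw [he] at h
  have hFθ : F ((θ:ℝ) : AddCircle (2*π)) = h0 z θ := Function.Periodic.lift_coe (h0_per z) θ
  rwa [hFθ] at h

theorem statement7 (z α : ℝ) :
    (∑' k : ℕ, ((k : ℂ) + 1) * besselJ (4 * (k + 1)) z * (Real.sin (4 * (k + 1) * α) : ℂ)) =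
      ((z : ℂ) / 16) *
        ((Real.sin (z * Real.sin α) * Real.cos α - Real.sin (z * Real.cos α) * Real.sin α : ℝ) : ℂ) := by
  haveI : Fact (0 < 2*π) := ⟨two_pi_pos'⟩
  classical
  have c_eq : ∀ n : ℤ, fourierCoeff ((h0_per z).lift) n = (n:ℂ) * besselJ n (z:ℂ) := by
    intro n
    rw [fourierCoeff_lift]
    unfold normCoeff besselJ
    rw [integral_key]
    push_cast
    ring
  have hsum4 := ((pointwise_sum z α).add (pointwise_sum z (α+π/2))).add
    ((pointwise_sum z (α+π/2+π/2)).add (pointwise_sum z (α+π/2+π/2+π/2)))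
  set f : ℤ → ℂ := fun n => if (4:ℤ) ∣ n then 4 * (fourierCoeff ((h0_per z).lift) n * Complex.exp ((n:ℂ)*α*Complex.I)) else 0 with hfdef
  set S : ℂ := (h0 z α + h0 z (α+π/2)) + (h0 z (α+π/2+π/2) + h0 z (α+π/2+π/2+π/2)) with hSdef
  have hfun : ∀ n : ℤ, f n =
      (fourierCoeff ((h0_per z).lift) n * Complex.exp ((n:ℂ)*((α:ℝ):ℂ)*Complex.I) + fourierCoeff ((h0_per z).lift) n * Complex.exp ((n:ℂ)*((α+π/2 : ℝ):ℂ)*Complex.I)) +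
      (fourierCoeff ((h0_per z).lift) n * Complex.exp ((n:ℂ)*((α+π/2+π/2 : ℝ):ℂ)*Complex.I) + fourierCoeff ((h0_per z).lift) n * Complex.exp ((n:ℂ)*((α+π/2+π/2+π/2 : ℝ):ℂ)*Complex.I)) := by
    intro n
    have s1 : Complex.exp ((n:ℂ)*((α+π/2 : ℝ):ℂ)*Complex.I)
        = Complex.exp ((n:ℂ)*(α:ℂ)*Complex.I) * Complex.I^n := exp_step n α
    have s2 : Complex.exp ((n:ℂ)*((α+π/2+π/2 : ℝ):ℂ)*Complex.I)
        = Complex.exp ((n:ℂ)*((α+π/2 : ℝ):ℂ)*Complex.I) * Complex.I^n := exp_step n (α+π/2)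
    have s3 : Complex.exp ((n:ℂ)*((α+π/2+π/2+π/2 : ℝ):ℂ)*Complex.I)
        = Complex.exp ((n:ℂ)*((α+π/2+π/2 : ℝ):ℂ)*Complex.I) * Complex.I^n := exp_step n (α+π/2+π/2)
    simp only [hfdef]
    by_cases h4 : (4:ℤ) ∣ n
    · rw [if_pos h4]
      rw [s3, s2, s1, Ipow_dvd n h4]
      ring
    · rw [if_neg h4]
      rw [s3, s2, s1]
      have hI := Ipow_not_dvd n h4
      linear_combination (-(fourierCoeff ((h0_per z).lift) n * Complex.exp ((n:ℂ)*(α:ℂ)*Complex.I))) * hI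
  have hf : HasSum f S := by
    rw [hSdef]
    exact HasSum.congr_fun hsum4 hfun
  have hf0 : f 0 = 0 := by
    simp only [hfdef]
    rw [if_pos (dvd_zero 4), c_eq 0]
    simp
  have hsummf : Summable f := hf.summable
  have hposS : Summable (fun m : ℕ => f (m:ℤ)) :=
    hsummf.comp_injective (fun a b h => by exact_mod_cast h)
  have hnegS : Summable (fun m : ℕ => f (-((m:ℤ)+1))) :=
    hsummf.comp_injective (fun a b h => by omega)
  have htot : HasSum f ((∑' m : ℕ, f (m:ℤ)) + ∑' m : ℕ, f (-((m:ℤ)+1))) :=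
    HasSum.of_nat_of_neg_add_one hposS.hasSum hnegS.hasSum
  have hS_eq : (∑' m : ℕ, f (m:ℤ)) + (∑' m : ℕ, f (-((m:ℤ)+1))) = S := htot.unique hf
  have hA : HasSum (fun k : ℕ => f (((4*(k+1) : ℕ)):ℤ)) (∑' m : ℕ, f (m:ℤ)) := by
    refine (Function.Injective.hasSum_iff (f := fun m : ℕ => f (m:ℤ))
      (g := fun k : ℕ => 4*(k+1)) (fun a b h => by simp only [] at h; omega) ?_).mpr hposS.hasSum
    intro m hm
    by_cases hm0 : m = 0
    · subst hm0; simpa using hf0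
    · show f (m:ℤ) = 0
      simp only [hfdef]
      rw [if_neg]
      intro hd
      have hd' : (4:ℕ) ∣ m := by exact_mod_cast hd
      exact hm ⟨m/4 - 1, by simp only []; omega⟩
  have hB : HasSum (fun k : ℕ => f (-((((4*k+3 : ℕ)):ℤ)+1))) (∑' m : ℕ, f (-((m:ℤ)+1))) := by
    refine (Function.Injective.hasSum_iff (f := fun m : ℕ => f (-((m:ℤ)+1)))
      (g := fun k : ℕ => 4*k+3) (fun a b h => by simp only [] at h; omega) ?_).mpr hnegS.hasSum
    intro m hm
    show f (-((m:ℤ)+1)) = 0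
    simp only [hfdef]
    rw [if_neg]
    intro hd
    rw [dvd_neg] at hd
    have hd' : (4:ℕ) ∣ (m+1) := by exact_mod_cast hd
    exact hm ⟨(m+1)/4 - 1, by simp only []; omega⟩
  have hA' : HasSum (fun k : ℕ => f (4*((k:ℤ)+1))) (∑' m : ℕ, f (m:ℤ)) :=
    hA.congr_fun (fun k => by congr 1)
  have hB' : HasSum (fun k : ℕ => f (-(4*((k:ℤ)+1)))) (∑' m : ℕ, f (-((m:ℤ)+1))) :=
    hB.congr_fun (fun k => by congr 1)
  have hpair : HasSum (fun k : ℕ => f (4*((k:ℤ)+1)) + f (-(4*((k:ℤ)+1)))) S := by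
    have h := hA'.add hB'
    rwa [hS_eq] at h
  have hterm : ∀ k : ℕ, f (4*((k:ℤ)+1)) + f (-(4*((k:ℤ)+1)))
      = (32*Complex.I) * (((k:ℂ)+1) * besselJ (4*((k:ℤ)+1)) (z:ℂ) * ((Real.sin (4*((k:ℝ)+1)*α) : ℝ) : ℂ)) := by
    intro k
    have hdv : (4:ℤ) ∣ (4*((k:ℤ)+1)) := ⟨(k:ℤ)+1, rfl⟩
    have hdvneg : (4:ℤ) ∣ (-(4*((k:ℤ)+1))) := dvd_neg.mpr hdv
    simp only [hfdef]
    rw [if_pos hdv, if_pos hdvneg, c_eq, c_eq,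
      besselJ_neg_even (4*((k:ℤ)+1)) z ⟨2*((k:ℤ)+1), by ring⟩]
    have e1 : Complex.exp (((4*((k:ℤ)+1) : ℤ):ℂ)*(α:ℂ)*Complex.I)
        = ((Real.cos (4*((k:ℝ)+1)*α) : ℝ):ℂ) + ((Real.sin (4*((k:ℝ)+1)*α) : ℝ):ℂ)*Complex.I := by
      rw [show ((4*((k:ℤ)+1) : ℤ):ℂ)*(α:ℂ) = ((4*((k:ℝ)+1)*α : ℝ):ℂ) by push_cast; ring,
        Complex.exp_mul_I, ← Complex.ofReal_cos, ← Complex.ofReal_sin]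
    have e2 : Complex.exp (((-(4*((k:ℤ)+1)) : ℤ):ℂ)*(α:ℂ)*Complex.I)
        = ((Real.cos (4*((k:ℝ)+1)*α) : ℝ):ℂ) - ((Real.sin (4*((k:ℝ)+1)*α) : ℝ):ℂ)*Complex.I := by
      rw [show ((-(4*((k:ℤ)+1)) : ℤ):ℂ)*(α:ℂ) = ((-(4*((k:ℝ)+1)*α) : ℝ):ℂ) by push_cast; ring,
        Complex.exp_mul_I, ← Complex.ofReal_cos, ← Complex.ofReal_sin, Real.cos_neg, Real.sin_neg]
      push_cast
      ring
    rw [e1, e2]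
    push_cast
    ring
  have h32 : (32*Complex.I) ≠ 0 := by simp [Complex.I_ne_zero]
  have hfinal : HasSum (fun k : ℕ => ((k:ℂ)+1) * besselJ (4*((k:ℤ)+1)) (z:ℂ) * ((Real.sin (4*((k:ℝ)+1)*α) : ℝ):ℂ))
      ((32*Complex.I)⁻¹ * S) := by
    have h1 : HasSum (fun k : ℕ => (32*Complex.I) * (((k:ℂ)+1) * besselJ (4*((k:ℤ)+1)) (z:ℂ) * ((Real.sin (4*((k:ℝ)+1)*α) : ℝ):ℂ))) S :=
      hpair.congr_fun (fun k => (hterm k).symm)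
    have h2 := h1.mul_left (32*Complex.I)⁻¹
    exact h2.congr_fun (fun k => by rw [inv_mul_cancel_left₀ h32])
  rw [hfinal.tsum_eq]
  -- now evaluate S
  have v0 : h0 z α = (z:ℂ) * ((Real.cos α : ℝ):ℂ) *
      (((Real.cos (z*Real.sin α) : ℝ):ℂ) + ((Real.sin (z*Real.sin α) : ℝ):ℂ)*Complex.I) := by
    unfold h0
    simp only [← Complex.ofReal_cos, ← Complex.ofReal_sin]
    rw [show (z:ℂ)*((Real.sin α : ℝ):ℂ)*Complex.I = ((z*Real.sin α : ℝ):ℂ)*Complex.I by push_cast; ring,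
      Complex.exp_mul_I]
    simp only [← Complex.ofReal_cos, ← Complex.ofReal_sin]
  have v1 : h0 z (α+π/2) = (z:ℂ) * ((-Real.sin α : ℝ):ℂ) *
      (((Real.cos (z*Real.cos α) : ℝ):ℂ) + ((Real.sin (z*Real.cos α) : ℝ):ℂ)*Complex.I) := by
    unfold h0
    simp only [← Complex.ofReal_cos, ← Complex.ofReal_sin]
    rw [Real.cos_add_pi_div_two, Real.sin_add_pi_div_two]
    rw [show (z:ℂ)*((Real.cos α : ℝ):ℂ)*Complex.I = ((z*Real.cos α : ℝ):ℂ)*Complex.I by push_cast; ring,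
      Complex.exp_mul_I]
    simp only [← Complex.ofReal_cos, ← Complex.ofReal_sin]
  have v2 : h0 z (α+π/2+π/2) = (z:ℂ) * ((-Real.cos α : ℝ):ℂ) *
      (((Real.cos (z*(-Real.sin α)) : ℝ):ℂ) + ((Real.sin (z*(-Real.sin α)) : ℝ):ℂ)*Complex.I) := by
    unfold h0
    simp only [← Complex.ofReal_cos, ← Complex.ofReal_sin]
    rw [Real.cos_add_pi_div_two (α+π/2), Real.sin_add_pi_div_two α,
      Real.sin_add_pi_div_two (α+π/2), Real.cos_add_pi_div_two α]
    rw [show (z:ℂ)*((-Real.sin α : ℝ):ℂ)*Complex.I = ((z*(-Real.sin α) : ℝ):ℂ)*Complex.I by push_cast; ring,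
      Complex.exp_mul_I]
    simp only [← Complex.ofReal_cos, ← Complex.ofReal_sin]
  have v3 : h0 z (α+π/2+π/2+π/2) = (z:ℂ) * ((-(-Real.sin α) : ℝ):ℂ) *
      (((Real.cos (z*(-Real.cos α)) : ℝ):ℂ) + ((Real.sin (z*(-Real.cos α)) : ℝ):ℂ)*Complex.I) := by
    unfold h0
    simp only [← Complex.ofReal_cos, ← Complex.ofReal_sin]
    rw [Real.cos_add_pi_div_two (α+π/2+π/2), Real.sin_add_pi_div_two (α+π/2),
      Real.cos_add_pi_div_two α, Real.sin_add_pi_div_two (α+π/2+π/2),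
      Real.cos_add_pi_div_two (α+π/2), Real.sin_add_pi_div_two α]
    rw [show (z:ℂ)*((-Real.cos α : ℝ):ℂ)*Complex.I = ((z*(-Real.cos α) : ℝ):ℂ)*Complex.I by push_cast; ring,
      Complex.exp_mul_I]
    simp only [← Complex.ofReal_cos, ← Complex.ofReal_sin]
  rw [inv_mul_eq_iff_eq_mul₀ h32, hSdef, v0, v1, v2, v3]
  simp only [mul_neg, neg_neg, Real.cos_neg, Real.sin_neg]
  push_cast
  ring
end

section
/- For every real z: Σ_{k=1}^∞ k²·J_{4k}(z) = (z/64)·(z − sin z). -/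
open scoped Real

open Complex MeasureTheory Set intervalIntegral

namespace St8


noncomputable def f0 (z : ℝ) (θ : ℝ) : ℂ := Complex.exp ((z : ℂ) * I * Real.sin θ)
noncomputable def f1 (z : ℝ) (θ : ℝ) : ℂ := ((z : ℂ) * I * Real.cos θ) * f0 z θ
noncomputable def f2 (z : ℝ) (θ : ℝ) : ℂ :=
  (((z : ℂ) * I * Real.cos θ) ^ 2 - (z : ℂ) * I * Real.sin θ) * f0 z θ
noncomputable def f3 (z : ℝ) (θ : ℝ) : ℂ :=
  (((z : ℂ) * I * Real.cos θ) ^ 3 - 3 * ((z : ℂ) * I) ^ 2 * Real.cos θ * Real.sin θ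
    - (z : ℂ) * I * Real.cos θ) * f0 z θ
noncomputable def f4 (z : ℝ) (θ : ℝ) : ℂ :=
  (((z : ℂ) * I * Real.cos θ) ^ 4 - 6 * ((z : ℂ) * I) ^ 3 * (Real.cos θ : ℂ) ^ 2 * Real.sin θ
    - 4 * ((z : ℂ) * I * Real.cos θ) ^ 2 + 3 * ((z : ℂ) * I) ^ 2 * (Real.sin θ : ℂ) ^ 2
    + (z : ℂ) * I * Real.sin θ) * f0 z θ

variable (z : ℝ)

lemma hs (θ : ℝ) : HasDerivAt (fun t : ℝ => ((Real.sin t : ℂ))) (Real.cos θ) θ :=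
  (Real.hasDerivAt_sin θ).ofReal_comp

lemma hc (θ : ℝ) : HasDerivAt (fun t : ℝ => ((Real.cos t : ℂ))) (-Real.sin θ) θ := by
  simpa using (Real.hasDerivAt_cos θ).ofReal_comp

lemma hf0 (θ : ℝ) : HasDerivAt (f0 z) (f1 z θ) θ := by
  have h : HasDerivAt (fun t : ℝ => (z : ℂ) * I * (Real.sin t : ℂ)) ((z : ℂ) * I * Real.cos θ) θ :=
    (hs θ).const_mul _
  have h2 := h.cexp
  convert h2 using 1
  · rfl
  simp only [f0, f1]; ring

lemma hf1 (θ : ℝ) : HasDerivAt (f1 z) (f2 z θ) θ := by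
  have h := (((hc θ).const_mul ((z : ℂ) * I)).mul (hf0 z θ))
  convert h using 1
  · rfl
  · rfl
  simp only [f2, f1, f0]; push_cast; ring

lemma hf2 (θ : ℝ) : HasDerivAt (f2 z) (f3 z θ) θ := by
  have hb := (hc θ).const_mul ((z : ℂ) * I)
  have hq := hb.mul hb
  have hp := hq.sub ((hs θ).const_mul ((z : ℂ) * I))
  have h := hp.mul (hf0 z θ)
  convert h using 1
  · rfl
  · funext y; simp only [f2, f0, Pi.mul_apply, Pi.sub_apply, Pi.pow_apply, Pi.neg_apply, Pi.add_apply]; push_cast; ring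
  · simp only [f3, f1, f0, Pi.mul_apply, Pi.sub_apply, Pi.pow_apply, Pi.neg_apply, Pi.add_apply]; push_cast; ring

lemma hf3 (θ : ℝ) : HasDerivAt (f3 z) (f4 z θ) θ := by
  have hb := (hc θ).const_mul ((z : ℂ) * I)
  have hq := (hb.mul hb).mul hb
  have hr := ((hc θ).const_mul (3 * ((z : ℂ) * I) ^ 2)).mul (hs θ)
  have hp := (hq.sub hr).sub ((hc θ).const_mul ((z : ℂ) * I))
  have h := hp.mul (hf0 z θ)
  convert h using 1
  · rfl
  · funext y; simp only [f3, f0, Pi.mul_apply, Pi.sub_apply, Pi.pow_apply, Pi.neg_apply, Pi.add_apply]; push_cast; ring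
  · simp only [f4, f1, f0, Pi.mul_apply, Pi.sub_apply, Pi.pow_apply, Pi.neg_apply, Pi.add_apply]; push_cast; ring

lemma cont_f0 : Continuous (f0 z) := by unfold f0; fun_prop
lemma cont_f1 : Continuous (f1 z) := by unfold f1 f0; fun_prop
lemma cont_f2 : Continuous (f2 z) := by unfold f2 f0; fun_prop
lemma cont_f3 : Continuous (f3 z) := by unfold f3 f0; fun_prop
lemma cont_f4 : Continuous (f4 z) := by unfold f4 f0; fun_prop



lemma h2pi : (0:ℝ) < 2 * π := by positivity

lemma step {u v : ℝ → ℂ} (hu : ∀ x, HasDerivAt u (v x) x) (hv : Continuous v)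
    (hper : u (2 * π) = u 0) {n : ℤ} (hn : n ≠ 0) :
    fourierCoeffOn h2pi u n = 1 / (I * n) * fourierCoeffOn h2pi v n := by
  rw [fourierCoeffOn_of_hasDerivAt h2pi hn (fun x _ => hu x) (hv.intervalIntegrable _ _), hper]
  have h1 : ((0:ℝ) : AddCircle (2 * π - 0)) = 0 := by norm_cast
  rw [h1, fourier_eval_zero, sub_self, mul_zero, zero_sub]
  have hnC : (n : ℂ) ≠ 0 := Int.cast_ne_zero.mpr hn
  have hpi : (π : ℂ) ≠ 0 := ofReal_ne_zero.mpr Real.pi_ne_zero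
  push_cast
  field_simp
  ring

lemma besselJ_eq (z : ℝ) (n : ℤ) :
    besselJ n z = fourierCoeffOn h2pi (f0 z) n := by
  rw [fourierCoeffOn_eq_integral, besselJ, real_smul]
  congr 1
  · push_cast; norm_num
  · refine intervalIntegral.integral_congr fun x _ => ?_
    rw [fourier_coe_apply, smul_eq_mul, f0, ← Complex.exp_add]
    congr 1
    rw [← Complex.ofReal_sin]
    have hpi : (π : ℂ) ≠ 0 := ofReal_ne_zero.mpr Real.pi_ne_zero
    push_cast
    field_simp
    ring

lemma per_f0 (z : ℝ) : f0 z (2 * π) = f0 z 0 := by simp [f0]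
lemma per_f1 (z : ℝ) : f1 z (2 * π) = f1 z 0 := by simp [f1, f0]
lemma per_f2 (z : ℝ) : f2 z (2 * π) = f2 z 0 := by simp [f2, f0]
lemma per_f3 (z : ℝ) : f3 z (2 * π) = f3 z 0 := by simp [f3, f0]

lemma coeff_f2_eq (z : ℝ) {n : ℤ} (hn : n ≠ 0) :
    fourierCoeffOn h2pi (f2 z) n = -(n:ℂ)^2 * fourierCoeffOn h2pi (f0 z) n := by
  have e0 := step (hf0 z) (cont_f1 z) (per_f0 z) hn
  have e1 := step (hf1 z) (cont_f2 z) (per_f1 z) hn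
  have hnC : (n : ℂ) ≠ 0 := Int.cast_ne_zero.mpr hn
  rw [e0, e1]
  field_simp
  ring_nf
  simp [Complex.I_sq]

lemma coeff_f2_from_f4 (z : ℝ) {n : ℤ} (hn : n ≠ 0) :
    fourierCoeffOn h2pi (f2 z) n = -(1 / (n:ℂ)^2) * fourierCoeffOn h2pi (f4 z) n := by
  have e2 := step (hf2 z) (cont_f3 z) (per_f2 z) hn
  have e3 := step (hf3 z) (cont_f4 z) (per_f3 z) hn
  have hnC : (n : ℂ) ≠ 0 := Int.cast_ne_zero.mpr hn
  rw [e2, e3]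
  field_simp
  ring_nf
  simp [Complex.I_sq]

lemma mean_f2 (z : ℝ) : fourierCoeffOn h2pi (f2 z) 0 = 0 := by
  rw [fourierCoeffOn_eq_integral]
  simp only [neg_zero, fourier_zero, one_smul]
  rw [intervalIntegral.integral_eq_sub_of_hasDerivAt (fun x _ => hf1 z x)
    ((cont_f2 z).intervalIntegrable _ _), per_f1]
  simp

lemma coeff_bound (u : ℝ → ℂ) (n : ℤ) :
    ‖fourierCoeffOn h2pi u n‖ ≤ (1 / (2 * π)) * ∫ x in (0:ℝ)..(2*π), ‖u x‖ := by
  rw [fourierCoeffOn_eq_integral, norm_smul]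
  have h1 : ‖(1 / (2 * π - 0) : ℝ)‖ = 1 / (2 * π) := by
    have h0 : (1 / (2 * π - 0) : ℝ) = 1 / (2 * π) := by norm_num
    rw [h0, Real.norm_eq_abs, abs_of_pos (by positivity)]
  rw [h1]
  gcongr
  calc ‖∫ x in (0:ℝ)..(2*π), fourier (-n) (x : AddCircle (2 * π - 0)) • u x‖
      ≤ ∫ x in (0:ℝ)..(2*π), ‖fourier (-n) (x : AddCircle (2 * π - 0)) • u x‖ :=
        intervalIntegral.norm_integral_le_integral_norm h2pi.le
    _ = ∫ x in (0:ℝ)..(2*π), ‖u x‖ := by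
        refine intervalIntegral.integral_congr fun x _ => ?_
        rw [norm_smul]
        have : ‖(fourier (-n) (x : AddCircle (2 * π - 0)) : ℂ)‖ = 1 := by
          rw [fourier_coe_apply]
          have h3 : 2 * (π:ℂ) * I * ((-n : ℤ) : ℂ) * (x:ℂ) / ((2 * π - 0 : ℝ) : ℂ)
              = ((2 * π * (-(n:ℝ)) * x / (2 * π - 0) : ℝ) : ℂ) * I := by
            push_cast; ring
          rw [h3]
          exact Complex.norm_exp_ofReal_mul_I _
        rw [this, one_mul]


instance factpi : Fact ((0:ℝ) < 2 * π) := ⟨h2pi⟩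

noncomputable def G (z : ℝ) : AddCircle (2 * π) → ℂ :=
  AddCircle.liftIco (2 * π) 0 (fun θ => -(f2 z θ))

lemma fourier_val (n : ℤ) (x : ℝ) :
    (fourier n ((x:ℝ) : AddCircle (2*π)) : ℂ) = Complex.exp ((n:ℂ) * x * I) := by
  have hpi : (π:ℂ) ≠ 0 := ofReal_ne_zero.mpr Real.pi_ne_zero
  rw [fourier_coe_apply]
  congr 1
  push_cast
  field_simp

lemma fourier_val2 (n : ℤ) (x : ℝ) :
    (fourier n ((x:ℝ) : AddCircle (2*π - 0)) : ℂ) = Complex.exp ((n:ℂ) * x * I) := by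
  have hpi : (π:ℂ) ≠ 0 := ofReal_ne_zero.mpr Real.pi_ne_zero
  rw [fourier_coe_apply]
  congr 1
  push_cast
  field_simp
  ring

lemma G_apply (z : ℝ) (x : ℝ) (hx : x ∈ Set.Icc (0:ℝ) (2*π)) : G z ↑x = -(f2 z x) := by
  rcases eq_or_lt_of_le hx.2 with heq | hlt
  · rw [heq]
    have h0 : ((2*π : ℝ) : AddCircle (2*π)) = ((0:ℝ) : AddCircle (2*π)) := by
      rw [AddCircle.coe_period]; norm_cast
    rw [h0, G, AddCircle.liftIco_coe_apply (⟨le_refl 0, by rw [zero_add]; exact h2pi⟩ :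
      (0:ℝ) ∈ Set.Ico (0:ℝ) (0 + 2*π))]
    rw [per_f2]
  · exact AddCircle.liftIco_coe_apply ⟨hx.1, by rw [zero_add]; exact hlt⟩

lemma coeffOn_std (u : ℝ → ℂ) (n : ℤ) :
    fourierCoeffOn h2pi u n
      = (1/(2*(π:ℂ))) * ∫ x in (0:ℝ)..(2*π), Complex.exp (-(n:ℂ) * x * I) * u x := by
  rw [fourierCoeffOn_eq_integral, real_smul]
  congr 1
  · push_cast; norm_num
  · refine intervalIntegral.integral_congr fun x _ => ?_
    rw [smul_eq_mul]
    congr 1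
    rw [fourier_val2 (-n) x]
    congr 1; push_cast; ring

lemma coeffG_std (z : ℝ) (n : ℤ) :
    fourierCoeff (G z) n
      = (1/(2*(π:ℂ))) * ∫ x in (0:ℝ)..(2*π), Complex.exp (-(n:ℂ) * x * I) * (-(f2 z x)) := by
  rw [fourierCoeff_eq_intervalIntegral (G z) n 0]
  simp only [zero_add]
  rw [real_smul]
  congr 1
  · push_cast; norm_num
  · refine intervalIntegral.integral_congr fun x hx => ?_
    rw [smul_eq_mul, G_apply z x (by rwa [Set.uIcc_of_le h2pi.le] at hx)]
    congr 1
    rw [fourier_val (-n) x]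
    congr 1; push_cast; ring

lemma coeffG (z : ℝ) (n : ℤ) :
    fourierCoeff (G z) n = -fourierCoeffOn h2pi (f2 z) n := by
  rw [coeffG_std, coeffOn_std]
  simp [mul_neg, intervalIntegral.integral_neg]

lemma contG (z : ℝ) : Continuous (G z) := by
  apply AddCircle.liftIco_zero_continuous
  · show -(f2 z 0) = -(f2 z (2 * π)); rw [per_f2]
  · exact ((cont_f2 z).neg).continuousOn

lemma summable_coeffG (z : ℝ) : Summable (fun n : ℤ => fourierCoeff (G z) n) := by
  set M : ℝ := (1 / (2 * π)) * ∫ x in (0:ℝ)..(2*π), ‖f4 z x‖ with hM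
  apply Summable.of_norm_bounded_eventually (g := fun n : ℤ => M * (1 / (n:ℝ)^2))
  · exact (Real.summable_one_div_int_pow.mpr one_lt_two).mul_left M
  · rw [Filter.eventually_cofinite]
    apply Set.Finite.subset (Set.finite_singleton (0:ℤ))
    intro n hn
    simp only [Set.mem_setOf_eq, not_le] at hn
    by_contra hn0
    simp only [Set.mem_singleton_iff] at hn0
    apply absurd hn
    push_neg
    rw [coeffG, coeff_f2_from_f4 z hn0, norm_neg, norm_mul, norm_neg]
    have h1 : ‖(1 / (n:ℂ)^2)‖ = 1 / (n:ℝ)^2 := by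
      rw [norm_div, norm_one, norm_pow]
      simp
    rw [h1, mul_comm M]
    exact mul_le_mul_of_nonneg_left (coeff_bound (f4 z) n) (by positivity)

lemma geom_aux (u : ℂ) (h4 : u * u * (u * u) = 1) (hne : u ≠ 1) :
    1 + u + u * u + u * u * u = 0 := by
  have hgeo : (1 + u + u * u + u * u * u) * (u - 1) = u * u * (u * u) - 1 := by ring
  rw [h4, sub_self] at hgeo
  rcases mul_eq_zero.mp hgeo with h5 | h5
  · exact h5
  · exact absurd (sub_eq_zero.mp h5) hne

lemma weight (n : ℤ) :
    (fourier n (((0:ℝ)) : AddCircle (2*π)) + fourier n (((π/2:ℝ)) : AddCircle (2*π))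
      + fourier n (((π:ℝ)) : AddCircle (2*π)) + fourier n (((3*π/2:ℝ)) : AddCircle (2*π)) : ℂ)
    = if (4:ℤ) ∣ n then 4 else 0 := by
  have hpi : (π:ℂ) ≠ 0 := ofReal_ne_zero.mpr Real.pi_ne_zero
  rw [fourier_val n 0, fourier_val n (π/2), fourier_val n π, fourier_val n (3*π/2)]
  rw [show ((n:ℂ) * ((0:ℝ):ℂ) * I) = 0 by push_cast; ring, Complex.exp_zero]
  by_cases h : (4:ℤ) ∣ n
  · obtain ⟨m, rfl⟩ := h
    rw [if_pos ⟨m, rfl⟩]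
    rw [show (((4 * m : ℤ):ℂ) * ((π/2:ℝ):ℂ) * I) = (m:ℂ) * (2 * π * I) by push_cast; ring,
      show (((4 * m : ℤ):ℂ) * ((π:ℝ):ℂ) * I) = ((2*m : ℤ):ℂ) * (2 * π * I) by push_cast; ring,
      show (((4 * m : ℤ):ℂ) * ((3*π/2:ℝ):ℂ) * I) = ((3*m : ℤ):ℂ) * (2 * π * I) by push_cast; ring,
      Complex.exp_int_mul_two_pi_mul_I, Complex.exp_int_mul_two_pi_mul_I,
      Complex.exp_int_mul_two_pi_mul_I]
    norm_num
  · rw [if_neg h]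
    have hB : Complex.exp ((n:ℂ) * ((π:ℝ):ℂ) * I)
        = Complex.exp ((n:ℂ) * ((π/2:ℝ):ℂ) * I) * Complex.exp ((n:ℂ) * ((π/2:ℝ):ℂ) * I) := by
      rw [← Complex.exp_add]; congr 1; push_cast; ring
    have hC : Complex.exp ((n:ℂ) * ((3*π/2:ℝ):ℂ) * I)
        = Complex.exp ((n:ℂ) * ((π/2:ℝ):ℂ) * I) * Complex.exp ((n:ℂ) * ((π/2:ℝ):ℂ) * I)
          * Complex.exp ((n:ℂ) * ((π/2:ℝ):ℂ) * I) := by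
      rw [← Complex.exp_add, ← Complex.exp_add]; congr 1; push_cast; ring
    rw [hB, hC]
    apply geom_aux
    · rw [← Complex.exp_add, ← Complex.exp_add]
      rw [show ((n:ℂ) * ((π/2:ℝ):ℂ) * I + (n:ℂ) * ((π/2:ℝ):ℂ) * I
          + ((n:ℂ) * ((π/2:ℝ):ℂ) * I + (n:ℂ) * ((π/2:ℝ):ℂ) * I)) = (n:ℂ) * (2 * π * I) by
        push_cast; ring]
      exact Complex.exp_int_mul_two_pi_mul_I n
    · intro hu1
      rw [Complex.exp_eq_one_iff] at hu1
      obtain ⟨k, hk⟩ := hu1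
      apply h
      refine ⟨k, ?_⟩
      have h7 : (n:ℂ) * ((π:ℂ) * I) = (4 * k) * ((π:ℂ) * I) := by
        push_cast at hk ⊢
        linear_combination 2 * hk
      have h6 : (n:ℂ) = 4 * k :=
        mul_right_cancel₀ (mul_ne_zero hpi Complex.I_ne_zero) h7
      exact_mod_cast h6


lemma besselJ_symm (z : ℝ) (m : ℤ) (hm : (4:ℤ) ∣ m) : besselJ (-m) z = besselJ m z := by
  obtain ⟨j, rfl⟩ := hm
  unfold besselJ
  congr 1
  set ψ : ℝ → ℂ := fun θ => Complex.exp ((z:ℂ) * Complex.sin (θ:ℂ) * I - ((-(4*j) : ℤ):ℂ) * θ * I)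
    with hψ
  have hper : Function.Periodic ψ (2*π) := by
    intro θ
    simp only [hψ]
    rw [← mul_one (Complex.exp ((z:ℂ) * Complex.sin (θ:ℂ) * I - ((-(4*j) : ℤ):ℂ) * θ * I)),
      ← Complex.exp_int_mul_two_pi_mul_I (4*j), ← Complex.exp_add]
    congr 1
    push_cast
    rw [Complex.sin_add_two_pi]
    ring
  have h1 : (∫ θ in (0:ℝ)..(2*π), ψ θ) = ∫ θ in (-π:ℝ)..(π:ℝ), ψ θ := by
    have h := hper.intervalIntegral_add_eq 0 (-π)
    rw [zero_add, show (-π + 2*π : ℝ) = π by ring] at h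
    exact h
  have h2 : (∫ θ in (-π:ℝ)..(π:ℝ), ψ θ) = ∫ θ in (0:ℝ)..(2*π), ψ (π - θ) := by
    have h := intervalIntegral.integral_comp_sub_left (a := (0:ℝ)) (b := 2*π) ψ π
    rw [show (π - 2*π : ℝ) = -π by ring, show (π - 0 : ℝ) = π by ring] at h
    exact h.symm
  have h3 : ∀ θ : ℝ, ψ (π - θ)
      = Complex.exp ((z:ℂ) * Complex.sin (θ:ℂ) * I - ((4*j : ℤ):ℂ) * θ * I) := by
    intro θ
    simp only [hψ]
    rw [← mul_one (Complex.exp ((z:ℂ) * Complex.sin (θ:ℂ) * I - ((4*j : ℤ):ℂ) * θ * I)),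
      ← Complex.exp_int_mul_two_pi_mul_I (2*j), ← Complex.exp_add]
    congr 1
    push_cast
    rw [Complex.sin_pi_sub]
    ring
  rw [show (∫ θ in (0:ℝ)..(2*π), Complex.exp ((z:ℂ) * Complex.sin (θ:ℂ) * I
      - ((-(4*j) : ℤ):ℂ) * θ * I)) = ∫ θ in (0:ℝ)..(2*π), ψ θ from rfl, h1, h2]
  exact intervalIntegral.integral_congr fun θ _ => h3 θ

lemma Gval0 (z : ℝ) : G z (((0:ℝ)) : AddCircle (2*π)) = (z:ℂ)^2 := by
  rw [G_apply z 0 ⟨le_refl 0, h2pi.le⟩]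
  simp [f2, f0]
  rw [mul_pow, Complex.I_sq]
  ring

lemma Gval1 (z : ℝ) : G z (((π/2:ℝ)) : AddCircle (2*π))
    = (z:ℂ) * I * Complex.exp ((z:ℂ) * I) := by
  have hx : (π/2:ℝ) ∈ Set.Icc (0:ℝ) (2*π) := by
    constructor <;> nlinarith [Real.pi_pos]
  rw [G_apply z _ hx]
  simp [f2, f0]

lemma Gval2 (z : ℝ) : G z (((π:ℝ)) : AddCircle (2*π)) = (z:ℂ)^2 := by
  have hx : (π:ℝ) ∈ Set.Icc (0:ℝ) (2*π) := by
    constructor <;> nlinarith [Real.pi_pos]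
  rw [G_apply z _ hx]
  simp [f2, f0]
  rw [mul_pow, Complex.I_sq]
  ring

lemma Gval3 (z : ℝ) : G z (((3*π/2:ℝ)) : AddCircle (2*π))
    = -((z:ℂ) * I * Complex.exp (-((z:ℂ) * I))) := by
  have hx : (3*π/2:ℝ) ∈ Set.Icc (0:ℝ) (2*π) := by
    constructor <;> nlinarith [Real.pi_pos]
  rw [G_apply z _ hx]
  have hco : Real.cos (3*π/2) = 0 := by
    rw [show (3*π/2:ℝ) = π + π/2 by ring, Real.cos_add]
    simp
  have hsi : Real.sin (3*π/2) = -1 := by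
    rw [show (3*π/2:ℝ) = π + π/2 by ring, Real.sin_add]
    simp
  simp [f2, f0, hco, hsi]

lemma cval (z : ℝ) {m : ℤ} (hm : m ≠ 0) :
    fourierCoeff (G z) m = (m:ℂ)^2 * besselJ m z := by
  rw [coeffG, coeff_f2_eq z hm, besselJ_eq]
  ring

lemma c0val (z : ℝ) : fourierCoeff (G z) 0 = 0 := by
  rw [coeffG, mean_f2, neg_zero]

theorem main (z : ℝ) :
    (∑' k : ℕ, ((k : ℂ) + 1) ^ 2 * besselJ (4 * (k + 1)) z) =
      ((z : ℂ) / 64) * ((z - Real.sin z : ℝ) : ℂ) := by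
  classical
  set c : ℤ → ℂ := fun n => fourierCoeff (G z) n with hc
  let GC : C(AddCircle (2*π), ℂ) := ⟨G z, contG z⟩
  have hsummable : Summable (fourierCoeff (⇑GC)) := summable_coeffG z
  have H : ∀ x : AddCircle (2*π),
      HasSum (fun i : ℤ => fourierCoeff (⇑GC) i • fourier i x) (GC x) :=
    fun x => has_pointwise_sum_fourier_series_of_summable hsummable x
  have H4 := ((H (((0:ℝ)) : AddCircle (2*π))).add (H (((π/2:ℝ)) : AddCircle (2*π)))).add
    ((H (((π:ℝ)) : AddCircle (2*π))).add (H (((3*π/2:ℝ)) : AddCircle (2*π))))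
  set S : ℂ := ((z:ℂ)^2 + (z:ℂ) * I * Complex.exp ((z:ℂ) * I))
      + ((z:ℂ)^2 + -((z:ℂ) * I * Complex.exp (-((z:ℂ) * I)))) with hS
  have hGCval : (GC (((0:ℝ)) : AddCircle (2*π)) + GC (((π/2:ℝ)) : AddCircle (2*π)))
      + (GC (((π:ℝ)) : AddCircle (2*π)) + GC (((3*π/2:ℝ)) : AddCircle (2*π))) = S := by
    show (G z _ + G z _) + (G z _ + G z _) = S
    rw [Gval0, Gval1, Gval2, Gval3, hS]
  rw [hGCval] at H4
  have heq : (fun n : ℤ => (fourierCoeff (⇑GC) n • fourier n (((0:ℝ)) : AddCircle (2*π))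
        + fourierCoeff (⇑GC) n • fourier n (((π/2:ℝ)) : AddCircle (2*π)))
      + (fourierCoeff (⇑GC) n • fourier n (((π:ℝ)) : AddCircle (2*π))
        + fourierCoeff (⇑GC) n • fourier n (((3*π/2:ℝ)) : AddCircle (2*π))))
      = fun n : ℤ => c n * (if (4:ℤ) ∣ n then (4:ℂ) else 0) := by
    funext n
    rw [← weight n]
    show c n * _ + c n * _ + (c n * _ + c n * _) = _
    ring
  rw [heq] at H4
  have hQ := H4.nat_add_neg
  have hf0 : c 0 * (if (4:ℤ) ∣ (0:ℤ) then (4:ℂ) else 0) = 0 := by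
    rw [hc]; simp [c0val z]
  rw [hf0, add_zero] at hQ
  have hinj : Function.Injective (fun k : ℕ => 4*(k+1)) := by
    intro a b hab; simpa using hab
  have hvan : ∀ n : ℕ, n ∉ Set.range (fun k : ℕ => 4*(k+1)) →
      (c (n:ℤ) * (if (4:ℤ) ∣ (n:ℤ) then (4:ℂ) else 0)
        + c (-(n:ℤ)) * (if (4:ℤ) ∣ (-(n:ℤ)) then (4:ℂ) else 0)) = 0 := by
    intro n hn
    by_cases h4 : (4:ℤ) ∣ (n:ℤ)
    · obtain ⟨j, hj⟩ : ∃ j : ℕ, n = 4*j := by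
        obtain ⟨j, hj⟩ := h4
        exact ⟨j.toNat, by omega⟩
      have hj0 : j = 0 := by
        by_contra hj0
        exact hn ⟨j - 1, show 4 * ((j-1) + 1) = n by omega⟩
      subst hj0
      rw [Nat.mul_zero] at hj
      subst hj
      simp [hc, c0val z]
    · rw [if_neg h4, if_neg (fun hdvd => h4 ((dvd_neg).mp hdvd))]
      ring
  have hfin := (Function.Injective.hasSum_iff hinj hvan).mpr hQ
  have hcomp : ((fun n : ℕ => c (n:ℤ) * (if (4:ℤ) ∣ (n:ℤ) then (4:ℂ) else 0)
      + c (-(n:ℤ)) * (if (4:ℤ) ∣ (-(n:ℤ)) then (4:ℂ) else 0)) ∘ (fun k : ℕ => 4*(k+1)))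
      = fun k : ℕ => 128 * (((k:ℂ) + 1)^2 * besselJ (4*((k:ℤ)+1)) z) := by
    funext k
    have hN0 : (4*((k:ℤ)+1)) ≠ 0 := by positivity
    have hdvd : (4:ℤ) ∣ 4*((k:ℤ)+1) := ⟨(k:ℤ)+1, rfl⟩
    have hNcast : (((4*(k+1) : ℕ)) : ℤ) = 4*((k:ℤ)+1) := by push_cast; ring
    simp only [Function.comp_apply, hNcast, hc]
    rw [if_pos hdvd, if_pos ((dvd_neg).mpr hdvd)]
    rw [cval z hN0, cval z (neg_ne_zero.mpr hN0), besselJ_symm z _ hdvd]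
    push_cast
    ring
  rw [hcomp] at hfin
  have hx := hfin.div_const 128
  have hxx : (fun k : ℕ => 128 * (((k:ℂ) + 1)^2 * besselJ (4*((k:ℤ)+1)) z) / 128)
      = fun k : ℕ => ((k:ℂ) + 1)^2 * besselJ (4*((k:ℤ)+1)) z := by
    funext k
    field_simp
  rw [hxx] at hx
  rw [hx.tsum_eq, hS]
  have hI : (I:ℂ)^2 = -1 := Complex.I_sq
  have hsin : Complex.exp ((z:ℂ)*I) - Complex.exp (-((z:ℂ)*I)) = 2*I*Complex.sin (z:ℂ) := by
    rw [Complex.sin]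
    rw [show (-(z:ℂ)*I) = -((z:ℂ)*I) by ring]
    linear_combination (Complex.exp ((z:ℂ)*I) - Complex.exp (-((z:ℂ)*I))) * hI
  push_cast [Complex.ofReal_sin]
  linear_combination ((z:ℂ)*I/128) * hsin + ((z:ℂ)*Complex.sin (z:ℂ)/64) * hI

end St8

theorem statement8 (z : ℝ) :
    (∑' k : ℕ, ((k : ℂ) + 1) ^ 2 * besselJ (4 * (k + 1)) z) =
      ((z : ℂ) / 64) * ((z - Real.sin z : ℝ) : ℂ) := St8.main z
end

section
/- For every nonnegative integer n, real z and real α: J_0(z) + 2·Σ_{k=1}^∞ (-1)^k J_{(4n+2)k}(z)·cos((4n+2)kα) = (1/(2n+1))·Σ_{ℓ=0}^{2n} cos(z·cos(α + 2πℓ/(2n+1))). -/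
open scoped Real

namespace Statement9Aux

open Complex MeasureTheory intervalIntegral Finset Filter Function Set

noncomputable def G (z : ℝ) (θ : ℝ) : ℂ := Complex.exp ((z * Real.sin θ : ℝ) * Complex.I)
noncomputable def G1 (z : ℝ) (θ : ℝ) : ℂ := G z θ * ((z * Real.cos θ : ℝ) * Complex.I)
noncomputable def G2 (z : ℝ) (θ : ℝ) : ℂ :=
  G1 z θ * ((z * Real.cos θ : ℝ) * Complex.I) + G z θ * ((z * -Real.sin θ : ℝ) * Complex.I)

lemma contG (z : ℝ) : Continuous (G z) := by
  unfold G; fun_prop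

lemma contG1 (z : ℝ) : Continuous (G1 z) := by
  unfold G1 G; fun_prop

lemma contG2 (z : ℝ) : Continuous (G2 z) := by
  unfold G2 G1 G; fun_prop

lemma hasDerivG (z : ℝ) (θ : ℝ) : HasDerivAt (G z) (G1 z θ) θ := by
  have hu : HasDerivAt (fun θ : ℝ => ((z * Real.sin θ : ℝ) : ℂ) * Complex.I)
      (((z * Real.cos θ : ℝ) : ℂ) * Complex.I) θ :=
    (((Real.hasDerivAt_sin θ).const_mul z).ofReal_comp).mul_const Complex.I
  exact hu.cexp

lemma hasDerivG1 (z : ℝ) (θ : ℝ) : HasDerivAt (G1 z) (G2 z θ) θ := by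
  have hv : HasDerivAt (fun θ : ℝ => ((z * Real.cos θ : ℝ) : ℂ) * Complex.I)
      (((z * -Real.sin θ : ℝ) : ℂ) * Complex.I) θ :=
    (((Real.hasDerivAt_cos θ).const_mul z).ofReal_comp).mul_const Complex.I
  exact (hasDerivG z θ).mul hv

lemma normG (z : ℝ) (θ : ℝ) : ‖G z θ‖ = 1 := by
  unfold G
  rw [Complex.norm_exp_ofReal_mul_I]

lemma normG2 (z : ℝ) (θ : ℝ) : ‖G2 z θ‖ ≤ z ^ 2 + |z| := by
  have h1 : ‖G1 z θ * ((z * Real.cos θ : ℝ) * Complex.I)‖ ≤ z ^ 2 := by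
    rw [norm_mul, G1, norm_mul]
    have hc : ‖((z * Real.cos θ : ℝ) : ℂ) * Complex.I‖ ≤ |z| := by
      rw [norm_mul, Complex.norm_I, mul_one, Complex.norm_real, Real.norm_eq_abs, abs_mul]
      nlinarith [abs_nonneg z, Real.abs_cos_le_one θ, abs_nonneg (Real.cos θ)]
    calc ‖G z θ‖ * ‖((z * Real.cos θ : ℝ) : ℂ) * Complex.I‖ *
          ‖((z * Real.cos θ : ℝ) : ℂ) * Complex.I‖ ≤ 1 * |z| * |z| := by
          exact mul_le_mul (mul_le_mul (le_of_eq (normG z θ)) hc (norm_nonneg _) one_pos.le)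
            hc (norm_nonneg _) (by positivity)
      _ = z ^ 2 := by rw [one_mul, ← abs_mul, ← sq, _root_.abs_of_nonneg (sq_nonneg z)]
  have h2 : ‖G z θ * ((z * -Real.sin θ : ℝ) * Complex.I)‖ ≤ |z| := by
    rw [norm_mul, normG, one_mul, norm_mul, Complex.norm_I, mul_one,
      Complex.norm_real, Real.norm_eq_abs, abs_mul, abs_neg]
    nlinarith [abs_nonneg z, Real.abs_sin_le_one θ, abs_nonneg (Real.sin θ)]
  calc ‖G2 z θ‖ ≤ _ + _ := norm_add_le _ _
    _ ≤ z ^ 2 + |z| := add_le_add h1 h2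

instance fact2pi : Fact ((0:ℝ) < 2 * π) := ⟨Real.two_pi_pos⟩

lemma pi_ne : ((π : ℝ) : ℂ) ≠ 0 := Complex.ofReal_ne_zero.mpr Real.pi_ne_zero

lemma fourierCoeffOn_eq (f : ℝ → ℂ) (m : ℤ) :
    fourierCoeffOn Real.two_pi_pos f m =
      (1 / (2 * π) : ℝ) • ∫ x in (0:ℝ)..(2*π), Complex.exp (-(m:ℂ) * x * Complex.I) * f x := by
  rw [fourierCoeffOn_eq_integral]
  congr 1
  · norm_num
  refine intervalIntegral.integral_congr fun x hx => ?_
  rw [fourier_coe_apply, smul_eq_mul]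
  congr 2
  field_simp [pi_ne]
  push_cast; ring

lemma besselJ_eq (z : ℝ) (m : ℤ) :
    besselJ m z = fourierCoeffOn Real.two_pi_pos (G z) m := by
  rw [fourierCoeffOn_eq, besselJ, Complex.real_smul]
  congr 1
  · push_cast; norm_num
  refine intervalIntegral.integral_congr fun x hx => ?_
  unfold G
  rw [← Complex.exp_add]
  congr 1
  push_cast
  ring

lemma fourierCoeffOn_norm_le (f : ℝ → ℂ) (C : ℝ) (hC : ∀ x, ‖f x‖ ≤ C) (m : ℤ) :
    ‖fourierCoeffOn Real.two_pi_pos f m‖ ≤ C := by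
  have hC0 : 0 ≤ C := le_trans (norm_nonneg _) (hC 0)
  rw [fourierCoeffOn_eq_integral, norm_smul]
  have hb : ‖∫ x in (0:ℝ)..(2*π), fourier (-m) (x : AddCircle (2*π-0)) • f x‖
      ≤ C * |2*π - 0| := by
    apply intervalIntegral.norm_integral_le_of_norm_le_const
    intro x _
    rw [norm_smul]
    have h1 : ‖(fourier (-m) (x : AddCircle (2*π-0)) : ℂ)‖ = 1 := by
      rw [fourier_apply, Circle.norm_coe]
    rw [h1, one_mul]; exact hC x
  have hπ := Real.pi_pos
  have hn1 : ‖(1/(2*π-0) : ℝ)‖ = 1/(2*π) := by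
    rw [Real.norm_eq_abs, sub_zero]
    exact abs_of_pos (by positivity)
  rw [hn1]
  calc 1/(2*π) * ‖∫ x in (0:ℝ)..(2*π), fourier (-m) (x : AddCircle (2*π-0)) • f x‖
      ≤ 1/(2*π) * (C * |2*π - 0|) := by
        exact mul_le_mul_of_nonneg_left hb (by positivity)
    _ = C := by
        rw [sub_zero, abs_of_pos (by positivity)]
        field_simp

lemma fourierCoeffOn_step (f f' : ℝ → ℂ) (hder : ∀ x, HasDerivAt f (f' x) x)
    (hcont : Continuous f') (hper : f (2*π) = f 0) {m : ℤ} (hm : m ≠ 0) :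
    fourierCoeffOn Real.two_pi_pos f m
      = (Complex.I * m)⁻¹ * fourierCoeffOn Real.two_pi_pos f' m := by
  rw [fourierCoeffOn_of_hasDerivAt Real.two_pi_pos hm (fun x _ => hder x)
    (hcont.intervalIntegrable _ _), hper, sub_self, mul_zero, zero_sub]
  have hm' : (m:ℂ) ≠ 0 := Int.cast_ne_zero.mpr hm
  generalize fourierCoeffOn Real.two_pi_pos f' m = X
  push_cast
  field_simp [pi_ne]
  ring

lemma decay (z : ℝ) {m : ℤ} (hm : m ≠ 0) :
    ‖fourierCoeffOn Real.two_pi_pos (G z) m‖ ≤ (z^2 + |z|) / (m:ℝ)^2 := by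
  have hGper : G z (2*π) = G z 0 := by unfold G; simp
  have hG1per : G1 z (2*π) = G1 z 0 := by unfold G1 G; simp
  rw [fourierCoeffOn_step (G z) (G1 z) (hasDerivG z) (contG1 z) hGper hm,
      fourierCoeffOn_step (G1 z) (G2 z) (hasDerivG1 z) (contG2 z) hG1per hm]
  rw [norm_mul, norm_mul]
  have hni : ‖((Complex.I * m)⁻¹ : ℂ)‖ = (|(m:ℝ)|)⁻¹ := by
    rw [norm_inv, norm_mul, Complex.norm_I, one_mul, Complex.norm_intCast]
  rw [hni]
  have habs : (0:ℝ) < |(m:ℝ)| := by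
    simp only [abs_pos, ne_eq, Int.cast_eq_zero]; exact hm
  have h2 := fourierCoeffOn_norm_le (G2 z) (z^2 + |z|) (normG2 z) m
  calc |(m:ℝ)|⁻¹ * (|(m:ℝ)|⁻¹ * ‖fourierCoeffOn Real.two_pi_pos (G2 z) m‖)
      ≤ |(m:ℝ)|⁻¹ * (|(m:ℝ)|⁻¹ * (z^2 + |z|)) := by gcongr
    _ = (z^2 + |z|) / (m:ℝ)^2 := by
        have hsq : ((m:ℝ))^2 = |(m:ℝ)|^2 := (_root_.sq_abs _).symm
        rw [hsq, sq]
        field_simp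

lemma Gper (z : ℝ) : Function.Periodic (G z) (2*π) := by
  intro θ; unfold G; rw [Real.sin_add_two_pi]

noncomputable def F (z : ℝ) : C(AddCircle (2*π), ℂ) :=
  ⟨(Gper z).lift, (contG z).quotient_liftOn' _⟩

lemma F_coe (z θ : ℝ) : F z ((θ : ℝ) : AddCircle (2*π)) = G z θ :=
  (Gper z).lift_coe θ

lemma fourierCoeff_F (z : ℝ) (m : ℤ) :
    fourierCoeff (⇑(F z)) m = fourierCoeffOn Real.two_pi_pos (G z) m := by
  rw [fourierCoeff_eq_intervalIntegral _ _ 0, fourierCoeffOn_eq_integral]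
  simp only [zero_add, sub_zero]
  congr 1
  refine intervalIntegral.integral_congr fun x hx => ?_
  rw [F_coe, fourier_coe_apply, fourier_coe_apply, smul_eq_mul, smul_eq_mul]
  norm_num

lemma summable_fc (z : ℝ) : Summable (fun m : ℤ => fourierCoeff (⇑(F z)) m) := by
  apply Summable.of_norm_bounded_eventually (g := fun m : ℤ => (z^2+|z|) * (1/((m:ℝ))^(2:ℕ)))
    ((Real.summable_one_div_int_pow.mpr one_lt_two).mul_left _)
  rw [Filter.eventually_cofinite]
  apply Set.Finite.subset (Set.finite_singleton 0)
  intro m hm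
  simp only [Set.mem_setOf_eq] at hm
  by_contra h0
  have hm0 : m ≠ 0 := by simpa using h0
  exact hm (by rw [fourierCoeff_F]; simpa [mul_one_div, div_eq_mul_inv] using decay z hm0)

lemma hasSum_G (z θ : ℝ) :
    HasSum (fun m : ℤ => besselJ m z * Complex.exp (m * θ * Complex.I)) (G z θ) := by
  have h := has_pointwise_sum_fourier_series_of_summable (summable_fc z)
    ((θ : ℝ) : AddCircle (2*π))
  have hfun : (fun i : ℤ => fourierCoeff (⇑(F z)) i • fourier i ((θ:ℝ) : AddCircle (2*π)))
      = fun m : ℤ => besselJ m z * Complex.exp (m * θ * Complex.I) := by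
    funext m
    rw [fourierCoeff_F, ← besselJ_eq, smul_eq_mul, fourier_coe_apply]
    congr 2
    field_simp [pi_ne]
    push_cast; ring
  rw [hfun, F_coe] at h
  exact h


lemma exp_add_exp_neg (w : ℂ) :
    Complex.exp (w * Complex.I) + Complex.exp (-w * Complex.I) = 2 * Complex.cos w := by
  rw [Complex.exp_mul_I, Complex.exp_mul_I, Complex.cos_neg, Complex.sin_neg]
  ring

lemma besselJ_neg_even (j : ℤ) (w : ℂ) : besselJ (-(2*j)) w = besselJ (2*j) w := by
  have gper : Function.Periodic
      (fun θ : ℝ => Complex.exp (w * Complex.sin θ * Complex.I - ((2*j:ℤ):ℂ) * θ * Complex.I))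
      (2*π) := by
    intro θ
    rw [Complex.exp_eq_exp_iff_exists_int]
    exact ⟨-2*j, by push_cast [Complex.sin_add_two_pi]; ring⟩
  unfold besselJ
  congr 1
  have h1 : ∀ θ : ℝ, θ ∈ Set.uIcc (0:ℝ) (2*π) →
      Complex.exp (w * Complex.sin θ * Complex.I - ((-(2*j):ℤ):ℂ) * θ * Complex.I)
      = (fun t : ℝ => Complex.exp (w * Complex.sin t * Complex.I
          - ((2*j:ℤ):ℂ) * t * Complex.I)) (π - θ) := by
    intro θ _
    simp only
    rw [Complex.exp_eq_exp_iff_exists_int]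
    exact ⟨j, by push_cast [Complex.sin_pi_sub]; ring⟩
  rw [intervalIntegral.integral_congr h1,
    intervalIntegral.integral_comp_sub_left (a := 0) (b := 2*π)
      (fun t : ℝ => Complex.exp (w * Complex.sin t * Complex.I - ((2*j:ℤ):ℂ) * t * Complex.I)) π]
  have h2 := gper.intervalIntegral_add_eq (π - 2*π) 0
  simp only [zero_add] at h2
  rw [show π - (0:ℝ) = (π - 2*π) + 2*π by ring]
  exact h2

lemma geom (N : ℕ) (hN : 0 < N) (i : ℤ) :
    ∑ ℓ ∈ Finset.range N, Complex.exp ((i:ℂ) * ((2*π*ℓ/N : ℝ):ℂ) * Complex.I)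
      = if (N:ℤ) ∣ i then (N:ℂ) else 0 := by
  have hNR : ((N:ℝ)) ≠ 0 := Nat.cast_ne_zero.mpr hN.ne'
  have hNC : ((N:ℂ)) ≠ 0 := Nat.cast_ne_zero.mpr hN.ne'
  have hterm : ∀ ℓ : ℕ, Complex.exp ((i:ℂ) * ((2*π*ℓ/N : ℝ):ℂ) * Complex.I)
      = Complex.exp ((i:ℂ) * ((2*π/N : ℝ):ℂ) * Complex.I) ^ ℓ := by
    intro ℓ
    rw [← Complex.exp_nat_mul]
    congr 1
    push_cast
    field_simp
  simp only [hterm]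
  by_cases hdvd : (N:ℤ) ∣ i
  · obtain ⟨c, hc⟩ := hdvd
    have hw : Complex.exp ((i:ℂ) * ((2*π/N : ℝ):ℂ) * Complex.I) = 1 := by
      have harg : (i:ℂ) * ((2*π/N : ℝ):ℂ) * Complex.I = (c:ℂ) * (2*(π:ℂ) * Complex.I) := by
        rw [hc]
        push_cast
        field_simp
      rw [harg]
      simpa [mul_assoc] using Complex.exp_int_mul_two_pi_mul_I c
    rw [if_pos ⟨c, hc⟩]
    simp only [hw, one_pow, Finset.sum_const, Finset.card_range, nsmul_eq_mul, mul_one]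
  · rw [if_neg hdvd]
    have hw : Complex.exp ((i:ℂ) * ((2*π/N : ℝ):ℂ) * Complex.I) ≠ 1 := by
      intro h
      rw [Complex.exp_eq_one_iff] at h
      obtain ⟨k, hk⟩ := h
      apply hdvd
      refine ⟨k, ?_⟩
      have h2π : (2*(π:ℂ)*Complex.I) ≠ 0 := by
        simp [pi_ne, Complex.I_ne_zero, Real.pi_ne_zero]
      have h2 : (i:ℂ) * (2*(π:ℂ)*Complex.I) = (N:ℂ) * (k:ℂ) * (2*(π:ℂ)*Complex.I) := by
        have h3 := congrArg (fun t => t * (N:ℂ)) hk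
        push_cast at h3 ⊢
        field_simp at h3
        ring_nf at h3 ⊢
        linear_combination (2*(π:ℂ)*Complex.I) * h3
      have h4 : (i:ℂ) = (N:ℂ) * (k:ℂ) := mul_right_cancel₀ h2π h2
      exact_mod_cast h4
    rw [geom_sum_eq hw]
    have hwN : Complex.exp ((i:ℂ) * ((2*π/N:ℝ):ℂ) * Complex.I) ^ N = 1 := by
      rw [← Complex.exp_nat_mul]
      have harg : (N:ℂ) * ((i:ℂ) * ((2*π/N:ℝ):ℂ) * Complex.I) = (i:ℂ) * (2*(π:ℂ)*Complex.I) := by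
        push_cast
        field_simp
      rw [harg]
      simpa [mul_assoc] using Complex.exp_int_mul_two_pi_mul_I i
    rw [hwN, sub_self, zero_div]

lemma hasSum_sample (z : ℝ) (N : ℕ) (hN : 0 < N) (θ : ℝ) :
    HasSum (fun t : ℤ => (N:ℂ) * besselJ ((N:ℤ)*t) z
        * Complex.exp ((((N:ℤ)*t : ℤ) : ℂ) * (θ:ℂ) * Complex.I))
      (∑ ℓ ∈ Finset.range N, G z (θ + 2*π*ℓ/N)) := by
  have H : HasSum (fun i : ℤ => ∑ ℓ ∈ Finset.range N,
      besselJ i z * Complex.exp ((i:ℂ) * ((θ + 2*π*ℓ/N : ℝ):ℂ) * Complex.I))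
      (∑ ℓ ∈ Finset.range N, G z (θ + 2*π*ℓ/N)) :=
    hasSum_sum fun ℓ _ => hasSum_G z (θ + 2*π*ℓ/N)
  have H2 : HasSum (fun i : ℤ => besselJ i z * Complex.exp ((i:ℂ) * (θ:ℂ) * Complex.I)
      * (if (N:ℤ) ∣ i then (N:ℂ) else 0))
      (∑ ℓ ∈ Finset.range N, G z (θ + 2*π*ℓ/N)) := by
    refine H.congr_fun fun i => ?_
    rw [← geom N hN i, Finset.mul_sum]
    refine Finset.sum_congr rfl fun ℓ _ => ?_
    rw [mul_assoc, ← Complex.exp_add]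
    congr 2
    push_cast
    ring
  have hN' : ((N:ℤ)) ≠ 0 := by exact_mod_cast hN.ne'
  have hinj : Function.Injective (fun t : ℤ => (N:ℤ) * t) :=
    fun a b h => mul_left_cancel₀ hN' h
  have hvan : ∀ i ∉ Set.range (fun t : ℤ => (N:ℤ)*t),
      besselJ i z * Complex.exp ((i:ℂ) * (θ:ℂ) * Complex.I)
        * (if (N:ℤ) ∣ i then (N:ℂ) else 0) = 0 := by
    intro i hi
    rw [if_neg, mul_zero]
    rintro ⟨c, hc⟩
    exact hi ⟨c, hc.symm⟩
  have H3 := (hinj.hasSum_iff hvan).mpr H2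
  refine H3.congr_fun fun t => ?_
  simp only [Function.comp]
  rw [if_pos ⟨t, rfl⟩]
  push_cast
  ring

lemma hasSum_combined (z : ℝ) (N : ℕ) (hNodd : Odd N) (α : ℝ) :
    HasSum (fun t : ℤ => 2*(N:ℂ) * ((-1:ℂ)^t) * besselJ (2*(N:ℤ)*t) z
        * Complex.exp (((2*(N:ℤ)*t : ℤ) : ℂ) * (α:ℂ) * Complex.I))
      (∑ ℓ ∈ Finset.range N,
        (G z ((α + 2*π*ℓ/N) + π/2) + G z ((α + 2*π*ℓ/N) - π/2))) := by
  have hNpos : 0 < N := hNodd.pos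
  have hp := hasSum_sample z N hNpos (α + π/2)
  have hq := hasSum_sample z N hNpos (α - π/2)
  have H := hp.add hq
  rw [← Finset.sum_add_distrib] at H
  have hsum_eq : (∑ ℓ ∈ Finset.range N, (G z (α + π/2 + 2*π*ℓ/N) + G z (α - π/2 + 2*π*ℓ/N)))
      = ∑ ℓ ∈ Finset.range N, (G z ((α + 2*π*ℓ/N) + π/2) + G z ((α + 2*π*ℓ/N) - π/2)) := by
    refine Finset.sum_congr rfl fun ℓ _ => ?_
    rw [show α + π/2 + 2*π*ℓ/N = (α + 2*π*ℓ/N) + π/2 by ring,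
        show α - π/2 + 2*π*ℓ/N = (α + 2*π*ℓ/N) - π/2 by ring]
  rw [hsum_eq] at H
  -- middle form with a cosine factor
  have H2 : HasSum (fun m : ℤ => (N:ℂ) * besselJ ((N:ℤ)*m) z
      * Complex.exp ((((N:ℤ)*m : ℤ) : ℂ) * (α:ℂ) * Complex.I)
      * (2 * ((Real.cos ((N:ℝ) * (m:ℝ) * (π/2)) : ℝ) : ℂ)))
      (∑ ℓ ∈ Finset.range N,
        (G z ((α + 2*π*ℓ/N) + π/2) + G z ((α + 2*π*ℓ/N) - π/2))) := by
    refine H.congr_fun fun m => ?_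
    have e1 : Complex.exp ((((N:ℤ)*m : ℤ) : ℂ) * ((α + π/2 : ℝ):ℂ) * Complex.I)
        = Complex.exp ((((N:ℤ)*m : ℤ) : ℂ) * (α:ℂ) * Complex.I)
          * Complex.exp (((N:ℝ) * (m:ℝ) * (π/2) : ℝ) * Complex.I) := by
      rw [← Complex.exp_add]; congr 1; push_cast; ring
    have e2 : Complex.exp ((((N:ℤ)*m : ℤ) : ℂ) * ((α - π/2 : ℝ):ℂ) * Complex.I)
        = Complex.exp ((((N:ℤ)*m : ℤ) : ℂ) * (α:ℂ) * Complex.I)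
          * Complex.exp (-((N:ℝ) * (m:ℝ) * (π/2) : ℝ) * Complex.I) := by
      rw [← Complex.exp_add]; congr 1; push_cast; ring
    rw [e1, e2, Complex.ofReal_cos, ← exp_add_exp_neg]
    ring
  -- kill odd terms and reindex by t ↦ 2t
  have hNoddZ : Odd ((N:ℤ)) := by exact_mod_cast hNodd
  have hvan : ∀ m ∉ Set.range (fun t : ℤ => 2*t),
      (N:ℂ) * besselJ ((N:ℤ)*m) z * Complex.exp ((((N:ℤ)*m : ℤ) : ℂ) * (α:ℂ) * Complex.I)
        * (2 * ((Real.cos ((N:ℝ) * (m:ℝ) * (π/2)) : ℝ) : ℂ)) = 0 := by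
    intro m hm
    have hmodd : Odd m := by
      rw [← Int.not_even_iff_odd]
      intro he
      obtain ⟨r, hr⟩ := he
      exact hm ⟨r, show 2*r = m by omega⟩
    obtain ⟨k, hk⟩ := hNoddZ.mul hmodd
    have hcos : Real.cos ((N:ℝ) * (m:ℝ) * (π/2)) = 0 := by
      apply Real.cos_eq_zero_iff.mpr
      refine ⟨k, ?_⟩
      have : ((N:ℝ) * (m:ℝ)) = 2*(k:ℝ)+1 := by exact_mod_cast congrArg (Int.cast : ℤ → ℝ) hk
      rw [show (N:ℝ) * (m:ℝ) * (π/2) = ((N:ℝ) * (m:ℝ)) * π / 2 by ring, this]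
    rw [hcos]
    simp
  have hinj : Function.Injective (fun t : ℤ => 2*t) := fun a b h => by
    have h' : 2*a = 2*b := h
    omega
  have H3 := (hinj.hasSum_iff hvan).mpr H2
  refine H3.congr_fun fun t => ?_
  simp only [Function.comp]
  have hcos : Real.cos ((N:ℝ) * (((2*t : ℤ)):ℝ) * (π/2)) = (-1:ℝ)^((N:ℤ)*t) := by
    have harg : (N:ℝ) * (((2*t : ℤ)):ℝ) * (π/2) = ((((N:ℤ)*t : ℤ)):ℝ)*π := by push_cast; ring
    rw [harg]
    simpa using Real.cos_int_mul_pi_sub 0 ((N:ℤ)*t)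
  rw [hcos, show ((N:ℤ)*(2*t) : ℤ) = 2*(N:ℤ)*t by ring]
  have hneg : (((-1:ℝ)^((N:ℤ)*t) : ℝ) : ℂ) = (-1:ℂ)^t := by
    push_cast
    rw [zpow_mul]
    rw [Odd.neg_one_zpow hNoddZ]
  rw [hneg]
  ring

end Statement9Aux


theorem statement9 (n : ℕ) (z α : ℝ) :
    besselJ 0 z + 2 * ∑' k : ℕ,
        (-1 : ℂ) ^ (k + 1) * besselJ ((4 * n + 2) * (k + 1)) z *
          (Real.cos ((4 * n + 2) * (k + 1) * α) : ℂ) =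
      (1 / ((2 * n + 1 : ℕ) : ℂ)) * ∑ ℓ ∈ Finset.range (2 * n + 1),
        (Real.cos (z * Real.cos (α + 2 * π * ℓ / (2 * n + 1))) : ℂ) := by
  classical
  have hNodd : Odd (2*n+1) := ⟨n, by omega⟩
  have H := Statement9Aux.hasSum_combined z (2*n+1) hNodd α
  set b : ℕ → ℂ := fun k => (-1 : ℂ) ^ (k + 1) * besselJ ((4 * n + 2) * (k + 1)) z *
          (Real.cos ((4 * n + 2) * (k + 1) * α) : ℂ) with hbdef
  set S : ℂ := ∑ ℓ ∈ Finset.range (2 * n + 1),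
        (Real.cos (z * Real.cos (α + 2 * π * ℓ / (2 * n + 1))) : ℂ) with hSdef
  set f : ℤ → ℂ := fun t => 2*((2*n+1 : ℕ):ℂ) * ((-1:ℂ)^t)
      * besselJ (2*((2*n+1 : ℕ):ℤ)*t) z
      * Complex.exp (((2*((2*n+1 : ℕ):ℤ)*t : ℤ) : ℂ) * (α:ℂ) * Complex.I) with hfdef
  have hval : (∑ ℓ ∈ Finset.range (2*n+1),
      (Statement9Aux.G z ((α + 2*π*ℓ/(2*n+1 : ℕ)) + π/2)
        + Statement9Aux.G z ((α + 2*π*ℓ/(2*n+1 : ℕ)) - π/2))) = 2 * S := by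
    rw [hSdef, Finset.mul_sum]
    refine Finset.sum_congr rfl fun ℓ _ => ?_
    have hNR : ((2*n+1 : ℕ):ℝ) = 2*(n:ℝ)+1 := by push_cast; ring
    rw [hNR]
    unfold Statement9Aux.G
    rw [Real.sin_add_pi_div_two, Real.sin_sub_pi_div_two]
    have h1 : ((z * -Real.cos (α + 2*π*ℓ/(2*(n:ℝ)+1)) : ℝ) : ℂ)
        = -((z * Real.cos (α + 2*π*ℓ/(2*(n:ℝ)+1)) : ℝ) : ℂ) := by push_cast; ring
    rw [h1, Statement9Aux.exp_add_exp_neg, Complex.ofReal_cos]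
    try norm_cast
  rw [hval] at H
  have hsummable := H.summable
  have hp : Summable (fun k : ℕ => f k) := hsummable.comp_injective Nat.cast_injective
  have hinjneg : Function.Injective (fun k : ℕ => -((k:ℤ)+1)) := fun a b h => by
    have h' : -((a:ℤ)+1) = -((b:ℤ)+1) := h
    omega
  have hq : Summable (fun k : ℕ => f (-((k:ℤ)+1))) := hsummable.comp_injective hinjneg
  have hkey : 2*S = (∑' k : ℕ, f k) + ∑' k : ℕ, f (-((k:ℤ)+1)) :=
    H.unique (HasSum.of_nat_of_neg_add_one hp.hasSum hq.hasSum)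
  have hp1 : Summable (fun k : ℕ => f ((k:ℤ)+1)) := by
    have h2 := (summable_nat_add_iff 1).mpr hp
    exact h2.congr fun k => by congr 1 <;> (push_cast; try ring)
  have htsum0 : (∑' k : ℕ, f k) = f 0 + ∑' k : ℕ, f ((k:ℤ)+1) := by
    have h4 : (fun k : ℕ => f ((k:ℤ)+1)) = fun k : ℕ => f (((k+1 : ℕ) : ℤ)) := by
      funext k
      congr 1 <;> (push_cast; try ring)
    rw [h4, hp.tsum_eq_zero_add]
    congr 1 <;> (push_cast; try ring)
  have hpair : ∀ k : ℕ, f ((k:ℤ)+1) + f (-((k:ℤ)+1)) = 4*((2*n+1 : ℕ):ℂ) * b k := by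
    intro k
    have hJneg : besselJ (2*((2*n+1 : ℕ):ℤ)*(-((k:ℤ)+1))) (z:ℂ)
        = besselJ (2*((2*n+1 : ℕ):ℤ)*((k:ℤ)+1)) (z:ℂ) := by
      rw [show 2*((2*n+1 : ℕ):ℤ)*(-((k:ℤ)+1)) = -(2*(((2*n+1 : ℕ):ℤ)*((k:ℤ)+1))) by ring,
          Statement9Aux.besselJ_neg_even]
      congr 1
      ring
    have hinv : ((-1:ℂ))⁻¹ = -1 := by norm_num
    have hz1 : (-1:ℂ)^(-((k:ℤ)+1)) = (-1:ℂ)^((k:ℤ)+1) := by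
      rw [zpow_neg, ← inv_zpow, hinv]
    have hexp : Complex.exp (((2*((2*n+1 : ℕ):ℤ)*((k:ℤ)+1) : ℤ) : ℂ) * (α:ℂ) * Complex.I)
        + Complex.exp (((2*((2*n+1 : ℕ):ℤ)*(-((k:ℤ)+1)) : ℤ) : ℂ) * (α:ℂ) * Complex.I)
        = 2 * ((Real.cos ((4 * n + 2) * (k + 1) * α) : ℝ) : ℂ) := by
      have h2 : ((2*((2*n+1 : ℕ):ℤ)*(-((k:ℤ)+1)) : ℤ) : ℂ) * (α:ℂ)
          = -(((2*((2*n+1 : ℕ):ℤ)*((k:ℤ)+1) : ℤ) : ℂ) * (α:ℂ)) := by push_cast; ring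
      rw [h2, Statement9Aux.exp_add_exp_neg]
      congr 1
      rw [show ((2*((2*n+1 : ℕ):ℤ)*((k:ℤ)+1) : ℤ) : ℂ) * (α:ℂ)
          = (((4*(n:ℝ)+2) * ((k:ℝ)+1) * α : ℝ) : ℂ) by push_cast; ring, ← Complex.ofReal_cos]
    have hz2 : (-1:ℂ)^((k:ℤ)+1) = (-1:ℂ)^((k+1 : ℕ)) := by
      rw [show ((k:ℤ)+1) = ((k+1 : ℕ) : ℤ) by push_cast; ring, zpow_natCast]
    have hstep : f ((k:ℤ)+1) + f (-((k:ℤ)+1))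
        = 2*((2*n+1 : ℕ):ℂ) * ((-1:ℂ)^((k:ℤ)+1))
          * besselJ (2*((2*n+1 : ℕ):ℤ)*((k:ℤ)+1)) (z:ℂ)
          * (Complex.exp (((2*((2*n+1 : ℕ):ℤ)*((k:ℤ)+1) : ℤ) : ℂ) * (α:ℂ) * Complex.I)
            + Complex.exp (((2*((2*n+1 : ℕ):ℤ)*(-((k:ℤ)+1)) : ℤ) : ℂ) * (α:ℂ) * Complex.I)) := by
      rw [hfdef]
      simp only
      rw [hz1, hJneg]
      ring
    rw [hstep, hexp, hbdef]
    simp only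
    rw [hz2, show ((4 * (n:ℤ) + 2) * ((k:ℤ) + 1)) = 2*((2*n+1 : ℕ):ℤ)*((k:ℤ)+1) by push_cast; ring]
    push_cast
    ring
  have hcomb : (∑' k : ℕ, f ((k:ℤ)+1)) + (∑' k : ℕ, f (-((k:ℤ)+1)))
      = 4*((2*n+1 : ℕ):ℂ) * ∑' k : ℕ, b k := by
    rw [← Summable.tsum_add hp1 hq, ← tsum_mul_left]
    exact tsum_congr hpair
  have hf0 : f 0 = 2*((2*n+1 : ℕ):ℂ) * besselJ 0 z := by
    rw [hfdef]
    simp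
  have hNC : ((2*n+1 : ℕ):ℂ) ≠ 0 := Nat.cast_ne_zero.mpr (by omega)
  have hmain : ((2*n+1 : ℕ):ℂ) * (besselJ 0 z + 2 * ∑' k : ℕ, b k) = S := by
    have h3 : 2*S = f 0 + ((∑' k : ℕ, f ((k:ℤ)+1)) + ∑' k : ℕ, f (-((k:ℤ)+1))) := by
      rw [hkey, htsum0]; ring
    rw [hcomb, hf0] at h3
    linear_combination -h3 / 2
  calc besselJ 0 (z:ℂ) + 2 * ∑' k : ℕ, b k
      = (1/((2*n+1 : ℕ):ℂ)) * (((2*n+1 : ℕ):ℂ) * (besselJ 0 z + 2 * ∑' k : ℕ, b k)) := by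
        rw [one_div, inv_mul_cancel_left₀ hNC]
    _ = (1/((2*n+1 : ℕ):ℂ)) * S := by rw [hmain]
end

section
/- For every nonnegative integer n, real z and real α: 2·Σ_{k=0}^∞ (-1)^{n+k} J_{(2n+1)(2k+1)}(z)·cos((2n+1)(2k+1)α) = (1/(2n+1))·Σ_{ℓ=0}^{2n} sin(z·cos(α + 2πℓ/(2n+1))). -/
open scoped Real
open Complex intervalIntegral

namespace JA

noncomputable def bint (m : ℤ) (z : ℂ) : ℂ :=
  ∫ θ in (0:ℝ)..(2 * π), Complex.exp (z * Complex.sin (θ:ℂ) * I - (m:ℂ) * θ * I)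

lemma besselJ_eq (m : ℤ) (z : ℂ) : besselJ m z = (1 / (2 * (π:ℂ))) * bint m z := rfl

lemma periodic_integrand (m : ℤ) (z : ℂ) :
    Function.Periodic (fun θ : ℝ => Complex.exp (z * Complex.sin (θ:ℂ) * I - (m:ℂ) * θ * I))
      (2 * π) := by
  intro θ
  have h1 : ((θ + 2 * π : ℝ) : ℂ) = (θ:ℂ) + 2 * π := by push_cast; ring
  simp only [h1, Complex.sin_add_two_pi]
  rw [show z * Complex.sin (θ:ℂ) * I - (m:ℂ) * ((θ:ℂ) + 2*π) * I
      = (z * Complex.sin (θ:ℂ) * I - (m:ℂ) * θ * I) + (-m : ℤ) * (2 * π * I) by push_cast; ring,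
    Complex.exp_add, Complex.exp_int_mul_two_pi_mul_I, mul_one]

lemma bint_shift (m : ℤ) (z : ℂ) (s : ℝ) :
    (∫ θ in s..(s + 2 * π), Complex.exp (z * Complex.sin (θ:ℂ) * I - (m:ℂ) * θ * I)) = bint m z := by
  simpa [bint] using (periodic_integrand m z).intervalIntegral_add_eq s 0

lemma bint_neg_z (m : ℤ) (z : ℂ) : bint m (-z) = (-1 : ℂ) ^ m * bint m z := by
  have key : ∀ θ : ℝ, Complex.exp (-z * Complex.sin (θ:ℂ) * I - (m:ℂ) * θ * I)
      = (-1 : ℂ) ^ m * Complex.exp (z * Complex.sin ((θ + π : ℝ):ℂ) * I - (m:ℂ) * (θ + π : ℝ) * I) := by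
    intro θ
    have h1 : ((θ + π : ℝ) : ℂ) = (θ:ℂ) + π := by push_cast; ring
    have h2 : ((-1 : ℂ)) ^ m = Complex.exp ((m:ℂ) * (π * I)) := by
      rw [Complex.exp_int_mul, Complex.exp_mul_I, Complex.cos_pi, Complex.sin_pi]
      simp
    rw [h1, Complex.sin_add_pi, h2, ← Complex.exp_add]
    congr 1
    ring
  calc bint m (-z) = ∫ θ in (0:ℝ)..(2*π),
        (-1:ℂ)^m * Complex.exp (z * Complex.sin ((θ + π : ℝ):ℂ) * I - (m:ℂ) * (θ + π : ℝ) * I) := by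
        unfold bint; exact intervalIntegral.integral_congr (fun θ _ => key θ)
    _ = (-1:ℂ)^m * ∫ θ in (0:ℝ)..(2*π),
        Complex.exp (z * Complex.sin ((θ + π : ℝ):ℂ) * I - (m:ℂ) * (θ + π : ℝ) * I) := by
        rw [intervalIntegral.integral_const_mul]
    _ = (-1:ℂ)^m * bint m z := by
        rw [intervalIntegral.integral_comp_add_right
          (fun u : ℝ => Complex.exp (z * Complex.sin (u:ℂ) * I - (m:ℂ) * u * I)) π]
        rw [zero_add, show 2 * π + π = π + 2 * π by ring, bint_shift]

lemma bint_neg_m (m : ℤ) (z : ℂ) : bint (-m) z = bint m (-z) := by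
  have key : ∀ θ : ℝ, Complex.exp (-z * Complex.sin (θ:ℂ) * I - (m:ℂ) * θ * I)
      = Complex.exp (z * Complex.sin (((2*π - θ : ℝ)):ℂ) * I - ((-m : ℤ):ℂ) * ((2*π - θ:ℝ):ℂ) * I) := by
    intro θ
    have h1 : ((2*π - θ : ℝ) : ℂ) = 2*π - (θ:ℂ) := by push_cast; ring
    have h2 : Complex.sin (2*(π:ℂ) - θ) = -Complex.sin (θ:ℂ) := by
      rw [show 2*(π:ℂ) - θ = -θ + 2*π by ring, Complex.sin_add_two_pi, Complex.sin_neg]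
    have h3 : Complex.exp ((m:ℂ) * (2*π*I)) = 1 := Complex.exp_int_mul_two_pi_mul_I m
    rw [h1, h2]
    rw [show z * -Complex.sin (θ:ℂ) * I - ((-m : ℤ):ℂ) * (2*(π:ℂ) - θ) * I
      = (-z * Complex.sin (θ:ℂ) * I - (m:ℂ) * θ * I) + ((m:ℂ) * (2*π*I)) by push_cast; ring]
    rw [Complex.exp_add, h3, mul_one]
  have step1 : bint m (-z)
      = ∫ θ in (0:ℝ)..(2*π), Complex.exp (z * Complex.sin (((2*π - θ:ℝ)):ℂ) * I - ((-m : ℤ):ℂ) * ((2*π - θ:ℝ):ℂ) * I) :=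
    intervalIntegral.integral_congr (fun θ _ => key θ)
  have step2 := intervalIntegral.integral_comp_sub_left (a := (0:ℝ)) (b := 2*π)
    (fun u : ℝ => Complex.exp (z * Complex.sin (u:ℂ) * I - ((-m:ℤ):ℂ) * u * I)) (2*π)
  rw [step1, step2]
  norm_num [bint]

lemma cos_integral (m : ℤ) (z : ℂ) :
    (∫ θ in (0:ℝ)..(2 * π), Complex.exp (z * Complex.cos (θ:ℂ) * I - (m:ℂ) * θ * I))
      = Complex.exp ((m:ℂ) * (π/2) * I) * bint m z := by
  have key : ∀ θ : ℝ, Complex.exp (z * Complex.cos (θ:ℂ) * I - (m:ℂ) * θ * I)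
      = Complex.exp ((m:ℂ) * (π/2) * I) *
        Complex.exp (z * Complex.sin (((θ + π/2 : ℝ)):ℂ) * I - (m:ℂ) * ((θ + π/2 : ℝ):ℂ) * I) := by
    intro θ
    have h1 : ((θ + π/2 : ℝ) : ℂ) = (θ:ℂ) + π/2 := by push_cast; ring
    have h2 : Complex.sin ((θ:ℂ) + π/2) = Complex.cos (θ:ℂ) := by
      rw [Complex.sin_add, Complex.cos_pi_div_two, Complex.sin_pi_div_two]; ring
    rw [h1, h2, ← Complex.exp_add]
    congr 1
    ring
  rw [intervalIntegral.integral_congr (fun θ _ => key θ),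
    intervalIntegral.integral_const_mul,
    intervalIntegral.integral_comp_add_right
      (fun u : ℝ => Complex.exp (z * Complex.sin (u:ℂ) * I - (m:ℂ) * u * I)) (π/2)]
  rw [zero_add, show 2 * π + π/2 = π/2 + 2*π by ring, bint_shift]

lemma exp_m_pi_div_two (m : ℤ) : Complex.exp ((m:ℂ) * (π/2) * I) = I ^ m := by
  rw [show (m:ℂ) * (π/2) * I = (m:ℂ) * ((π/2 : ℝ) * I) by push_cast; ring,
    Complex.exp_int_mul]
  congr 1
  rw [Complex.exp_mul_I]
  push_cast
  rw [Complex.cos_pi_div_two, Complex.sin_pi_div_two]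
  ring

lemma sin_integral (m : ℤ) (z : ℝ) :
    (1 / (2 * (π:ℂ))) * (∫ θ in (0:ℝ)..(2 * π), Complex.exp (-(m:ℂ) * θ * I) * Complex.sin ((z:ℂ) * Complex.cos (θ:ℂ)))
      = (I/2) * I ^ m * ((-1:ℂ) ^ m - 1) * besselJ m z := by
  have hcont1 : IntervalIntegrable (fun θ : ℝ => Complex.exp (-(z:ℂ) * Complex.cos (θ:ℂ) * I - (m:ℂ) * θ * I)) MeasureTheory.volume 0 (2*π) := by
    apply Continuous.intervalIntegrable; fun_prop
  have hcont2 : IntervalIntegrable (fun θ : ℝ => Complex.exp ((z:ℂ) * Complex.cos (θ:ℂ) * I - (m:ℂ) * θ * I)) MeasureTheory.volume 0 (2*π) := by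
    apply Continuous.intervalIntegrable; fun_prop
  have key : ∀ θ : ℝ, Complex.exp (-(m:ℂ) * θ * I) * Complex.sin ((z:ℂ) * Complex.cos (θ:ℂ))
      = (I/2) * (Complex.exp (-(z:ℂ) * Complex.cos (θ:ℂ) * I - (m:ℂ) * θ * I)
          - Complex.exp ((z:ℂ) * Complex.cos (θ:ℂ) * I - (m:ℂ) * θ * I)) := by
    intro θ
    rw [Complex.sin]
    rw [show -(z:ℂ) * Complex.cos (θ:ℂ) * I - (m:ℂ) * θ * I
        = (-((z:ℂ) * Complex.cos (θ:ℂ)) * I) + -((m:ℂ) * θ * I) by ring,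
      show (z:ℂ) * Complex.cos (θ:ℂ) * I - (m:ℂ) * θ * I
        = ((z:ℂ) * Complex.cos (θ:ℂ) * I) + -((m:ℂ) * θ * I) by ring,
      Complex.exp_add, Complex.exp_add]
    ring
  rw [intervalIntegral.integral_congr (fun θ _ => key θ),
    intervalIntegral.integral_const_mul,
    intervalIntegral.integral_sub hcont1 hcont2]
  have e1 : (∫ θ in (0:ℝ)..(2 * π), Complex.exp (-(z:ℂ) * Complex.cos (θ:ℂ) * I - (m:ℂ) * θ * I))
      = I ^ m * ((-1:ℂ) ^ m * bint m z) := by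
    have := cos_integral m (-(z:ℂ))
    rw [exp_m_pi_div_two, bint_neg_z] at this
    simpa using this
  have e2 : (∫ θ in (0:ℝ)..(2 * π), Complex.exp ((z:ℂ) * Complex.cos (θ:ℂ) * I - (m:ℂ) * θ * I))
      = I ^ m * bint m z := by
    have := cos_integral m (z:ℂ)
    rw [exp_m_pi_div_two] at this
    exact this
  rw [e1, e2, besselJ_eq]
  ring

instance fact_two_pi : Fact (0 < 2 * π) := ⟨by positivity⟩

noncomputable def F (z : ℝ) : ℝ → ℂ := fun θ => (Real.sin (z * Real.cos θ) : ℂ)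

lemma F_periodic (z : ℝ) : Function.Periodic (F z) (2 * π) := fun θ => by
  simp [F, Real.cos_add_two_pi]

noncomputable def fz (z : ℝ) : AddCircle (2 * π) → ℂ := (F_periodic z).lift

lemma fz_coe (z : ℝ) (x : ℝ) : fz z (x : AddCircle (2 * π)) = F z x := rfl

lemma fz_continuous (z : ℝ) : Continuous (fz z) := by
  have h : Continuous (F z) := by unfold F; fun_prop
  exact continuous_coinduced_dom.mpr h

lemma fourier_coe (m : ℤ) (x : ℝ) :
    (fourier m (x : AddCircle (2 * π)) : ℂ) = Complex.exp ((m:ℂ) * x * I) := by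
  rw [fourier_coe_apply]
  congr 1
  have : (π:ℂ) ≠ 0 := Complex.ofReal_ne_zero.mpr Real.pi_ne_zero
  push_cast
  field_simp

lemma coeff_formula (z : ℝ) (m : ℤ) :
    fourierCoeff (fz z) m = (I/2) * I ^ m * ((-1:ℂ) ^ m - 1) * besselJ m z := by
  rw [fourierCoeff_eq_intervalIntegral _ m 0]
  have : ∀ x : ℝ, (fourier (-m) (x : AddCircle (2*π)) : ℂ) • fz z x
      = Complex.exp (-(m:ℂ) * x * I) * Complex.sin ((z:ℂ) * Complex.cos (x:ℂ)) := by
    intro x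
    rw [smul_eq_mul, fourier_coe, fz_coe]
    have : F z x = Complex.sin ((z:ℂ) * Complex.cos (x:ℂ)) := by
      unfold F; push_cast [Complex.ofReal_sin]; norm_num
    rw [this]
    push_cast
    ring_nf
  rw [intervalIntegral.integral_congr (fun x _ => this x)]
  rw [← sin_integral m z]
  rw [zero_add]
  rw [real_smul]
  push_cast
  ring

lemma two_pi_pos : (0:ℝ) < 2 * π := by positivity

noncomputable def F1 (z : ℝ) : ℝ → ℂ :=
  fun x => ((-(z * Real.sin x * Real.cos (z * Real.cos x)) : ℝ) : ℂ)

noncomputable def F2 (z : ℝ) : ℝ → ℂ :=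
  fun x => ((-(z * Real.cos x * Real.cos (z * Real.cos x))
    - z^2 * Real.sin x^2 * Real.sin (z * Real.cos x) : ℝ) : ℂ)

lemma hasDerivAt_F (z : ℝ) (x : ℝ) : HasDerivAt (F z) (F1 z x) x := by
  have hr : HasDerivAt (fun t : ℝ => Real.sin (z * Real.cos t))
      (Real.cos (z * Real.cos x) * (z * -Real.sin x)) x :=
    (Real.hasDerivAt_sin _).comp x ((Real.hasDerivAt_cos x).const_mul z)
  have := hr.ofReal_comp
  convert this using 1
  · rfl
  unfold F1; push_cast; ring

lemma hasDerivAt_F1 (z : ℝ) (x : ℝ) : HasDerivAt (F1 z) (F2 z x) x := by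
  have h1 : HasDerivAt (fun t : ℝ => z * Real.sin t) (z * Real.cos x) x :=
    (Real.hasDerivAt_sin x).const_mul z
  have h2 : HasDerivAt (fun t : ℝ => Real.cos (z * Real.cos t))
      (-Real.sin (z * Real.cos x) * (z * -Real.sin x)) x :=
    (Real.hasDerivAt_cos _).comp x ((Real.hasDerivAt_cos x).const_mul z)
  have hr := (h1.mul h2).neg
  have := hr.ofReal_comp
  convert this using 1
  · rfl
  unfold F2; push_cast; ring

lemma F2_bound (z : ℝ) (x : ℝ) : ‖F2 z x‖ ≤ |z| + z^2 := by
  have b1 : |Real.cos x| ≤ 1 := Real.abs_cos_le_one x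
  have b2 : |Real.sin x| ≤ 1 := Real.abs_sin_le_one x
  have b3 : |Real.cos (z * Real.cos x)| ≤ 1 := Real.abs_cos_le_one _
  have b4 : |Real.sin (z * Real.cos x)| ≤ 1 := Real.abs_sin_le_one _
  have hz : (0:ℝ) ≤ |z| := abs_nonneg z
  rw [F2, Complex.norm_real, Real.norm_eq_abs]
  have tri : |(-(z * Real.cos x * Real.cos (z * Real.cos x))
      - z^2 * Real.sin x^2 * Real.sin (z * Real.cos x))|
      ≤ |z * Real.cos x * Real.cos (z * Real.cos x)|
        + |z^2 * Real.sin x^2 * Real.sin (z * Real.cos x)| := by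
    calc _ ≤ |(-(z * Real.cos x * Real.cos (z * Real.cos x)))|
        + |z^2 * Real.sin x^2 * Real.sin (z * Real.cos x)| := abs_sub _ _
      _ = _ := by rw [abs_neg]
  refine tri.trans (add_le_add ?_ ?_)
  · rw [abs_mul, abs_mul]
    calc |z| * |Real.cos x| * |Real.cos (z * Real.cos x)| ≤ |z| * 1 * 1 := by
          apply mul_le_mul (mul_le_mul le_rfl b1 (abs_nonneg _) hz) b3 (abs_nonneg _)
          positivity
      _ = |z| := by ring
  · rw [abs_mul, abs_mul]
    have e1 : |z^2| = z^2 := abs_of_nonneg (sq_nonneg z)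
    have e2 : |Real.sin x ^ 2| ≤ 1 := by
      rw [_root_.abs_of_nonneg (sq_nonneg (Real.sin x))]
      nlinarith [Real.sin_le_one x, Real.neg_one_le_sin x]
    calc |z^2| * |Real.sin x^2| * |Real.sin (z * Real.cos x)| ≤ z^2 * 1 * 1 := by
          rw [e1]
          apply mul_le_mul (mul_le_mul le_rfl e2 (abs_nonneg _) (sq_nonneg z)) b4 (abs_nonneg _)
          positivity
      _ = z^2 := by ring

lemma coeff_eq_coeffOn (z : ℝ) (m : ℤ) :
    fourierCoeff (fz z) m = fourierCoeffOn two_pi_pos (F z) m := by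
  rw [fourierCoeff_eq_intervalIntegral _ m 0, fourierCoeffOn_eq_integral]
  have e1 : ∀ x:ℝ, (fourier (-m) (x : AddCircle (2*π)) : ℂ) • fz z x
      = Complex.exp (2*(π:ℂ)*I*(-m)*x/(2*π)) * F z x := by
    intro x; rw [fourier_coe_apply, fz_coe, smul_eq_mul]; norm_num
  have e2 : ∀ x:ℝ, (fourier (-m) (x : AddCircle (2*π - 0)) : ℂ) • F z x
      = Complex.exp (2*(π:ℂ)*I*(-m)*x/(2*π - 0)) * F z x := by
    intro x; rw [fourier_coe_apply, smul_eq_mul]; norm_num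
  rw [intervalIntegral.integral_congr (fun x _ => e1 x),
    intervalIntegral.integral_congr (fun x _ => e2 x)]
  norm_num

lemma coeffOn_F2_bound (z : ℝ) (m : ℤ) :
    ‖fourierCoeffOn two_pi_pos (F2 z) m‖ ≤ |z| + z^2 := by
  rw [fourierCoeffOn_eq_integral]
  rw [norm_smul]
  have hb : ∀ x ∈ Set.uIoc (0:ℝ) (2*π),
      ‖(fourier (-m) (x : AddCircle (2*π - 0)) : ℂ) • F2 z x‖ ≤ |z| + z^2 := by
    intro x _
    rw [norm_smul]
    have h1 : ‖(fourier (-m) (x : AddCircle (2*π - 0)) : ℂ)‖ = 1 := Circle.norm_coe _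
    rw [h1, one_mul]
    exact F2_bound z x
  have := intervalIntegral.norm_integral_le_of_norm_le_const hb
  calc ‖(1/(2*π - 0) : ℝ)‖ * ‖∫ x in (0:ℝ)..(2*π), (fourier (-m) (x : AddCircle (2*π-0)) : ℂ) • F2 z x‖
      ≤ ‖(1/(2*π - 0) : ℝ)‖ * ((|z| + z^2) * |2*π - 0|) := by
        apply mul_le_mul_of_nonneg_left _ (norm_nonneg _)
        simpa using this
    _ = |z| + z^2 := by
        rw [Real.norm_eq_abs]
        have h : (0:ℝ) < 2*π - 0 := by rw [sub_zero]; positivity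
        rw [abs_of_pos (one_div_pos.mpr h), abs_of_pos h]
        field_simp

lemma coeffOn_step (z : ℝ) (m : ℤ) (hm : m ≠ 0) (G G' : ℝ → ℂ)
    (hd : ∀ x, HasDerivAt G (G' x) x) (hcont : Continuous G')
    (hper : G (2*π) = G 0) :
    fourierCoeffOn two_pi_pos G m = 1/(I*m) * fourierCoeffOn two_pi_pos G' m := by
  rw [fourierCoeffOn_of_hasDerivAt two_pi_pos hm (fun x _ => hd x)
    (hcont.intervalIntegrable _ _)]
  rw [hper, sub_self, mul_zero, zero_sub]
  have hπ : (π:ℂ) ≠ 0 := Complex.ofReal_ne_zero.mpr Real.pi_ne_zero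
  have hmC : (m:ℂ) ≠ 0 := Int.cast_ne_zero.mpr hm
  have hI : I ≠ 0 := Complex.I_ne_zero
  field_simp
  push_cast
  ring

lemma F1_continuous (z : ℝ) : Continuous (F1 z) := by unfold F1; fun_prop
lemma F2_continuous (z : ℝ) : Continuous (F2 z) := by unfold F2; fun_prop

lemma coeff_bound (z : ℝ) (m : ℤ) (hm : m ≠ 0) :
    ‖fourierCoeff (fz z) m‖ ≤ (|z| + z^2) * (1 / (m:ℝ)^2) := by
  have hFper : F z (2*π) = F z 0 := by
    unfold F; rw [Real.cos_two_pi, Real.cos_zero]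
  have hF1per : F1 z (2*π) = F1 z 0 := by
    unfold F1; rw [Real.sin_two_pi, Real.sin_zero]; norm_num
  rw [coeff_eq_coeffOn,
    coeffOn_step z m hm (F z) (F1 z) (hasDerivAt_F z) (F1_continuous z) hFper,
    coeffOn_step z m hm (F1 z) (F2 z) (hasDerivAt_F1 z) (F2_continuous z) hF1per]
  rw [← mul_assoc, norm_mul, norm_mul]
  have hn : ‖1/(I * (m:ℂ))‖ = 1/|(m:ℝ)| := by
    rw [norm_div, norm_mul, Complex.norm_I, one_mul, norm_one]
    norm_num [Complex.norm_intCast]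
  rw [hn]
  calc 1/|(m:ℝ)| * (1/|(m:ℝ)|) * ‖fourierCoeffOn two_pi_pos (F2 z) m‖
      ≤ 1/|(m:ℝ)| * (1/|(m:ℝ)|) * (|z| + z^2) := by
        apply mul_le_mul_of_nonneg_left (coeffOn_F2_bound z m)
        positivity
    _ = (|z| + z^2) * (1/(m:ℝ)^2) := by
        rw [show ((m:ℝ))^2 = |(m:ℝ)| * |(m:ℝ)| by rw [← abs_mul, abs_mul_self]; ring]
        ring

lemma summable_coeff (z : ℝ) : Summable (fourierCoeff (fz z)) := by
  have hg : Summable (fun m : ℤ => (|z| + z^2) * (1 / (m:ℝ)^2)) :=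
    (Real.summable_one_div_int_pow.mpr one_lt_two).mul_left _
  apply Summable.of_norm_bounded_eventually hg
  have : {m : ℤ | ¬ ‖fourierCoeff (fz z) m‖ ≤ (|z| + z^2) * (1 / (m:ℝ)^2)} ⊆ {0} := by
    intro m hm
    by_contra h
    exact hm (coeff_bound z m (by simpa using h))
  exact Set.Finite.subset (Set.finite_singleton 0) this

noncomputable def fzc (z : ℝ) : C(AddCircle (2 * π), ℂ) := ⟨fz z, fz_continuous z⟩

lemma hasSum_pointwise (z : ℝ) (x : ℝ) :
    HasSum (fun m : ℤ => fourierCoeff (fz z) m * Complex.exp ((m:ℂ) * x * I)) (F z x) := by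
  have hs : Summable (fourierCoeff ((fzc z : AddCircle (2*π) → ℂ))) := summable_coeff z
  have h := has_pointwise_sum_fourier_series_of_summable hs (x : AddCircle (2*π))
  have he : ∀ m : ℤ, fourierCoeff (fz z) m * Complex.exp ((m:ℂ) * x * I)
      = fourierCoeff (fz z) m • (fourier m (x : AddCircle (2*π)) : ℂ) := fun m => by
    rw [smul_eq_mul, fourier_coe]
  exact (h.congr_fun he : _)

lemma kernel_sum (N : ℕ) (hN : 0 < N) (m : ℤ) (α : ℝ) :
    (∑ ℓ ∈ Finset.range N, Complex.exp ((m:ℂ) * ((α + 2*π*ℓ/N : ℝ):ℂ) * I))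
      = if (N:ℤ) ∣ m then (N:ℂ) * Complex.exp ((m:ℂ) * α * I) else 0 := by
  have hNR : (N:ℝ) ≠ 0 := Nat.cast_ne_zero.mpr hN.ne'
  have hNC : (N:ℂ) ≠ 0 := Nat.cast_ne_zero.mpr hN.ne'
  have hπ : (π:ℂ) ≠ 0 := Complex.ofReal_ne_zero.mpr Real.pi_ne_zero
  set ω : ℂ := Complex.exp ((2*π*(m:ℂ)/N) * I) with hω
  have hterm : ∀ ℓ ∈ Finset.range N, Complex.exp ((m:ℂ) * ((α + 2*π*ℓ/N : ℝ):ℂ) * I)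
      = Complex.exp ((m:ℂ) * α * I) * ω ^ ℓ := by
    intro ℓ _
    rw [hω, ← Complex.exp_nat_mul, ← Complex.exp_add]
    congr 1
    push_cast
    field_simp
  rw [Finset.sum_congr rfl hterm, ← Finset.mul_sum]
  have hωN : ω ^ N = 1 := by
    rw [hω, ← Complex.exp_nat_mul,
      show (N:ℂ) * (2*π*(m:ℂ)/N * I) = (m:ℂ) * (2*π*I) by field_simp]
    exact Complex.exp_int_mul_two_pi_mul_I m
  by_cases hdvd : (N:ℤ) ∣ m
  · obtain ⟨j, hj⟩ := id hdvd
    have hω1 : ω = 1 := by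
      rw [hω, show (2*π*(m:ℂ)/N * I) = (j:ℤ) * (2*π*I) by
        rw [hj]; push_cast; field_simp]
      exact Complex.exp_int_mul_two_pi_mul_I j
    rw [if_pos hdvd, hω1]
    simp [mul_comm]
  · have hω1 : ω ≠ 1 := by
      intro h
      obtain ⟨j, hj⟩ := Complex.exp_eq_one_iff.mp (hω ▸ h)
      apply hdvd
      have h2πI : (2*(π:ℂ)*I) ≠ 0 :=
        mul_ne_zero (mul_ne_zero two_ne_zero hπ) Complex.I_ne_zero
      have hkey : (m:ℂ) * (2*π*I) = (j:ℂ) * N * (2*π*I) := by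
        calc (m:ℂ)*(2*π*I) = (N:ℂ) * (2*π*(m:ℂ)/N * I) := by field_simp
          _ = (N:ℂ) * ((j:ℂ)*(2*π*I)) := by rw [hj]
          _ = (j:ℂ)*N*(2*π*I) := by ring
      have hmj : (m:ℂ) = (j:ℂ) * N := mul_right_cancel₀ h2πI hkey
      have hint : m = j * N := by exact_mod_cast hmj
      exact ⟨j, hint.trans (mul_comm j N)⟩
    rw [geom_sum_eq hω1, hωN, sub_self, zero_div, mul_zero, if_neg hdvd]

lemma besselJ_neg (m : ℤ) (z : ℂ) : besselJ (-m) z = (-1:ℂ)^m * besselJ m z := by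
  rw [besselJ_eq, besselJ_eq, bint_neg_m, bint_neg_z]; ring

lemma coeff_even (z : ℝ) (m : ℤ) (hm : Even m) : fourierCoeff (fz z) m = 0 := by
  rw [coeff_formula, hm.neg_one_zpow]
  ring

lemma M_odd (n k : ℕ) : Odd ((((2*n+1)*(2*k+1) : ℕ)) : ℤ) :=
  ⟨2*(n*k) + n + k, by push_cast; ring⟩

lemma signA (n k : ℕ) :
    (I/2) * I^((((2*n+1)*(2*k+1) : ℕ)) : ℤ) * ((-1:ℂ)^((((2*n+1)*(2*k+1) : ℕ)) : ℤ) - 1)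
      = (-1:ℂ)^(n+k) := by
  rw [(M_odd n k).neg_one_zpow, zpow_natCast]
  have h1 : (I/2) * I^((2*n+1)*(2*k+1)) * ((-1:ℂ) - 1) = -(I^((2*n+1)*(2*k+1)+1)) := by
    rw [pow_succ]; ring
  rw [h1, show (2*n+1)*(2*k+1) + 1 = 2*((n+k) + (2*n*k+1)) by ring, pow_mul, Complex.I_sq,
    pow_add, show (-1:ℂ)^(2*n*k+1) = -1 by
      rw [pow_succ, Even.neg_one_pow ⟨n*k, by ring⟩, one_mul]]
  ring

lemma coeff_M (z : ℝ) (n k : ℕ) :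
    fourierCoeff (fz z) ((((2*n+1)*(2*k+1) : ℕ)) : ℤ)
      = (-1:ℂ)^(n+k) * besselJ ((((2*n+1)*(2*k+1) : ℕ)) : ℤ) z := by
  rw [coeff_formula, signA]

lemma coeff_negM (z : ℝ) (n k : ℕ) :
    fourierCoeff (fz z) (-((((2*n+1)*(2*k+1) : ℕ)) : ℤ))
      = (-1:ℂ)^(n+k) * besselJ ((((2*n+1)*(2*k+1) : ℕ)) : ℤ) z := by
  rw [coeff_formula, besselJ_neg, (M_odd n k).neg_one_zpow,
    zpow_neg (-1:ℂ), (M_odd n k).neg_one_zpow, zpow_neg I, zpow_natCast]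
  rw [show ((2*n+1)*(2*k+1)) = 2*(n+k+2*n*k)+1 by ring, pow_succ, pow_mul, Complex.I_sq]
  simp only [mul_inv, inv_pow, inv_neg_one, Complex.inv_I]
  rw [show n+k+2*n*k = (n+k) + 2*(n*k) by ring, pow_add, pow_mul, neg_one_sq, one_pow, mul_one]
  ring_nf
  rw [Complex.I_sq]
  ring

end JA

open JA in
theorem statement10 (n : ℕ) (z α : ℝ) :
    2 * ∑' k : ℕ,
        (-1 : ℂ) ^ (n + k) * besselJ ((2 * n + 1) * (2 * k + 1)) z *
          (Real.cos ((2 * n + 1) * (2 * k + 1) * α) : ℂ) =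
      (1 / ((2 * n + 1 : ℕ) : ℂ)) * ∑ ℓ ∈ Finset.range (2 * n + 1),
        (Real.sin (z * Real.cos (α + 2 * π * ℓ / (2 * n + 1))) : ℂ) := by
  set N : ℕ := 2 * n + 1 with hN
  have hNpos : 0 < N := by omega
  have hNC : ((N:ℕ):ℂ) ≠ 0 := Nat.cast_ne_zero.mpr hNpos.ne'
  have hcastR : ((N : ℕ) : ℝ) = 2 * (n:ℝ) + 1 := by rw [hN]; push_cast; ring
  set S : ℂ := ∑ ℓ ∈ Finset.range N, F z (α + 2 * π * ℓ / (2 * (n:ℝ) + 1)) with hS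
  have h1 : HasSum (fun m : ℤ => ∑ ℓ ∈ Finset.range N,
      fourierCoeff (fz z) m * Complex.exp ((m:ℂ) * ((α + 2 * π * ℓ / (2 * (n:ℝ) + 1) : ℝ):ℂ) * Complex.I)) S :=
    hasSum_sum (fun ℓ _ => hasSum_pointwise z _)
  set G : ℤ → ℂ := fun m => if ((N:ℕ):ℤ) ∣ m then
      ((N:ℕ):ℂ) * fourierCoeff (fz z) m * Complex.exp ((m:ℂ) * (α:ℂ) * Complex.I) else 0 with hGdef
  have hGe : ∀ m : ℤ, G m = ∑ ℓ ∈ Finset.range N,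
      fourierCoeff (fz z) m * Complex.exp ((m:ℂ) * ((α + 2 * π * ℓ / (2 * (n:ℝ) + 1) : ℝ):ℂ) * Complex.I) := by
    intro m
    rw [← Finset.mul_sum]
    have hk := kernel_sum N hNpos m α
    rw [hcastR] at hk
    rw [hk]
    simp only [hGdef, mul_ite, mul_zero]
    split_ifs with hd
    · ring
    · rfl
  have hG : HasSum G S := h1.congr_fun hGe
  set jm : ℤ → ℤ := fun k => ((N:ℕ):ℤ) * (2*k+1) with hjm
  have hN0 : ((N:ℕ):ℤ) ≠ 0 := by exact_mod_cast hNpos.ne'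
  have hinj : Function.Injective jm := by
    intro a b hab
    simp only [hjm] at hab
    have := mul_left_cancel₀ hN0 hab
    omega
  have hvan : ∀ m, m ∉ Set.range jm → G m = 0 := by
    intro m hm
    simp only [hGdef]
    by_cases hd : ((N:ℕ):ℤ) ∣ m
    · obtain ⟨j, hj⟩ := hd
      rcases Int.even_or_odd j with he | ho
      · obtain ⟨t, ht⟩ := he
        have hmeven : Even m := ⟨((N:ℕ):ℤ)*t, by rw [hj, ht]; ring⟩
        rw [coeff_even z m hmeven]
        simp
      · obtain ⟨t, ht⟩ := ho
        exact absurd ⟨t, by simp only [hjm]; rw [hj, ht]⟩ hm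
    · rw [if_neg hd]
  have hGj : HasSum (G ∘ jm) S := (Function.Injective.hasSum_iff hinj hvan).mpr hG
  have hfold : HasSum (fun k : ℕ => (G ∘ jm) (k:ℤ) + (G ∘ jm) (-((k:ℤ)+1))) S :=
    hGj.nat_add_neg_add_one
  have hterm : ∀ k : ℕ, (2*((N:ℕ):ℂ)) * ((-1 : ℂ) ^ (n + k) * besselJ ((2 * n + 1) * (2 * k + 1)) z *
          (Real.cos ((2 * n + 1) * (2 * k + 1) * α) : ℂ))
      = (G ∘ jm) (k:ℤ) + (G ∘ jm) (-((k:ℤ)+1)) := by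
    intro k
    have e1 : jm (k:ℤ) = (((2*n+1)*(2*k+1) : ℕ) : ℤ) := by simp only [hjm, hN]; push_cast; ring
    have e2 : jm (-((k:ℤ)+1)) = -(((2*n+1)*(2*k+1) : ℕ) : ℤ) := by simp only [hjm, hN]; push_cast; ring
    have hd1 : ((N:ℕ):ℤ) ∣ (((2*n+1)*(2*k+1) : ℕ) : ℤ) := ⟨2*(k:ℤ)+1, by rw [hN]; push_cast; ring⟩
    have hd2 : ((N:ℕ):ℤ) ∣ -(((2*n+1)*(2*k+1) : ℕ) : ℤ) := hd1.neg_right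
    simp only [Function.comp_apply, e1, e2, hGdef]
    rw [if_pos hd1, if_pos hd2, coeff_M, coeff_negM]
    have eJ : ((((2*n+1)*(2*k+1) : ℕ)) : ℤ) = (2*(n:ℤ)+1)*(2*(k:ℤ)+1) := by push_cast; ring
    rw [eJ]
    have ec : ((Real.cos ((2*(n:ℝ)+1)*(2*(k:ℝ)+1)*α)) : ℂ)
        = Complex.cos ((((2*(n:ℤ)+1)*(2*(k:ℤ)+1) : ℤ):ℂ) * (α:ℂ)) := by
      rw [Complex.ofReal_cos]
      congr 1
      push_cast
      ring
    rw [ec, Complex.cos]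
    push_cast
    ring_nf
  have hfold' : HasSum (fun k : ℕ => (2*((N:ℕ):ℂ)) * ((-1 : ℂ) ^ (n + k) * besselJ ((2 * n + 1) * (2 * k + 1)) z *
          (Real.cos ((2 * n + 1) * (2 * k + 1) * α) : ℂ))) S := hfold.congr_fun hterm
  have h2N : (2*((N:ℕ):ℂ)) ≠ 0 := mul_ne_zero two_ne_zero hNC
  have ht : HasSum (fun k : ℕ => (-1 : ℂ) ^ (n + k) * besselJ ((2 * n + 1) * (2 * k + 1)) z *
          (Real.cos ((2 * n + 1) * (2 * k + 1) * α) : ℂ)) ((2*((N:ℕ):ℂ))⁻¹ * S) := by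
    have := hfold'.mul_left ((2*((N:ℕ):ℂ))⁻¹)
    simpa [← mul_assoc, inv_mul_cancel₀ h2N] using this
  rw [ht.tsum_eq]
  have hSS : (∑ ℓ ∈ Finset.range N, ((Real.sin (z * Real.cos (α + 2 * π * ℓ / (2 * (n:ℝ) + 1)))) : ℂ)) = S := by
    rw [hS]; rfl
  rw [hSS]
  field_simp
end
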